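/- arXiv:2006.09946 — 9 statements merged into one kernel-verified Lean document; each statement's English description precedes it below -/
import Mathlib

section
/- Let L ∈ ℝ^{d×d} be symmetric positive semidefinite with Moore–Penrose pseudoinverse D, and let f : ℝ^d → ℝ be continuously differentiable. If for all z₁, z₂ ∈ ℝ^d one has 0 ≤ f(z₂) − f(z₁) − ∇f(z₁)ᵀ(z₂ − z₁) ≤ (1/2)(z₂ − z₁)ᵀL(z₂ − z₁), then for all z₁, z₂ ∈ ℝ^d: (1/2)(∇f(z₁) − ∇f(z₂))ᵀD(∇f(z₁) − ∇f(z₂)) ≤ f(z₂) − f(z₁) + ∇f(z₁)ᵀ(z₁ − z₂), and (I_d − DL)(∇f(z₁) − ∇f(z₂)) = 0. -/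
open Matrix

/-- Gradient of `f : ℝ^ι → ℝ` in coordinates. -/
noncomputable def grad {ι : Type*} [Fintype ι] [DecidableEq ι]
    (f : (ι → ℝ) → ℝ) (z : ι → ℝ) : ι → ℝ :=
  fun i => fderiv ℝ f z (Pi.single i 1)

/-- `D` is the Moore–Penrose pseudoinverse of `Q`. -/
def IsMoorePenrose {d : ℕ} (Q D : Matrix (Fin d) (Fin d) ℝ) : Prop :=
  Q * D * Q = Q ∧ D * Q * D = D ∧ (Q * D)ᵀ = Q * D ∧ (D * Q)ᵀ = D * Q

/-- The Moore–Penrose pseudoinverse of a symmetric matrix is symmetric. -/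
lemma pinv_symm {d : ℕ} {L D : Matrix (Fin d) (Fin d) ℝ} (hL : Lᵀ = L)
    (hD : IsMoorePenrose L D) : Dᵀ = D := by
  obtain ⟨h1, h2, h3, h4⟩ := hD
  have e1 : L * Dᵀ = D * L := by
    calc L * Dᵀ = (D * Lᵀ)ᵀ := by rw [Matrix.transpose_mul, Matrix.transpose_transpose]
    _ = (D * L)ᵀ := by rw [hL]
    _ = D * L := h4
  have e2 : Dᵀ * L = L * D := by
    calc Dᵀ * L = (Lᵀ * D)ᵀ := by rw [Matrix.transpose_mul, Matrix.transpose_transpose]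
    _ = (L * D)ᵀ := by rw [hL]
    _ = L * D := h3
  have e0 : L * Dᵀ * L = L := by
    have t := congrArg Matrix.transpose h1
    rw [Matrix.transpose_mul, Matrix.transpose_mul, hL] at t
    rw [mul_assoc]
    exact t
  have s1 : L * Dᵀ = (L * D) * (L * Dᵀ) := by
    calc L * Dᵀ = (L * D * L) * Dᵀ := by rw [h1]
    _ = (L * D) * (L * Dᵀ) := by simp only [mul_assoc]
  have t1 : (L * Dᵀ)ᵀ = L * Dᵀ := by rw [e1, h4, ← e1]
  have s2 : L * Dᵀ = L * D := by
    calc L * Dᵀ = (L * Dᵀ)ᵀ := t1.symm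
    _ = ((L * D) * (L * Dᵀ))ᵀ := by rw [← s1]
    _ = (L * Dᵀ)ᵀ * (L * D)ᵀ := Matrix.transpose_mul _ _
    _ = (L * Dᵀ) * (L * D) := by rw [t1, h3]
    _ = (L * Dᵀ * L) * D := by simp only [mul_assoc]
    _ = L * D := by rw [e0]
  have s3 : Dᵀ * L = D * L := by rw [e2, ← s2, e1]
  have h2t : Dᵀ * L * Dᵀ = Dᵀ := by
    calc Dᵀ * L * Dᵀ = Dᵀ * Lᵀ * Dᵀ := by rw [hL]
    _ = (D * L * D)ᵀ := by simp only [Matrix.transpose_mul, mul_assoc]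
    _ = Dᵀ := by rw [h2]
  calc Dᵀ = Dᵀ * L * Dᵀ := h2t.symm
  _ = (D * L) * Dᵀ := by rw [s3]
  _ = D * (L * Dᵀ) := mul_assoc _ _ _
  _ = D * (L * D) := by rw [s2]
  _ = D * L * D := (mul_assoc _ _ _).symm
  _ = D := h2

lemma mv_dot {d : ℕ} (A : Matrix (Fin d) (Fin d) ℝ) (x y : Fin d → ℝ) :
    (A.mulVec x) ⬝ᵥ y = x ⬝ᵥ Aᵀ.mulVec y := by
  rw [← Matrix.vecMul_transpose, ← Matrix.dotProduct_mulVec]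

theorem stmt_1 {d : ℕ} (L D : Matrix (Fin d) (Fin d) ℝ) (hL : L.PosSemidef)
    (hD : IsMoorePenrose L D)
    (f : (Fin d → ℝ) → ℝ) (hf : ContDiff ℝ 1 f)
    (h : ∀ z₁ z₂ : Fin d → ℝ,
      0 ≤ f z₂ - f z₁ - grad f z₁ ⬝ᵥ (z₂ - z₁) ∧
      f z₂ - f z₁ - grad f z₁ ⬝ᵥ (z₂ - z₁) ≤ (1/2) * ((z₂ - z₁) ⬝ᵥ L.mulVec (z₂ - z₁))) :
    ∀ z₁ z₂ : Fin d → ℝ,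
      (1/2) * ((grad f z₁ - grad f z₂) ⬝ᵥ D.mulVec (grad f z₁ - grad f z₂))
        ≤ f z₂ - f z₁ + grad f z₁ ⬝ᵥ (z₁ - z₂) ∧
      (1 - D * L).mulVec (grad f z₁ - grad f z₂) = 0 := by
  obtain ⟨hLDL, hDLD, hLDs, hDLs⟩ := hD
  have hLt : Lᵀ = L := hL.1.eq
  have hDt : Dᵀ = D := pinv_symm hLt ⟨hLDL, hDLD, hLDs, hDLs⟩
  -- f is affine along kernel directions of L
  have lin : ∀ u : Fin d → ℝ, L.mulVec u = 0 → ∀ z t,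
      f (z + t • u) = f z + t * (grad f z ⬝ᵥ u) := by
    intro u hu z t
    have h1 := (h z (z + t • u)).1
    have h2 := (h z (z + t • u)).2
    have hz : z + t • u - z = t • u := by abel
    rw [hz] at h1 h2
    have hq : (t • u) ⬝ᵥ L.mulVec (t • u) = 0 := by
      rw [Matrix.mulVec_smul, hu]
      simp
    have hd : grad f z ⬝ᵥ (t • u) = t * (grad f z ⬝ᵥ u) := by
      rw [dotProduct_smul]; rfl
    rw [hd] at h1 h2
    rw [hq] at h2
    linarith
  -- gradient differences are orthogonal to kernel of L
  have orth : ∀ z₁ z₂ : Fin d → ℝ, ∀ u : Fin d → ℝ, L.mulVec u = 0 →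
      (grad f z₁ - grad f z₂) ⬝ᵥ u = 0 := by
    intro z₁ z₂ u hu
    set a : ℝ := (grad f z₂ - grad f z₁) ⬝ᵥ u with ha
    set C : ℝ := f z₂ - f z₁ - grad f z₁ ⬝ᵥ (z₂ - z₁) with hC
    have key : ∀ t : ℝ, 0 ≤ C + t * a := by
      intro t
      have h1 := (h z₁ (z₂ + t • u)).1
      rw [lin u hu z₂ t] at h1
      have e : grad f z₁ ⬝ᵥ (z₂ + t • u - z₁)
          = grad f z₁ ⬝ᵥ (z₂ - z₁) + t * (grad f z₁ ⬝ᵥ u) := by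
        have : z₂ + t • u - z₁ = (z₂ - z₁) + t • u := by abel
        rw [this, dotProduct_add, dotProduct_smul]
        rfl
      rw [e] at h1
      have haa : a = grad f z₂ ⬝ᵥ u - grad f z₁ ⬝ᵥ u := by
        rw [ha, sub_dotProduct]
      rw [haa]
      ring_nf
      ring_nf at h1
      linarith
    have ha0 : a = 0 := by
      by_contra hne
      have h1 := key ((-(C + 1)) / a)
      rw [div_mul_cancel₀ _ hne] at h1
      linarith
    have : (grad f z₁ - grad f z₂) ⬝ᵥ u = -a := by
      rw [ha, sub_dotProduct, sub_dotProduct]; ring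
    rw [this, ha0, neg_zero]
  intro z₁ z₂
  set g : Fin d → ℝ := grad f z₁ - grad f z₂ with hg
  constructor
  · -- the cocoercivity inequality
    set v : Fin d → ℝ := D.mulVec g with hv
    have h1 := (h z₁ (z₂ + v)).1
    have h2 := (h z₂ (z₂ + v)).2
    have hz : z₂ + v - z₂ = v := by abel
    rw [hz] at h2
    have e2 : v ⬝ᵥ L.mulVec v = g ⬝ᵥ v := by
      calc v ⬝ᵥ L.mulVec v = (D.mulVec g) ⬝ᵥ L.mulVec (D.mulVec g) := by rw [hv]
      _ = g ⬝ᵥ Dᵀ.mulVec (L.mulVec (D.mulVec g)) := mv_dot _ _ _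
      _ = g ⬝ᵥ ((Dᵀ * L) * D).mulVec g := by
            rw [Matrix.mulVec_mulVec, Matrix.mulVec_mulVec]
      _ = g ⬝ᵥ D.mulVec g := by rw [hDt, hDLD]
      _ = g ⬝ᵥ v := by rw [hv]
    have e1 : grad f z₁ ⬝ᵥ (z₂ + v - z₁)
        = grad f z₁ ⬝ᵥ (z₂ - z₁) + grad f z₁ ⬝ᵥ v := by
      have : z₂ + v - z₁ = (z₂ - z₁) + v := by abel
      rw [this, dotProduct_add]
    rw [e1] at h1
    rw [e2] at h2
    have e3 : grad f z₁ ⬝ᵥ v - grad f z₂ ⬝ᵥ v = g ⬝ᵥ v := by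
      rw [hg, sub_dotProduct]
    have e4 : grad f z₁ ⬝ᵥ (z₁ - z₂) = -(grad f z₁ ⬝ᵥ (z₂ - z₁)) := by
      rw [show z₁ - z₂ = -(z₂ - z₁) by abel, dotProduct_neg]
    rw [e4]
    linarith
  · -- the kernel condition
    set M : Matrix (Fin d) (Fin d) ℝ := 1 - D * L with hM
    set w : Fin d → ℝ := M.mulVec g with hw
    have hMt : Mᵀ = M := by
      rw [hM, Matrix.transpose_sub, Matrix.transpose_one, hDLs]
    have hMM : M * M = M := by
      have key : D * L * (D * L) = D * L := by
        calc D * L * (D * L) = (D * L * D) * L := by simp only [mul_assoc]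
        _ = D * L := by rw [hDLD]
      rw [hM]
      rw [sub_mul, one_mul, mul_sub, mul_one, key, sub_self, sub_zero]
    have hLw : L.mulVec w = 0 := by
      rw [hw, Matrix.mulVec_mulVec]
      have : L * M = 0 := by
        rw [hM, mul_sub, mul_one, ← mul_assoc, hLDL, sub_self]
      rw [this, Matrix.zero_mulVec]
    have hgw : g ⬝ᵥ w = 0 := orth z₁ z₂ w hLw
    have hww : w ⬝ᵥ w = 0 := by
      calc w ⬝ᵥ w = (M.mulVec g) ⬝ᵥ w := by rw [hw]
      _ = g ⬝ᵥ Mᵀ.mulVec w := mv_dot _ _ _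
      _ = g ⬝ᵥ ((M * M).mulVec g) := by rw [hMt, hw, Matrix.mulVec_mulVec]
      _ = g ⬝ᵥ w := by rw [hMM, ← hw]
      _ = 0 := hgw
    exact dotProduct_self_eq_zero.mp hww
end

section
/- Let L ∈ ℝ^{d×d} be symmetric positive semidefinite with Moore–Penrose pseudoinverse D, and let f : ℝ^d → ℝ be continuously differentiable. Suppose that for all z₁, z₂ ∈ ℝ^d one has (∇f(z₁) − ∇f(z₂))ᵀD(∇f(z₁) − ∇f(z₂)) ≤ (∇f(z₁) − ∇f(z₂))ᵀ(z₁ − z₂) and (I_d − DL)(∇f(z₁) − ∇f(z₂)) = 0. Then for all z₁, z₂ ∈ ℝ^d: 0 ≤ (∇f(z₁) − ∇f(z₂))ᵀ(z₁ − z₂) ≤ (z₁ − z₂)ᵀL(z₁ − z₂). -/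
open Matrix

theorem stmt_2 {d : ℕ} (L D : Matrix (Fin d) (Fin d) ℝ) (hL : L.PosSemidef)
    (hD : IsMoorePenrose L D)
    (f : (Fin d → ℝ) → ℝ) (hf : ContDiff ℝ 1 f)
    (h : ∀ z₁ z₂ : Fin d → ℝ,
      (grad f z₁ - grad f z₂) ⬝ᵥ D.mulVec (grad f z₁ - grad f z₂)
        ≤ (grad f z₁ - grad f z₂) ⬝ᵥ (z₁ - z₂) ∧
      (1 - D * L).mulVec (grad f z₁ - grad f z₂) = 0) :
    ∀ z₁ z₂ : Fin d → ℝ,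
      0 ≤ (grad f z₁ - grad f z₂) ⬝ᵥ (z₁ - z₂) ∧
      (grad f z₁ - grad f z₂) ⬝ᵥ (z₁ - z₂) ≤ (z₁ - z₂) ⬝ᵥ L.mulVec (z₁ - z₂) := by
  obtain ⟨h1, h2, h3, h4⟩ := hD
  have hLs : Lᵀ = L := by
    have := hL.1
    simpa [Matrix.IsHermitian] using this
  have hLDT : L * Dᵀ = D * L := by
    calc L * Dᵀ = Lᵀ * Dᵀ := by rw [hLs]
    _ = (D * L)ᵀ := (transpose_mul D L).symm
    _ = D * L := h4
  have hDTL : Dᵀ * L = L * D := by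
    calc Dᵀ * L = Dᵀ * Lᵀ := by rw [hLs]
    _ = (L * D)ᵀ := (transpose_mul L D).symm
    _ = L * D := h3
  have h1' : L * Dᵀ * L = L := by
    have := congrArg transpose h1
    simpa [transpose_mul, hLs, mul_assoc] using this
  have h2' : Dᵀ * L * Dᵀ = Dᵀ := by
    have := congrArg transpose h2
    simpa [transpose_mul, hLs, mul_assoc] using this
  have hcomm : L * D = D * L := by
    calc L * D = (L * Dᵀ * L) * D := by rw [h1']
    _ = (L * Dᵀ) * (L * D) := by rw [mul_assoc]
    _ = (D * L) * (Dᵀ * L) := by rw [hLDT, hDTL]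
    _ = D * (L * Dᵀ * L) := by simp only [mul_assoc]
    _ = D * L := by rw [h1']
  have hsym : Dᵀ = D := by
    calc Dᵀ = Dᵀ * L * Dᵀ := h2'.symm
    _ = (L * D) * Dᵀ := by rw [hDTL]
    _ = (D * L) * Dᵀ := by rw [hcomm]
    _ = D * (L * Dᵀ) := by rw [mul_assoc]
    _ = D * (D * L) := by rw [hLDT]
    _ = D * (L * D) := by rw [← hcomm]
    _ = D := by rw [← mul_assoc, h2]
  have flip : ∀ (A : Matrix (Fin d) (Fin d) ℝ) (v w : Fin d → ℝ),
      (A *ᵥ v) ⬝ᵥ w = v ⬝ᵥ Aᵀ *ᵥ w := by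
    intro A v w
    rw [dotProduct_mulVec, vecMul_transpose]
  intro z₁ z₂
  set g := grad f z₁ - grad f z₂ with hgdef
  set x := z₁ - z₂ with hxdef
  have hgD : g ⬝ᵥ D *ᵥ g ≤ g ⬝ᵥ x := (h z₁ z₂).1
  have hg0 : (1 - D * L) *ᵥ g = 0 := (h z₁ z₂).2
  clear_value g x
  have hg : (D * L) *ᵥ g = g := by
    rw [sub_mulVec, one_mulVec, sub_eq_zero] at hg0
    exact hg0.symm
  have e1 : (D *ᵥ g) ⬝ᵥ L *ᵥ (D *ᵥ g) = g ⬝ᵥ D *ᵥ g := by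
    rw [flip, hsym, mulVec_mulVec, mulVec_mulVec, h2]
  have e2 : x ⬝ᵥ L *ᵥ (D *ᵥ g) = g ⬝ᵥ x := by
    rw [mulVec_mulVec, hcomm, hg, dotProduct_comm]
  have e3 : (D *ᵥ g) ⬝ᵥ L *ᵥ x = g ⬝ᵥ x := by
    rw [flip, hsym, mulVec_mulVec, ← h4, ← flip, hg]
  have key : 0 ≤ x ⬝ᵥ L *ᵥ x - g ⬝ᵥ x - g ⬝ᵥ x + g ⬝ᵥ D *ᵥ g := by
    have h5 := hL.dotProduct_mulVec_nonneg (x - D *ᵥ g)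
    rw [star_trivial] at h5
    rw [mulVec_sub, dotProduct_sub, sub_dotProduct, sub_dotProduct, e1, e2, e3] at h5
    linarith
  have h6 : 0 ≤ g ⬝ᵥ D *ᵥ g := by
    have h7 := hL.dotProduct_mulVec_nonneg (D *ᵥ g)
    rw [star_trivial] at h7
    rwa [e1] at h7
  exact ⟨le_trans h6 hgD, by linarith⟩
end

section
/- Let M, L ∈ ℝ^{d×d} be symmetric invertible matrices with L − M positive semidefinite, and suppose M and L are congruent. Then every symmetric matrix Q ∈ ℝ^{d×d} with Q − M and L − Q both positive semidefinite is invertible. -/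
open Matrix Submodule

namespace StmtAux

variable {d : ℕ} {ι : Type*}

lemma sum_dot (s : Finset ι) (f : ι → (Fin d → ℝ)) (w : Fin d → ℝ) :
    (∑ i ∈ s, f i) ⬝ᵥ w = ∑ i ∈ s, f i ⬝ᵥ w := by
  simp [dotProduct, Finset.sum_mul, Finset.sum_apply]
  rw [Finset.sum_comm]

lemma dot_sum (s : Finset ι) (f : ι → (Fin d → ℝ)) (w : Fin d → ℝ) :
    w ⬝ᵥ (∑ i ∈ s, f i) = ∑ i ∈ s, w ⬝ᵥ f i := by
  simp [dotProduct, Finset.mul_sum, Finset.sum_apply]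
  rw [Finset.sum_comm]

lemma mv_sum (Q : Matrix (Fin d) (Fin d) ℝ) (s : Finset ι) (g : ι → ℝ) (c : ι → (Fin d → ℝ)) :
    Q *ᵥ (∑ i ∈ s, g i • c i) = ∑ i ∈ s, g i • (Q *ᵥ c i) := by
  simp only [← Matrix.mulVecLin_apply, map_sum, _root_.map_smul]

lemma dd (s : Finset (Fin d)) (g h : Fin d → ℝ) (c : Fin d → (Fin d → ℝ))
    (hc : ∀ i j, c i ⬝ᵥ c j = if i = j then 1 else 0) :
    (∑ i ∈ s, g i • c i) ⬝ᵥ (∑ j ∈ s, h j • c j) = ∑ i ∈ s, g i * h i := by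
  rw [sum_dot]
  simp only [dot_sum, smul_dotProduct, dotProduct_smul, hc, smul_eq_mul,
    mul_ite, mul_one, mul_zero]
  simp [Finset.mul_sum, Finset.sum_ite_eq]

noncomputable def evec {Q : Matrix (Fin d) (Fin d) ℝ} (hQ : Q.IsHermitian) :
    Fin d → (Fin d → ℝ) := fun i => ⇑(hQ.eigenvectorBasis i)

lemma evec_li {Q : Matrix (Fin d) (Fin d) ℝ} (hQ : Q.IsHermitian) :
    LinearIndependent ℝ (evec hQ) :=
  hQ.eigenvectorBasis.toBasis.linearIndependent.map'
    (WithLp.linearEquiv 2 ℝ (Fin d → ℝ)).toLinearMap (LinearEquiv.ker _)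

lemma evec_dot {Q : Matrix (Fin d) (Fin d) ℝ} (hQ : Q.IsHermitian) (i j : Fin d) :
    evec hQ i ⬝ᵥ evec hQ j = if i = j then 1 else 0 := by
  have h := hQ.eigenvectorBasis.orthonormal
  rw [orthonormal_iff_ite] at h
  rw [← h i j, EuclideanSpace.inner_eq_star_dotProduct]
  simp only [star_trivial]
  exact dotProduct_comm _ _

lemma evec_mulVec {Q : Matrix (Fin d) (Fin d) ℝ} (hQ : Q.IsHermitian) (i : Fin d) :
    Q *ᵥ evec hQ i = hQ.eigenvalues i • evec hQ i :=
  hQ.mulVec_eigenvectorBasis i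

/-- span of eigenvectors indexed by `s` -/
noncomputable def espan {Q : Matrix (Fin d) (Fin d) ℝ} (hQ : Q.IsHermitian)
    (s : Finset (Fin d)) : Submodule ℝ (Fin d → ℝ) :=
  span ℝ ((s.image (evec hQ) : Finset (Fin d → ℝ)) : Set (Fin d → ℝ))

lemma finrank_espan {Q : Matrix (Fin d) (Fin d) ℝ} (hQ : Q.IsHermitian)
    (s : Finset (Fin d)) : Module.finrank ℝ (espan hQ s) = s.card := by
  rw [espan, finrank_span_finset_eq_card, Finset.card_image_of_injective _ (evec_li hQ).injective]
  refine ((linearIndepOn_id_range_iff (evec_li hQ).injective).2 (evec_li hQ)).mono fun x hx => ?_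
  rcases Finset.mem_image.1 (Finset.mem_coe.1 hx) with ⟨i, _, rfl⟩
  exact Set.mem_range_self i

lemma quad_rep {Q : Matrix (Fin d) (Fin d) ℝ} (hQ : Q.IsHermitian)
    (s : Finset (Fin d)) (v : Fin d → ℝ) (hv : v ∈ espan hQ s) :
    ∃ g : Fin d → ℝ,
      v ⬝ᵥ Q *ᵥ v = ∑ i ∈ s, hQ.eigenvalues i * g i ^ 2 ∧
      Q *ᵥ v = ∑ i ∈ s, (hQ.eigenvalues i * g i) • evec hQ i := by
  obtain ⟨f, -, hf⟩ := mem_span_finset.1 hv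
  rw [Finset.sum_image (fun a _ b _ h => (evec_li hQ).injective h)] at hf
  set g : Fin d → ℝ := fun i => f (evec hQ i) with hg
  have hQv : Q *ᵥ v = ∑ i ∈ s, (hQ.eigenvalues i * g i) • evec hQ i := by
    rw [← hf, mv_sum]
    refine Finset.sum_congr rfl fun i _ => ?_
    rw [evec_mulVec, smul_smul, mul_comm]
  refine ⟨g, ?_, hQv⟩
  rw [hQv, ← hf, dd s g (fun i => hQ.eigenvalues i * g i) _ (evec_dot hQ)]
  exact Finset.sum_congr rfl fun i _ => by ring

lemma nonpos_on {Q : Matrix (Fin d) (Fin d) ℝ} (hQ : Q.IsHermitian)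
    {s : Finset (Fin d)} (hs : ∀ i ∈ s, hQ.eigenvalues i ≤ 0)
    {v : Fin d → ℝ} (hv : v ∈ espan hQ s) :
    v ⬝ᵥ Q *ᵥ v ≤ 0 ∧ (v ⬝ᵥ Q *ᵥ v = 0 → Q *ᵥ v = 0) := by
  obtain ⟨g, hq, hQv⟩ := quad_rep hQ s v hv
  have hterm : ∀ i ∈ s, hQ.eigenvalues i * g i ^ 2 ≤ 0 := fun i hi =>
    mul_nonpos_iff.2 (Or.inr ⟨hs i hi, sq_nonneg _⟩)
  refine ⟨hq ▸ Finset.sum_nonpos hterm, fun h0 => ?_⟩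
  rw [hq] at h0
  have hz := (Finset.sum_eq_zero_iff_of_nonpos hterm).1 h0
  rw [hQv]
  refine Finset.sum_eq_zero fun i hi => ?_
  have h1 := hz i hi
  have : hQ.eigenvalues i * g i = 0 := by
    rcases mul_eq_zero.1 h1 with h | h
    · simp [h]
    · rw [pow_eq_zero_iff (by norm_num)] at h; simp [h]
  simp [this]

lemma nonneg_on {Q : Matrix (Fin d) (Fin d) ℝ} (hQ : Q.IsHermitian)
    {s : Finset (Fin d)} (hs : ∀ i ∈ s, 0 ≤ hQ.eigenvalues i)
    {v : Fin d → ℝ} (hv : v ∈ espan hQ s) :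
    0 ≤ v ⬝ᵥ Q *ᵥ v ∧ (v ⬝ᵥ Q *ᵥ v = 0 → Q *ᵥ v = 0) := by
  obtain ⟨g, hq, hQv⟩ := quad_rep hQ s v hv
  have hterm : ∀ i ∈ s, 0 ≤ hQ.eigenvalues i * g i ^ 2 := fun i hi =>
    mul_nonneg (hs i hi) (sq_nonneg _)
  refine ⟨hq ▸ Finset.sum_nonneg hterm, fun h0 => ?_⟩
  rw [hq] at h0
  have hz := (Finset.sum_eq_zero_iff_of_nonneg hterm).1 h0
  rw [hQv]
  refine Finset.sum_eq_zero fun i hi => ?_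
  have h1 := hz i hi
  have : hQ.eigenvalues i * g i = 0 := by
    rcases mul_eq_zero.1 h1 with h | h
    · simp [h]
    · rw [pow_eq_zero_iff (by norm_num)] at h; simp [h]
  simp [this]

lemma mulVec_inj {A : Matrix (Fin d) (Fin d) ℝ} (hA : IsUnit A) {v : Fin d → ℝ}
    (h : A *ᵥ v = 0) : v = 0 := by
  have hdet := (Matrix.isUnit_iff_isUnit_det A).1 hA
  have : A⁻¹ *ᵥ (A *ᵥ v) = v := by
    rw [Matrix.mulVec_mulVec, Matrix.nonsing_inv_mul A hdet, Matrix.one_mulVec]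
  rw [h, Matrix.mulVec_zero] at this
  exact this.symm

lemma psd_quad {A : Matrix (Fin d) (Fin d) ℝ} (hA : A.PosSemidef) (v : Fin d → ℝ) :
    0 ≤ v ⬝ᵥ A *ᵥ v := by
  have := hA.dotProduct_mulVec_nonneg v
  simpa using this

lemma psd_quad_zero {A : Matrix (Fin d) (Fin d) ℝ} (hA : A.PosSemidef) {v : Fin d → ℝ}
    (h : v ⬝ᵥ A *ᵥ v = 0) : A *ᵥ v = 0 := by
  apply (hA.dotProduct_mulVec_zero_iff v).1
  simpa using h

/-- M is negative definite on the span of nonpositive eigenvectors of Q. -/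
lemma M_negdef {Q M : Matrix (Fin d) (Fin d) ℝ} (hQ : Q.IsHermitian)
    (hMinv : IsUnit M) (hQM : (Q - M).PosSemidef)
    {s : Finset (Fin d)} (hs : ∀ i ∈ s, hQ.eigenvalues i ≤ 0)
    {v : Fin d → ℝ} (hv : v ∈ espan hQ s) (hv0 : v ≠ 0) :
    v ⬝ᵥ M *ᵥ v < 0 := by
  obtain ⟨hle, heq⟩ := nonpos_on hQ hs hv
  have h1 : 0 ≤ v ⬝ᵥ Q *ᵥ v - v ⬝ᵥ M *ᵥ v := by
    have := psd_quad hQM v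
    rwa [Matrix.sub_mulVec, dotProduct_sub] at this
  rcases lt_or_eq_of_le (le_trans (by linarith) hle) with h | h
  · exact h
  exfalso
  have hq0 : v ⬝ᵥ Q *ᵥ v = 0 := le_antisymm hle (by linarith)
  have hQv := heq hq0
  have hqm0 : (Q - M) *ᵥ v = 0 := by
    apply psd_quad_zero hQM
    rw [Matrix.sub_mulVec, dotProduct_sub]
    linarith
  rw [Matrix.sub_mulVec, hQv, sub_eq_zero] at hqm0
  exact hv0 (mulVec_inj hMinv hqm0.symm)

/-- L is positive definite on the span of nonnegative eigenvectors of Q. -/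
lemma L_posdef {Q L : Matrix (Fin d) (Fin d) ℝ} (hQ : Q.IsHermitian)
    (hLinv : IsUnit L) (hLQ : (L - Q).PosSemidef)
    {s : Finset (Fin d)} (hs : ∀ i ∈ s, 0 ≤ hQ.eigenvalues i)
    {v : Fin d → ℝ} (hv : v ∈ espan hQ s) (hv0 : v ≠ 0) :
    0 < v ⬝ᵥ L *ᵥ v := by
  obtain ⟨hge, heq⟩ := nonneg_on hQ hs hv
  have h1 : 0 ≤ v ⬝ᵥ L *ᵥ v - v ⬝ᵥ Q *ᵥ v := by
    have := psd_quad hLQ v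
    rwa [Matrix.sub_mulVec, dotProduct_sub] at this
  rcases lt_or_eq_of_le (le_trans hge (by linarith)) with h | h
  · exact h
  exfalso
  have hq0 : v ⬝ᵥ Q *ᵥ v = 0 := le_antisymm (by linarith) hge
  have hQv := heq hq0
  have hlq0 : (L - Q) *ᵥ v = 0 := by
    apply psd_quad_zero hLQ
    rw [Matrix.sub_mulVec, dotProduct_sub]
    linarith
  rw [Matrix.sub_mulVec, hQv, sub_zero] at hlq0
  exact hv0 (mulVec_inj hLinv hlq0)

end StmtAux

open StmtAux

/-- Two real symmetric matrices are congruent if `Tᵀ M T = L` for some invertible `T`. -/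
def MatCongruent {d : ℕ} (M L : Matrix (Fin d) (Fin d) ℝ) : Prop :=
  ∃ T : Matrix (Fin d) (Fin d) ℝ, IsUnit T ∧ Tᵀ * M * T = L

theorem stmt_3 {d : ℕ} (M L : Matrix (Fin d) (Fin d) ℝ)
    (hM : M.IsSymm) (hL : L.IsSymm) (hMinv : IsUnit M) (hLinv : IsUnit L)
    (hLM : (L - M).PosSemidef) (hcong : MatCongruent M L) :
    ∀ Q : Matrix (Fin d) (Fin d) ℝ, Q.IsSymm →
      (Q - M).PosSemidef → (L - Q).PosSemidef → IsUnit Q := by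
  intro Q hQsymm hQM hLQ
  by_contra hQu
  have hQ : Q.IsHermitian := by
    rwa [Matrix.IsHermitian, Matrix.conjTranspose_eq_transpose_of_trivial]
  -- 0 is an eigenvalue of Q
  have hdet : Q.det = 0 := by
    by_contra h
    exact hQu ((Matrix.isUnit_iff_isUnit_det Q).2 (isUnit_iff_ne_zero.2 h))
  obtain ⟨i₀, _, hi₀⟩ : ∃ i ∈ Finset.univ, hQ.eigenvalues i = 0 := by
    rw [hQ.det_eq_prod_eigenvalues] at hdet
    exact Finset.prod_eq_zero_iff.1 (by exact_mod_cast hdet)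
  classical
  set sm : Finset (Fin d) := Finset.univ.filter (fun i => hQ.eigenvalues i ≤ 0) with hsm
  set sp : Finset (Fin d) := Finset.univ.filter (fun i => 0 ≤ hQ.eigenvalues i) with hsp
  have hcards : d + 1 ≤ sm.card + sp.card := by
    have hunion : sm ∪ sp = Finset.univ := by
      refine Finset.eq_univ_iff_forall.2 fun i => ?_
      rcases le_total (hQ.eigenvalues i) 0 with h | h
      · exact Finset.mem_union_left _ (Finset.mem_filter.2 ⟨Finset.mem_univ _, h⟩)
      · exact Finset.mem_union_right _ (Finset.mem_filter.2 ⟨Finset.mem_univ _, h⟩)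
    have hinter : 1 ≤ (sm ∩ sp).card := by
      refine Finset.card_pos.2 ⟨i₀, Finset.mem_inter.2 ⟨?_, ?_⟩⟩
      · exact Finset.mem_filter.2 ⟨Finset.mem_univ _, le_of_eq hi₀⟩
      · exact Finset.mem_filter.2 ⟨Finset.mem_univ _, ge_of_eq hi₀⟩
    have := Finset.card_union_add_card_inter sm sp
    rw [hunion, Finset.card_univ, Fintype.card_fin] at this
    omega
  -- set up the congruence transform
  obtain ⟨T, hT, hTML⟩ := hcong
  have hTdet := (Matrix.isUnit_iff_isUnit_det T).1 hT
  set e : (Fin d → ℝ) ≃ₗ[ℝ] (Fin d → ℝ) :=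
    LinearEquiv.ofLinear (Matrix.mulVecLin T⁻¹) (Matrix.mulVecLin T)
      (by rw [← Matrix.mulVecLin_mul, Matrix.nonsing_inv_mul T hTdet, Matrix.mulVecLin_one])
      (by rw [← Matrix.mulVecLin_mul, Matrix.mul_nonsing_inv T hTdet, Matrix.mulVecLin_one])
    with he
  set Sm := espan hQ sm with hSm
  set Sp := espan hQ sp with hSp
  set Sm' := Sm.map (e : (Fin d → ℝ) →ₗ[ℝ] (Fin d → ℝ)) with hSm'
  -- L is negative definite on Sm'
  have hLneg : ∀ x ∈ Sm', x ≠ 0 → x ⬝ᵥ L *ᵥ x < 0 := by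
    intro x hx hx0
    obtain ⟨v, hv, rfl⟩ := Submodule.mem_map.1 hx
    have hex : (e : (Fin d → ℝ) →ₗ[ℝ] _) v = T⁻¹ *ᵥ v := rfl
    rw [hex]
    have hTx : T *ᵥ (T⁻¹ *ᵥ v) = v := by
      rw [Matrix.mulVec_mulVec, Matrix.mul_nonsing_inv T hTdet, Matrix.one_mulVec]
    have hv0 : v ≠ 0 := by
      rintro rfl
      exact hx0 (by rw [hex]; simp)
    have hquad : (T⁻¹ *ᵥ v) ⬝ᵥ L *ᵥ (T⁻¹ *ᵥ v) = v ⬝ᵥ M *ᵥ v := by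
      conv_lhs => rw [← hTML]
      rw [← Matrix.mulVec_mulVec, ← Matrix.mulVec_mulVec, Matrix.dotProduct_mulVec,
        Matrix.vecMul_transpose, hTx]
    rw [hquad]
    exact M_negdef hQ hMinv hQM (fun i hi => (Finset.mem_filter.1 hi).2) hv hv0
  -- L is positive definite on Sp
  have hLpos : ∀ x ∈ Sp, x ≠ 0 → 0 < x ⬝ᵥ L *ᵥ x :=
    fun x hx hx0 => L_posdef hQ hLinv hLQ (fun i hi => (Finset.mem_filter.1 hi).2) hx hx0
  -- the two spaces intersect trivially
  have hbot : Sm' ⊓ Sp = ⊥ := by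
    rw [eq_bot_iff]
    rintro x ⟨hx1, hx2⟩
    by_contra hx0
    have h1 := hLneg x hx1 hx0
    have h2 := hLpos x hx2 hx0
    linarith
  have hdim := Submodule.finrank_sup_add_finrank_inf_eq Sm' Sp
  rw [hbot] at hdim
  have h1 : Module.finrank ℝ Sm' = sm.card := by
    rw [hSm', LinearEquiv.finrank_map_eq, hSm, finrank_espan]
  have h2 : Module.finrank ℝ Sp = sp.card := finrank_espan hQ sp
  have h3 : Module.finrank ℝ (Sm' ⊔ Sp : Submodule ℝ (Fin d → ℝ)) ≤ d := by
    have := Submodule.finrank_le (Sm' ⊔ Sp)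
    rwa [Module.finrank_fin_fun] at this
  rw [h1, h2, finrank_bot] at hdim
  omega
end

section
/- Let M, L ∈ ℝ^{d×d} be symmetric matrices with L − M positive semidefinite, and suppose that every symmetric matrix Q ∈ ℝ^{d×d} with Q − M and L − Q both positive semidefinite is invertible. Then M + L is invertible, and every complex eigenvalue of the matrix (M + L)⁻¹(L − M) is a real number lying in the open interval (−1, 1). -/
open Matrix ComplexOrder

lemma psd_smul' {d : ℕ} {A : Matrix (Fin d) (Fin d) ℝ} (hA : A.PosSemidef) {c : ℝ} (hc : 0 ≤ c) :
    (c • A).PosSemidef := by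
  refine posSemidef_iff_dotProduct_mulVec.mpr ⟨?_, fun x => ?_⟩
  · show (c • A)ᴴ = c • A
    rw [conjTranspose_smul, star_trivial, hA.1.eq]
  · rw [smul_mulVec, dotProduct_smul, smul_eq_mul]
    exact mul_nonneg hc (hA.dotProduct_mulVec_nonneg x)

lemma det_cx {d : ℕ} (A : Matrix (Fin d) (Fin d) ℝ) :
    (A.map (Complex.ofReal : ℝ → ℂ)).det = Complex.ofReal A.det := by
  exact (RingHom.map_det Complex.ofRealHom A).symm

lemma conj_quad {d : ℕ} (A : Matrix (Fin d) (Fin d) ℝ) (hA : A.IsSymm) (x : Fin d → ℂ) :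
    (starRingEnd ℂ) (star x ⬝ᵥ (A.map (Complex.ofReal : ℝ → ℂ)) *ᵥ x)
      = star x ⬝ᵥ (A.map (Complex.ofReal : ℝ → ℂ)) *ᵥ x := by
  simp only [dotProduct, mulVec, Finset.mul_sum, _root_.map_mul, map_sum, Pi.star_apply,
    Complex.star_def, Complex.conj_conj, Matrix.map_apply, Complex.conj_ofReal]
  rw [Finset.sum_comm]
  refine Finset.sum_congr rfl fun i _ => Finset.sum_congr rfl fun j _ => ?_
  rw [← hA.apply i j]
  ring

lemma psd_cx {d : ℕ} {A : Matrix (Fin d) (Fin d) ℝ} (hA : A.PosSemidef) :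
    (A.map (Complex.ofReal : ℝ → ℂ)).PosSemidef := by
  obtain ⟨B, rfl⟩ : ∃ B : Matrix (Fin d) (Fin d) ℝ, A = Bᴴ * B := by
    open scoped MatrixOrder in
    obtain ⟨B, rfl⟩ := CStarAlgebra.nonneg_iff_eq_star_mul_self.mp hA.nonneg
    exact ⟨B, rfl⟩
  have : (Bᴴ * B).map (Complex.ofReal : ℝ → ℂ)
      = (B.map (Complex.ofReal : ℝ → ℂ))ᴴ * (B.map (Complex.ofReal : ℝ → ℂ)) := by
    rw [show (Bᴴ * B).map (Complex.ofReal : ℝ → ℂ)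
        = (Bᴴ).map (Complex.ofReal : ℝ → ℂ) * B.map (Complex.ofReal : ℝ → ℂ) from
      Matrix.map_mul (f := Complex.ofRealHom)]
    congr 1
    ext i j
    simp [conjTranspose_apply, Complex.conj_ofReal]
  rw [this]
  exact posSemidef_conjTranspose_mul_self _

theorem stmt_4 {d : ℕ} (M L : Matrix (Fin d) (Fin d) ℝ)
    (hM : M.IsSymm) (hL : L.IsSymm) (hLM : (L - M).PosSemidef)
    (h : ∀ Q : Matrix (Fin d) (Fin d) ℝ, Q.IsSymm →
      (Q - M).PosSemidef → (L - Q).PosSemidef → IsUnit Q) :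
    IsUnit (M + L) ∧
      ∀ μ ∈ spectrum ℂ (((M + L)⁻¹ * (L - M)).map (Complex.ofReal : ℝ → ℂ)),
        μ.im = 0 ∧ -1 < μ.re ∧ μ.re < 1 := by
  set S := M + L with hSdef
  set D := L - M with hDdef
  -- key invertibility family
  have hu : ∀ t : ℝ, |t| ≤ 1 → (S + t • D).det ≠ 0 := by
    intro t ht
    have h1 : (0:ℝ) ≤ (1 + t) / 2 := by
      have := neg_le_of_abs_le ht; linarith
    have h2 : (0:ℝ) ≤ (1 - t) / 2 := by
      have := le_of_abs_le ht; linarith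
    have hQ := h ((2⁻¹ : ℝ) • (S + t • D)) ?_ ?_ ?_
    · have hdet : IsUnit ((2⁻¹ : ℝ) • (S + t • D)).det :=
        (isUnit_iff_isUnit_det _).mp hQ
      rw [det_smul] at hdet
      intro hzero
      rw [hzero, mul_zero] at hdet
      exact (not_isUnit_zero : ¬ IsUnit (0:ℝ)) hdet
    · exact (((hM.add hL).add ((hL.sub hM).smul t)).smul _)
    · have : (2⁻¹ : ℝ) • (S + t • D) - M = ((1 + t) / 2) • D := by
        rw [hSdef, hDdef]; module
      rw [this]
      exact psd_smul' hLM h1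
    · have : L - (2⁻¹ : ℝ) • (S + t • D) = ((1 - t) / 2) • D := by
        rw [hSdef, hDdef]; module
      rw [this]
      exact psd_smul' hLM h2
  have hSdet : S.det ≠ 0 := by
    have := hu 0 (by simp)
    simpa using this
  have hSunit : IsUnit S := (isUnit_iff_isUnit_det _).mpr (isUnit_iff_ne_zero.mpr hSdet)
  refine ⟨hSunit, ?_⟩
  intro μ hμ
  -- from spectrum membership extract an eigenvector
  rw [spectrum.mem_iff] at hμ
  rw [Matrix.isUnit_iff_isUnit_det, isUnit_iff_ne_zero, not_not] at hμ
  obtain ⟨x, hx0, hx⟩ := Matrix.exists_mulVec_eq_zero_iff.mpr hμ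
  set Sc := S.map (Complex.ofReal : ℝ → ℂ) with hScdef
  set Dc := D.map (Complex.ofReal : ℝ → ℂ) with hDcdef
  have hAx : ((S⁻¹ * D).map (Complex.ofReal : ℝ → ℂ)) *ᵥ x = μ • x := by
    have := hx
    rw [sub_mulVec] at this
    have h2 : (algebraMap ℂ (Matrix (Fin d) (Fin d) ℂ)) μ *ᵥ x = μ • x := by
      rw [algebraMap_eq_diagonal]
      ext i
      simp [mulVec_diagonal, Pi.algebraMap_apply, Algebra.algebraMap_self_apply]
    rw [h2] at this
    exact (sub_eq_zero.mp this).symm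
  -- D x = μ S x over ℂ
  have hkey : Dc *ᵥ x = μ • (Sc *ᵥ x) := by
    have hmul : Sc * ((S⁻¹ * D).map (Complex.ofReal : ℝ → ℂ)) = Dc := by
      rw [hScdef, hDcdef,
        show S.map (Complex.ofReal : ℝ → ℂ) * ((S⁻¹ * D).map (Complex.ofReal : ℝ → ℂ))
          = (S * (S⁻¹ * D)).map (Complex.ofReal : ℝ → ℂ) from
        (Matrix.map_mul (f := Complex.ofRealHom)).symm]
      congr 1
      rw [← Matrix.mul_assoc, Matrix.mul_nonsing_inv _ (isUnit_iff_ne_zero.mpr hSdet), Matrix.one_mul]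
    calc Dc *ᵥ x = (Sc * ((S⁻¹ * D).map (Complex.ofReal : ℝ → ℂ))) *ᵥ x := by rw [hmul]
    _ = Sc *ᵥ (((S⁻¹ * D).map (Complex.ofReal : ℝ → ℂ)) *ᵥ x) := by rw [mulVec_mulVec]
    _ = Sc *ᵥ (μ • x) := by rw [hAx]
    _ = μ • (Sc *ᵥ x) := mulVec_smul _ _ _
  have hScdetne : Sc.det ≠ 0 := by
    rw [hScdef, det_cx]
    exact_mod_cast hSdet
  have hSx0 : Sc *ᵥ x ≠ 0 := by
    intro hc
    exact hScdetne (Matrix.exists_mulVec_eq_zero_iff.mp ⟨x, hx0, hc⟩)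
  set c := star x ⬝ᵥ Sc *ᵥ x with hcdef
  set e := star x ⬝ᵥ Dc *ᵥ x with hedef
  have hec : e = μ * c := by
    rw [hedef, hcdef, hkey, dotProduct_smul, smul_eq_mul]
  have hcim : c.im = 0 := by
    have := conj_quad S (hM.add hL) x
    rw [← hScdef, ← hcdef] at this
    exact Complex.conj_eq_iff_im.mp this
  have hDpsd : Dc.PosSemidef := psd_cx hLM
  have he_nonneg : 0 ≤ e := hDpsd.dotProduct_mulVec_nonneg x
  have heim : e.im = 0 := by
    have := he_nonneg
    rw [Complex.le_def] at this
    exact this.2.symm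
  have here : 0 ≤ e.re := by
    have := he_nonneg
    rw [Complex.le_def] at this
    simpa using this.1
  -- μ is real
  have hμim : μ.im = 0 := by
    by_cases hc : c = 0
    · -- then e = 0, so D x = 0, so μ • Sx = 0, so μ = 0
      have he0 : e = 0 := by rw [hec, hc, mul_zero]
      have hDx0 : Dc *ᵥ x = 0 := (hDpsd.dotProduct_mulVec_zero_iff x).mp he0
      rw [hDx0] at hkey
      rcases smul_eq_zero.mp hkey.symm with h0 | h0
      · rw [h0]; rfl
      · exact absurd h0 hSx0
    · have hcre : c.re ≠ 0 := by
        intro hr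
        exact hc (Complex.ext hr hcim)
      have : (μ * c).im = 0 := by rw [← hec]; exact heim
      rw [Complex.mul_im, hcim, mul_zero, zero_add] at this
      exact (mul_eq_zero.mp this).resolve_right hcre
  refine ⟨hμim, ?_⟩
  set r := μ.re with hrdef
  have hμr : μ = (r : ℂ) := Complex.ext rfl (by simpa using hμim)
  by_contra hcon
  have habs : 1 ≤ |r| := by
    by_contra h'
    push_neg at h'
    rw [abs_lt] at h'
    exact hcon ⟨h'.1, h'.2⟩
  have hr0 : r ≠ 0 := by
    intro hr; rw [hr] at habs; norm_num at habs
  set t := -r⁻¹ with htdef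
  have ht1 : |t| ≤ 1 := by
    rw [htdef, abs_neg, abs_inv]
    rw [inv_le_one_iff₀]
    right; exact habs
  have hdet := hu t ht1
  -- the complexification of S + t • D kills x
  have hzero : ((S + t • D).map (Complex.ofReal : ℝ → ℂ)) *ᵥ x = 0 := by
    have hmap : (S + t • D).map (Complex.ofReal : ℝ → ℂ) = Sc + (t : ℂ) • Dc := by
      ext i j
      simp [Matrix.map_apply, Matrix.add_apply, Matrix.smul_apply, hScdef, hDcdef,
        Complex.ofReal_add, Complex.ofReal_mul, smul_eq_mul]
    rw [hmap, add_mulVec, smul_mulVec, hkey, hμr, smul_smul]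
    have : (t : ℂ) * (r : ℂ) = -1 := by
      rw [htdef]
      push_cast
      field_simp
    rw [this]
    simp
  have : ((S + t • D).map (Complex.ofReal : ℝ → ℂ)).det = 0 :=
    Matrix.exists_mulVec_eq_zero_iff.mp ⟨x, hx0, hzero⟩
  rw [det_cx] at this
  exact hdet (by exact_mod_cast this)
end

section
/- Let M, L ∈ ℝ^{d×d} be symmetric matrices such that M + L is invertible and every complex eigenvalue λ of (M + L)⁻¹(L − M) is real with −1 < λ < 1. Then M is invertible and every complex eigenvalue of M⁻¹L is a real number that is strictly positive. -/
open Matrix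

private lemma aux_unit_mul {R : Type*} [Monoid R] {u v : R}
    (hu : IsUnit u) (huv : IsUnit (u * v)) : IsUnit v := by
  have hv : v = ↑hu.unit⁻¹ * (u * v) := by
    rw [← mul_assoc, IsUnit.val_inv_mul, one_mul]
  rw [hv]
  exact (hu.unit⁻¹.isUnit).mul huv

theorem stmt_5 {d : ℕ} (M L : Matrix (Fin d) (Fin d) ℝ)
    (hM : M.IsSymm) (hL : L.IsSymm) (hMLinv : IsUnit (M + L))
    (h : ∀ μ ∈ spectrum ℂ (((M + L)⁻¹ * (L - M)).map (Complex.ofReal : ℝ → ℂ)),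
      μ.im = 0 ∧ -1 < μ.re ∧ μ.re < 1) :
    IsUnit M ∧
      ∀ μ ∈ spectrum ℂ ((M⁻¹ * L).map (Complex.ofReal : ℝ → ℂ)),
        μ.im = 0 ∧ 0 < μ.re := by
  set A : Matrix (Fin d) (Fin d) ℝ := (M + L)⁻¹ * (L - M) with hA
  set A' : Matrix (Fin d) (Fin d) ℂ := A.map (Complex.ofReal : ℝ → ℂ) with hA'
  have hdet : IsUnit (M + L).det := (Matrix.isUnit_iff_isUnit_det _).mp hMLinv
  have hMLA : (M + L) * A = L - M := by
    rw [hA, ← Matrix.mul_assoc, Matrix.mul_nonsing_inv _ hdet, Matrix.one_mul]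
  -- 1 is not in the spectrum of A'
  have h1 : (1 : ℂ) ∉ spectrum ℂ A' := by
    intro hmem
    have := (h 1 hmem).2.2
    simp at this
  have hunit1A' : IsUnit ((1 : Matrix (Fin d) (Fin d) ℂ) - A') := by
    have := spectrum.notMem_iff.mp h1
    simpa using this
  -- 1 - A is invertible over ℝ
  have hmap1A : (1 - A).map (Complex.ofReal : ℝ → ℂ) = 1 - A' := by
    ext i j
    simp [hA', Matrix.map_apply, Matrix.sub_apply, Matrix.one_apply, apply_ite]
  have hdet1A : IsUnit (1 - A).det := by
    rw [isUnit_iff_ne_zero]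
    intro h0
    have hC : ((1 - A).det : ℂ) = (1 - A').det := by
      rw [← hmap1A]
      exact (RingHom.map_det Complex.ofRealHom (1 - A)).symm ▸ rfl
    have := (Matrix.isUnit_iff_isUnit_det _).mp hunit1A'
    rw [← hC, h0] at this
    simp at this
  have hunit1A : IsUnit ((1 : Matrix (Fin d) (Fin d) ℝ) - A) :=
    (Matrix.isUnit_iff_isUnit_det _).mpr hdet1A
  -- (M + L) * (1 - A) = M + M
  have hM2 : (M + L) * (1 - A) = M + M := by
    rw [Matrix.mul_sub, Matrix.mul_one, hMLA]
    abel
  have hMMunit : IsUnit (M + M) := hM2 ▸ hMLinv.mul hunit1A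
  have hMunit : IsUnit M := by
    rw [Matrix.isUnit_iff_isUnit_det, isUnit_iff_ne_zero]
    intro h0
    have h2M : M + M = (2 : ℝ) • M := (two_smul ℝ M).symm
    have := (Matrix.isUnit_iff_isUnit_det _).mp hMMunit
    rw [h2M, Matrix.det_smul, h0, mul_zero] at this
    simp at this
  refine ⟨hMunit, ?_⟩
  -- M⁻¹ * L = (1 - A)⁻¹ * (1 + A)
  set X : Matrix (Fin d) (Fin d) ℝ := (1 - A)⁻¹ * (1 + A) with hX
  have h1AX : (1 - A) * X = 1 + A := by
    rw [hX, ← Matrix.mul_assoc, Matrix.mul_nonsing_inv _ hdet1A, Matrix.one_mul]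
  have hkey : (M + M) * X = L + L := by
    rw [← hM2, Matrix.mul_assoc, h1AX, Matrix.mul_add, Matrix.mul_one, hMLA]
    abel
  have hMX : M * X = L := by
    have h2 : (2 : ℝ) • (M * X) = (2 : ℝ) • L := by
      rw [two_smul, two_smul, ← Matrix.add_mul, hkey]
    exact smul_right_injective _ (two_ne_zero) h2
  have hMinvL : M⁻¹ * L = X := by
    rw [← hMX, ← Matrix.mul_assoc,
      Matrix.nonsing_inv_mul _ ((Matrix.isUnit_iff_isUnit_det _).mp hMunit),
      Matrix.one_mul]
  rw [hMinvL]
  intro μ hμ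
  set X' : Matrix (Fin d) (Fin d) ℂ := X.map (Complex.ofReal : ℝ → ℂ) with hX'
  have hmap1AX : ((1 : Matrix (Fin d) (Fin d) ℂ) - A') * X' = 1 + A' := by
    have : ((1 - A) * X).map (Complex.ofRealHom : ℝ →+* ℂ) =
        ((1 - A).map (Complex.ofRealHom : ℝ →+* ℂ)) * (X.map (Complex.ofRealHom : ℝ →+* ℂ)) :=
      Matrix.map_mul
    rw [h1AX] at this
    have e1 : ((1 : Matrix (Fin d) (Fin d) ℝ) + A).map (Complex.ofReal : ℝ → ℂ) = 1 + A' := by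
      ext i j
      simp [hA', Matrix.map_apply, Matrix.add_apply, Matrix.one_apply, apply_ite]
    calc ((1 : Matrix (Fin d) (Fin d) ℂ) - A') * X'
        = ((1 - A).map (Complex.ofReal : ℝ → ℂ)) * X' := by rw [hmap1A]
      _ = ((1 + A).map (Complex.ofReal : ℝ → ℂ)) := this.symm
      _ = 1 + A' := e1
  have hnonunit : ¬ IsUnit (μ • (1 : Matrix (Fin d) (Fin d) ℂ) - X') := by
    have := spectrum.mem_iff.mp hμ
    rwa [Algebra.algebraMap_eq_smul_one] at this
  have hfac : ((1 : Matrix (Fin d) (Fin d) ℂ) - A') * (μ • 1 - X')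
      = (μ - 1) • 1 - (μ + 1) • A' := by
    rw [Matrix.mul_sub, hmap1AX, Matrix.sub_mul, Matrix.one_mul]
    rw [Matrix.mul_smul, Matrix.mul_one]
    module
  have hnonunit2 : ¬ IsUnit ((μ - 1) • (1 : Matrix (Fin d) (Fin d) ℂ) - (μ + 1) • A') := by
    intro hu
    rw [← hfac] at hu
    exact hnonunit (aux_unit_mul hunit1A' hu)
  -- μ ≠ -1
  have hμ1 : μ + 1 ≠ 0 := by
    intro h0
    apply hnonunit2
    have hμm1 : μ - 1 = -2 := by linear_combination h0
    rw [h0, zero_smul, sub_zero, hμm1]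
    have : IsUnit ((-2 : ℂ)) := by norm_num
    have := this.map (algebraMap ℂ (Matrix (Fin d) (Fin d) ℂ))
    rwa [Algebra.algebraMap_eq_smul_one] at this
    
  set lam : ℂ := (μ - 1) / (μ + 1) with hlam
  have hlmem : lam ∈ spectrum ℂ A' := by
    rw [spectrum.mem_iff, Algebra.algebraMap_eq_smul_one]
    intro hu
    apply hnonunit2
    have hrw : (μ - 1) • (1 : Matrix (Fin d) (Fin d) ℂ) - (μ + 1) • A'
        = (μ + 1) • (lam • 1 - A') := by
      rw [smul_sub, smul_smul, hlam, mul_div_cancel₀ _ hμ1]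
    rw [hrw, Algebra.smul_def]
    exact ((isUnit_iff_ne_zero.mpr hμ1).map (algebraMap ℂ (Matrix (Fin d) (Fin d) ℂ))).mul hu
  obtain ⟨him, hlo, hhi⟩ := h lam hlmem
  set r : ℝ := lam.re with hr
  have hlreal : lam = (r : ℂ) := by
    apply Complex.ext
    · simp [hr]
    · simp [him]
  have h1l : (1 : ℂ) - lam ≠ 0 := by
    rw [hlreal]
    intro h0
    have : (1 : ℝ) - r = 0 := by exact_mod_cast h0
    linarith
  have hμeq : μ = (1 + lam) / (1 - lam) := by
    rw [eq_div_iff h1l]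
    have : lam * (μ + 1) = μ - 1 := by
      rw [hlam, div_mul_cancel₀ _ hμ1]
    linear_combination -this
  have hμreal : μ = (((1 + r) / (1 - r) : ℝ) : ℂ) := by
    rw [hμeq, hlreal]
    push_cast
    ring
  constructor
  · rw [hμreal]; exact Complex.ofReal_im _
  · rw [hμreal, Complex.ofReal_re]
    exact div_pos (by linarith) (by linarith)
end

section
/- Let M, L ∈ ℝ^{d×d} be symmetric matrices and suppose there exists a symmetric positive definite matrix P ∈ ℝ^{d×d} such that MPL + LPM is positive definite. Then M and L are congruent, i.e., there exists an invertible matrix T ∈ ℝ^{d×d} with TᵀMT = L. -/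
open Polynomial

lemma hensel_sqrt (q p₀ : Polynomial ℝ) (h1 : q ∣ p₀^2 - X) (hc : IsCoprime q p₀) :
    ∀ k : ℕ, 1 ≤ k → ∃ p : Polynomial ℝ, q^k ∣ p^2 - X ∧ IsCoprime q p := by
  intro k hk
  induction k with
  | zero => omega
  | succ k ih =>
    rcases Nat.eq_or_lt_of_le hk with h | h
    · exact ⟨p₀, by simpa [← h] using h1, hc⟩
    have hk1 : 1 ≤ k := by omega
    obtain ⟨p, hdvd, hcp⟩ := ih hk1
    have h2' : IsCoprime q (2 : Polynomial ℝ) :=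
      ⟨0, C (2⁻¹ : ℝ), by rw [zero_mul, zero_add, ← map_ofNat (C : ℝ →+* Polynomial ℝ) 2, ← C_mul]; norm_num⟩
    have h2 : IsCoprime q (2 * p) := h2'.mul_right hcp
    have h3 : IsCoprime (q^(k+1)) (2*p) := h2.pow_left
    obtain ⟨a, b, hab⟩ := h3
    refine ⟨p - (p^2 - X) * b, ?_, ?_⟩
    · have key : (p - (p^2 - X) * b)^2 - X
          = (p^2 - X) * (a * q^(k+1)) + b^2 * (p^2 - X)^2 := by
        linear_combination (X - p^2) * hab
      rw [key]
      refine dvd_add (dvd_mul_of_dvd_right (dvd_mul_left _ _) _) (dvd_mul_of_dvd_right ?_ _)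
      calc (q:Polynomial ℝ)^(k+1) ∣ q^(2*k) := pow_dvd_pow q (by omega)
      _ ∣ (p^2 - X)^2 := by rw [two_mul, pow_add, sq]; exact mul_dvd_mul hdvd hdvd
    · obtain ⟨w, hw⟩ : q ∣ (p^2 - X) := (dvd_pow_self q (by omega : k ≠ 0)).trans hdvd
      have : p - (p^2 - X) * b = p + q * (-(w*b)) := by rw [hw]; ring
      rw [this]
      exact hcp.add_mul_left_right _

lemma base_deg_one (q : Polynomial ℝ) (hq : Prime q) (hd : q.natDegree = 1)
    (hpos : ∀ μ : ℝ, q.IsRoot μ → 0 < μ) :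
    ∃ p₀ : Polynomial ℝ, q ∣ p₀^2 - X ∧ IsCoprime q p₀ := by
  have hq0 : q ≠ 0 := hq.ne_zero
  have ha : q.coeff 1 ≠ 0 := by
    rw [← hd]; exact Polynomial.leadingCoeff_ne_zero.2 hq0
  set a := q.coeff 1 with ha_def
  set b := q.coeff 0 with hb_def
  have hdeg : q.degree ≤ 1 := by
    rw [Polynomial.degree_eq_natDegree hq0, hd]; exact le_refl _
  have hqeq := Polynomial.eq_X_add_C_of_degree_le_one hdeg
  set lam : ℝ := -b / a with hlam
  have hroot : q.IsRoot lam := by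
    have hev : q.eval lam = a * lam + b := by
      conv_lhs => rw [hqeq]
      simp only [Polynomial.eval_add, Polynomial.eval_mul, Polynomial.eval_C, Polynomial.eval_X]
      rfl
    rw [Polynomial.IsRoot.def, hev, hlam]
    field_simp
    ring
  have hlampos : 0 < lam := hpos lam hroot
  have hXsub : (X - C lam) ∣ q := Polynomial.dvd_iff_isRoot.2 hroot
  obtain ⟨w, hw⟩ := hXsub
  have hwu : IsUnit w :=
    (hq.irreducible.isUnit_or_isUnit hw).resolve_left (Polynomial.not_isUnit_X_sub_C lam)
  have hassoc : Associated (X - C lam) q := ⟨hwu.unit, by rw [hw]; simp⟩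
  have hqdvd : q ∣ (X - C lam) := hassoc.symm.dvd
  refine ⟨C (Real.sqrt lam), ?_, ?_⟩
  · have : (C (Real.sqrt lam))^2 - X = -(X - C lam) := by
      rw [← Polynomial.C_pow, Real.sq_sqrt hlampos.le]; ring
    rw [this]
    exact hqdvd.neg_right
  · have hs : Real.sqrt lam ≠ 0 := (Real.sqrt_pos.2 hlampos).ne'
    exact ⟨0, C (Real.sqrt lam)⁻¹, by
      rw [zero_mul, zero_add, ← Polynomial.C_mul, inv_mul_cancel₀ hs, Polynomial.C_1]⟩

lemma base_deg_two (q : Polynomial ℝ) (hq : Prime q) (hd : q.natDegree = 2) :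
    ∃ p₀ : Polynomial ℝ, q ∣ p₀^2 - X ∧ IsCoprime q p₀ := by
  have hq0 : q ≠ 0 := hq.ne_zero
  have ha2 : q.coeff 2 ≠ 0 := by
    rw [← hd]; exact Polynomial.leadingCoeff_ne_zero.2 hq0
  -- q has no real roots
  have hnoroot : ∀ lam : ℝ, ¬ q.IsRoot lam := by
    intro lam hroot
    obtain ⟨w, hw⟩ := Polynomial.dvd_iff_isRoot.2 hroot
    have hwu : IsUnit w :=
      (hq.irreducible.isUnit_or_isUnit hw).resolve_left (Polynomial.not_isUnit_X_sub_C lam)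
    have hw0 : w ≠ 0 := hwu.ne_zero
    have : q.natDegree = 1 := by
      rw [hw, Polynomial.natDegree_mul (Polynomial.X_sub_C_ne_zero lam) hw0,
        Polynomial.natDegree_X_sub_C, Polynomial.natDegree_eq_zero_of_isUnit hwu]
    omega
  set c2 := q.coeff 2 with hc2_def
  set b := q.coeff 1 / c2 with hb_def
  set c := q.coeff 0 / c2 with hc_def
  have hqeq : q = C c2 * (X^2 + C b * X + C c) := by
    have h3 : q.natDegree < 3 := by omega
    have hsum := Polynomial.as_sum_range' q 3 h3
    have hb' : c2 * b = q.coeff 1 := by rw [hb_def]; field_simp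
    have hc' : c2 * c = q.coeff 0 := by rw [hc_def]; field_simp
    rw [hsum]
    simp only [Finset.sum_range_succ, Finset.sum_range_zero, zero_add,
      ← Polynomial.C_mul_X_pow_eq_monomial]
    rw [← hb', ← hc']
    simp only [Polynomial.C_mul]
    ring
  have heval : ∀ lam : ℝ, lam^2 + b*lam + c ≠ 0 := by
    intro lam hlam
    apply hnoroot lam
    rw [Polynomial.IsRoot, hqeq]
    simp only [Polynomial.eval_mul, Polynomial.eval_add, Polynomial.eval_pow,
      Polynomial.eval_C, Polynomial.eval_X]
    rw [hlam, mul_zero]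
  -- discriminant is negative
  have hdisc : b^2 - 4*c < 0 := by
    by_contra hD
    push_neg at hD
    have hD' : 0 ≤ b^2 - 4*c := by linarith
    apply heval ((-b + Real.sqrt (b^2 - 4*c))/2)
    have := Real.sq_sqrt hD'
    nlinarith [this]
  have hc_pos : 0 < c := by nlinarith
  have hsc := Real.sq_sqrt hc_pos.le
  have hsc_pos : 0 < Real.sqrt c := Real.sqrt_pos.2 hc_pos
  have hkey : 0 < 2 * Real.sqrt c - b := by nlinarith
  set t : ℝ := (Real.sqrt (2 * Real.sqrt c - b))⁻¹ with ht_def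
  have ht_pos : 0 < t := inv_pos.2 (Real.sqrt_pos.2 hkey)
  have ht2 : t^2 * (2 * Real.sqrt c - b) = 1 := by
    rw [ht_def, ← Real.sqrt_inv, Real.sq_sqrt (by positivity)]
    field_simp
  set s : ℝ := Real.sqrt c * t with hs_def
  have k1 : 2*s*t = t^2*b + 1 := by
    have : 2*s*t = t^2 * (2*Real.sqrt c) := by rw [hs_def]; ring
    rw [this]; linarith [ht2]
  have k2 : s^2 = t^2*c := by rw [hs_def]; nlinarith [hsc]
  have k1' : C s * C t * 2 = C t^2 * C b + 1 := by
    have := congrArg (C : ℝ →+* _) k1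
    simpa [Polynomial.C_mul, Polynomial.C_add, Polynomial.C_pow, map_ofNat, mul_comm,
      mul_assoc, mul_left_comm] using this
  have k2' : C s^2 = C t^2 * C c := by
    have := congrArg (C : ℝ →+* _) k2
    simpa [Polynomial.C_mul, Polynomial.C_pow] using this
  refine ⟨C s + C t * X, ?_, ?_⟩
  · have hident : (C s + C t * X)^2 - X = C (t^2) * (X^2 + C b * X + C c) := by
      rw [Polynomial.C_pow]
      linear_combination X * k1' + k2'
    have hCc2 : C (c2⁻¹ : ℝ) * C c2 = 1 := by
      rw [← Polynomial.C_mul, inv_mul_cancel₀ ha2, Polynomial.C_1]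
    have hfin : (C s + C t * X)^2 - X = (C (t^2) * C c2⁻¹) * q := by
      rw [hident, hqeq]
      linear_combination (-(C (t^2) * ((X:Polynomial ℝ)^2 + C b * X + C c))) * hCc2
    exact Dvd.intro_left _ hfin.symm
  · refine (hq.irreducible.coprime_iff_not_dvd).2 ?_
    intro hdvd
    have hdeg1 : (C s + C t * X).natDegree = 1 := by
      rw [add_comm, Polynomial.natDegree_linear ht_pos.ne']
    have hne : (C s + C t * X) ≠ 0 := fun h0 => by
      rw [h0, Polynomial.natDegree_zero] at hdeg1; omega
    have := Polynomial.natDegree_le_of_dvd hdvd hne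
    rw [hdeg1, hd] at this
    omega

lemma sqrt_mod_poly (m : Polynomial ℝ) (hm : ∀ μ : ℝ, m.IsRoot μ → 0 < μ) :
    ∃ p : Polynomial ℝ, m ∣ p^2 - X := by
  refine UniqueFactorizationMonoid.induction_on_coprime
    (P := fun m => (∀ μ : ℝ, m.IsRoot μ → 0 < μ) → ∃ p : Polynomial ℝ, m ∣ p^2 - X)
    m ?_ ?_ ?_ ?_ hm
  · intro hm'
    exact absurd (hm' 0 (by simp)) (by norm_num)
  · intro x hx _
    exact ⟨0, hx.dvd⟩
  · intro q i hq hm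
    rcases Nat.eq_zero_or_pos i with hi | hi
    · exact ⟨0, by rw [hi, pow_zero]; exact one_dvd _⟩
    have hroots : ∀ μ : ℝ, q.IsRoot μ → 0 < μ := by
      intro μ hμ
      exact hm μ (by
        rw [Polynomial.IsRoot.def, Polynomial.eval_pow, hμ, zero_pow (by omega : i ≠ 0)])
    have hdeg2 : q.natDegree ≤ 2 := hq.irreducible.natDegree_le_two
    have hdeg1 : 1 ≤ q.natDegree := by
      rcases Nat.eq_zero_or_pos q.natDegree with h0 | h0
      · exfalso
        exact hq.not_unit (Polynomial.isUnit_iff.2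
          ⟨q.coeff 0, isUnit_iff_ne_zero.2 (by
            intro hc
            apply hq.ne_zero
            exact Polynomial.eq_C_of_natDegree_eq_zero h0 ▸ (by rw [hc, Polynomial.C_0])),
          (Polynomial.eq_C_of_natDegree_eq_zero h0).symm⟩)
      · exact h0
    obtain ⟨p₀, hdvd, hcp⟩ :
        ∃ p₀ : Polynomial ℝ, q ∣ p₀^2 - X ∧ IsCoprime q p₀ := by
      interval_cases h : q.natDegree
      · exact base_deg_one q hq h hroots
      · exact base_deg_two q hq h
    obtain ⟨p, hp, -⟩ := hensel_sqrt q p₀ hdvd hcp i hi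
    exact ⟨p, hp⟩
  · intro x y hrel hx hy hm
    have hxr : ∀ μ : ℝ, x.IsRoot μ → 0 < μ := fun μ hμ =>
      hm μ (by rw [Polynomial.IsRoot.def, Polynomial.eval_mul, hμ, zero_mul])
    have hyr : ∀ μ : ℝ, y.IsRoot μ → 0 < μ := fun μ hμ =>
      hm μ (by rw [Polynomial.IsRoot.def, Polynomial.eval_mul, hμ, mul_zero])
    obtain ⟨px, hpx⟩ := hx hxr
    obtain ⟨py, hpy⟩ := hy hyr
    have hco : IsCoprime x y := hrel.isCoprime
    obtain ⟨u, v, hab⟩ := id hco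
    set p := px + (py - px) * u * x with hp_def
    refine ⟨p, hco.mul_dvd ?_ ?_⟩
    · have : p^2 - X = (px^2 - X) + x * (((py-px)*u) * (2*px + ((py-px)*u)*x)) := by
        rw [hp_def]; ring
      rw [this]
      exact dvd_add hpx (Dvd.intro _ rfl)
    · have hpy' : p = py + (-(py - px) * v) * y := by
        rw [hp_def]; linear_combination (py - px) * hab
      have : p^2 - X = (py^2 - X) + y * ((-(py-px)*v) * (2*py + (-(py-px)*v)*y)) := by
        rw [hpy']; ring
      rw [this]
      exact dvd_add hpy (Dvd.intro _ rfl)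

open Matrix

lemma my_charpoly_eval {n : ℕ} (A : Matrix (Fin n) (Fin n) ℝ) (lam : ℝ) :
    A.charpoly.eval lam = (lam • (1 : Matrix (Fin n) (Fin n) ℝ) - A).det := by
  rw [Matrix.charpoly, ← Polynomial.coe_evalRingHom, RingHom.map_det]
  congr 1
  ext i j
  by_cases h : i = j
  · subst h
    simp [Matrix.charmatrix_apply_eq, Matrix.one_apply]
  · simp [Matrix.charmatrix_apply_ne _ _ _ h, Matrix.one_apply, h]

lemma mul_aeval_comm {n : ℕ} (M A : Matrix (Fin n) (Fin n) ℝ) (hMA : M * A = Aᵀ * M)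
    (p : Polynomial ℝ) :
    M * (Polynomial.aeval A p) = (Polynomial.aeval A p)ᵀ * M := by
  have hpow : ∀ k : ℕ, M * A^k = (A^k)ᵀ * M := by
    intro k
    induction k with
    | zero => simp
    | succ k ih =>
      calc M * A^(k+1) = (M * A^k) * A := by rw [pow_succ, mul_assoc]
      _ = (A^k)ᵀ * (M * A) := by rw [ih, mul_assoc]
      _ = (A^k)ᵀ * (Aᵀ * M) := by rw [hMA]
      _ = (A^(k+1))ᵀ * M := by
        rw [pow_succ, Matrix.transpose_mul, Matrix.transpose_pow, ← mul_assoc, ← pow_succ,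
          ← pow_succ']
  induction p using Polynomial.induction_on' with
  | add p q hp hq => simp only [map_add, Matrix.transpose_add, mul_add, add_mul, hp, hq]
  | monomial k a =>
    rw [Polynomial.aeval_monomial, Algebra.algebraMap_eq_smul_one]
    rw [smul_mul_assoc, one_mul, mul_smul_comm, Matrix.transpose_smul, smul_mul_assoc, hpow]

lemma symm_dot {n : ℕ} (A : Matrix (Fin n) (Fin n) ℝ) (hA : A.IsSymm) (v z : Fin n → ℝ) :
    v ⬝ᵥ (A *ᵥ z) = (A *ᵥ v) ⬝ᵥ z := by
  rw [Matrix.dotProduct_mulVec, ← Matrix.mulVec_transpose, hA.eq]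

theorem stmt_7 {d : ℕ} (M L : Matrix (Fin d) (Fin d) ℝ)
    (hM : M.IsSymm) (hL : L.IsSymm)
    (h : ∃ P : Matrix (Fin d) (Fin d) ℝ, P.PosDef ∧ (M * P * L + L * P * M).PosDef) :
    ∃ T : Matrix (Fin d) (Fin d) ℝ, IsUnit T ∧ Tᵀ * M * T = L := by
  classical
  obtain ⟨P, hP, hS⟩ := h
  have hSform : ∀ v : Fin d → ℝ, v ≠ 0 →
      0 < v ⬝ᵥ ((M * P * L) *ᵥ v) + v ⬝ᵥ ((L * P * M) *ᵥ v) := by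
    intro v hv
    have := hS.dotProduct_mulVec_pos hv
    simpa [Matrix.add_mulVec, dotProduct_add] using this
  have hMdet : M.det ≠ 0 := by
    intro h0
    obtain ⟨v, hv0, hv⟩ := Matrix.exists_mulVec_eq_zero_iff.2 h0
    have h1 : v ⬝ᵥ ((M * P * L) *ᵥ v) = 0 := by
      rw [mul_assoc, ← Matrix.mulVec_mulVec, symm_dot M hM, hv, zero_dotProduct]
    have h2 : v ⬝ᵥ ((L * P * M) *ᵥ v) = 0 := by
      rw [← Matrix.mulVec_mulVec, hv, Matrix.mulVec_zero, dotProduct_zero]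
    have := hSform v hv0
    rw [h1, h2] at this
    norm_num at this
  have hLdet : L.det ≠ 0 := by
    intro h0
    obtain ⟨v, hv0, hv⟩ := Matrix.exists_mulVec_eq_zero_iff.2 h0
    have h1 : v ⬝ᵥ ((M * P * L) *ᵥ v) = 0 := by
      rw [← Matrix.mulVec_mulVec, hv, Matrix.mulVec_zero, dotProduct_zero]
    have h2 : v ⬝ᵥ ((L * P * M) *ᵥ v) = 0 := by
      rw [mul_assoc, ← Matrix.mulVec_mulVec, symm_dot L hL, hv, zero_dotProduct]
    have := hSform v hv0
    rw [h1, h2] at this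
    norm_num at this
  have hMunit : IsUnit M.det := isUnit_iff_ne_zero.2 hMdet
  obtain ⟨X, hX_def⟩ : ∃ X : Matrix (Fin d) (Fin d) ℝ, X = M⁻¹ * L := ⟨_, rfl⟩
  have hMX : M * X = L := by
    rw [hX_def]; exact Matrix.mul_nonsing_inv_cancel_left M L hMunit
  have hXdet : X.det ≠ 0 := by
    intro h0
    have : (M * X).det = L.det := by rw [hMX]
    rw [Matrix.det_mul, h0, mul_zero] at this
    exact hLdet this.symm
  have hroots : ∀ μ : ℝ, X.charpoly.IsRoot μ → 0 < μ := by
    intro μ hroot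
    by_contra hμ
    push_neg at hμ
    have hdet0 : (μ • (1 : Matrix (Fin d) (Fin d) ℝ) - X).det = 0 := by
      rw [← my_charpoly_eval]; exact hroot
    obtain ⟨v, hv0, hv⟩ := Matrix.exists_mulVec_eq_zero_iff.2 hdet0
    have hXv : X *ᵥ v = μ • v := by
      have h2 : (μ • (1 : Matrix (Fin d) (Fin d) ℝ)) *ᵥ v - X *ᵥ v = 0 := by
        rw [← Matrix.sub_mulVec]; exact hv
      have h3 := sub_eq_zero.1 h2
      rw [Matrix.smul_mulVec, Matrix.one_mulVec] at h3
      exact h3.symm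
    have hLv : L *ᵥ v = μ • (M *ᵥ v) := by
      rw [← hMX, ← Matrix.mulVec_mulVec, hXv, Matrix.mulVec_smul]
    have hw0 : M *ᵥ v ≠ 0 := by
      intro hw
      exact hMdet (Matrix.exists_mulVec_eq_zero_iff.1 ⟨v, hv0, hw⟩)
    have hPw : 0 < (M *ᵥ v) ⬝ᵥ (P *ᵥ (M *ᵥ v)) := by
      have := hP.dotProduct_mulVec_pos hw0
      simpa using this
    have h1 : v ⬝ᵥ ((M * P * L) *ᵥ v) = μ * ((M *ᵥ v) ⬝ᵥ (P *ᵥ (M *ᵥ v))) := by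
      rw [mul_assoc, ← Matrix.mulVec_mulVec, symm_dot M hM, ← Matrix.mulVec_mulVec, hLv,
        Matrix.mulVec_smul, dotProduct_smul, smul_eq_mul]
    have h2 : v ⬝ᵥ ((L * P * M) *ᵥ v) = μ * ((M *ᵥ v) ⬝ᵥ (P *ᵥ (M *ᵥ v))) := by
      rw [mul_assoc, ← Matrix.mulVec_mulVec, symm_dot L hL, hLv, ← Matrix.mulVec_mulVec,
        smul_dotProduct, smul_eq_mul]
    have := hSform v hv0
    rw [h1, h2] at this
    nlinarith [hPw]
  obtain ⟨p, r, hr⟩ : ∃ p r : Polynomial ℝ, p^2 - Polynomial.X = X.charpoly * r := by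
    obtain ⟨p, hp⟩ := sqrt_mod_poly X.charpoly hroots
    obtain ⟨r, hr⟩ := hp
    exact ⟨p, r, hr⟩
  refine ⟨Polynomial.aeval X p, ?_, ?_⟩
  all_goals {
    have hT2 : (Polynomial.aeval X p) * (Polynomial.aeval X p) = X := by
      rw [← _root_.map_mul, ← sq,
        show p^2 = Polynomial.X + X.charpoly * r by linear_combination hr,
        map_add, _root_.map_mul, Polynomial.aeval_X, Matrix.aeval_self_charpoly, zero_mul,
        add_zero]
    first
    | -- invertibility
      (rw [Matrix.isUnit_iff_isUnit_det, isUnit_iff_ne_zero]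
       intro hT0
       apply hXdet
       rw [← hT2, Matrix.det_mul, hT0, zero_mul])
    | -- congruence
      (have hcommX : M * X = Xᵀ * M := by
        have he : Xᵀ * M = (Mᵀ * X)ᵀ := by
          rw [Matrix.transpose_mul, Matrix.transpose_transpose]
        rw [hMX, he, hM.eq, hMX, hL.eq]
       have hMT : M * (Polynomial.aeval X p) = (Polynomial.aeval X p)ᵀ * M :=
        mul_aeval_comm M X hcommX p
       rw [← hMT, mul_assoc, hT2, hMX])
  }
end

section
/- Let M, L ∈ ℝ^{d×d} be symmetric with L − M positive semidefinite and M + L invertible. Let D be the Moore–Penrose pseudoinverse of L − M, let Π := I_d − D(L − M), let r > 0, and set P := (L + M)(D + rΠ)(L + M). Then for every f ∈ S(M,L), the map φ(z) := z − 2(M + L)⁻¹∇f(z) satisfies (φ(z₁) − φ(z₂))ᵀP(φ(z₁) − φ(z₂)) ≤ (z₁ − z₂)ᵀ(L − M)(z₁ − z₂) for all z₁, z₂ ∈ ℝ^d. -/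
open Matrix

/-- The class `S(M,L)` of continuously differentiable functions sandwiched between the
quadratics induced by `M` and `L`. -/
def SClass {ι : Type*} [Fintype ι] [DecidableEq ι]
    (M L : Matrix ι ι ℝ) (f : (ι → ℝ) → ℝ) : Prop :=
  ContDiff ℝ 1 f ∧ ∀ z₁ z₂ : ι → ℝ,
    (1/2) * ((z₂ - z₁) ⬝ᵥ M.mulVec (z₂ - z₁)) ≤ f z₂ - f z₁ - grad f z₁ ⬝ᵥ (z₂ - z₁) ∧
    f z₂ - f z₁ - grad f z₁ ⬝ᵥ (z₂ - z₁) ≤ (1/2) * ((z₂ - z₁) ⬝ᵥ L.mulVec (z₂ - z₁))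

lemma dotmv {d : ℕ} (A : Matrix (Fin d) (Fin d) ℝ) (x y : Fin d → ℝ) :
    x ⬝ᵥ A *ᵥ y = (Aᵀ *ᵥ x) ⬝ᵥ y := by
  rw [Matrix.dotProduct_mulVec, ← Matrix.mulVec_transpose]

lemma dd {d : ℕ} (A B : Matrix (Fin d) (Fin d) ℝ) (x y : Fin d → ℝ) :
    (B *ᵥ x) ⬝ᵥ (A *ᵥ y) = x ⬝ᵥ (Bᵀ * A) *ᵥ y := by
  rw [Matrix.dotProduct_mulVec, Matrix.vecMul_mulVec, Matrix.dotProduct_mulVec]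

lemma MP_unique {d : ℕ} {Q D₁ D₂ : Matrix (Fin d) (Fin d) ℝ}
    (h₁ : IsMoorePenrose Q D₁) (h₂ : IsMoorePenrose Q D₂) : D₁ = D₂ := by
  obtain ⟨a1, b1, c1, e1⟩ := h₁
  obtain ⟨a2, b2, c2, e2⟩ := h₂
  have hQD : Q * D₁ = Q * D₂ := by
    calc Q * D₁ = (Q * D₂ * Q) * D₁ := by rw [a2]
    _ = (Q * D₂) * (Q * D₁) := by rw [Matrix.mul_assoc (Q * D₂)]
    _ = (Q * D₂)ᵀ * (Q * D₁)ᵀ := by rw [c1, c2]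
    _ = (Q * D₁ * (Q * D₂))ᵀ := by simp only [Matrix.transpose_mul, Matrix.mul_assoc]
    _ = ((Q * D₁ * Q) * D₂)ᵀ := by rw [Matrix.mul_assoc (Q * D₁)]
    _ = (Q * D₂)ᵀ := by rw [a1]
    _ = Q * D₂ := c2
  have hDQ : D₁ * Q = D₂ * Q := by
    calc D₁ * Q = D₁ * (Q * D₂ * Q) := by rw [a2]
    _ = (D₁ * Q) * (D₂ * Q) := by simp only [Matrix.mul_assoc]
    _ = (D₁ * Q)ᵀ * (D₂ * Q)ᵀ := by rw [e1, e2]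
    _ = (D₂ * Q * (D₁ * Q))ᵀ := by simp only [Matrix.transpose_mul, Matrix.mul_assoc]
    _ = (D₂ * (Q * D₁ * Q))ᵀ := by simp only [Matrix.mul_assoc]
    _ = (D₂ * Q)ᵀ := by rw [a1]
    _ = D₂ * Q := e2
  calc D₁ = D₁ * Q * D₁ := b1.symm
  _ = D₁ * (Q * D₂) := by rw [Matrix.mul_assoc, hQD]
  _ = (D₂ * Q) * D₂ := by rw [← Matrix.mul_assoc, hDQ]
  _ = D₂ := b2

lemma MP_symm {d : ℕ} {Q D : Matrix (Fin d) (Fin d) ℝ}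
    (hQ : Qᵀ = Q) (h : IsMoorePenrose Q D) : Dᵀ = D := by
  obtain ⟨a, b, c, e⟩ := h
  refine MP_unique ⟨?_, ?_, ?_, ?_⟩ ⟨a, b, c, e⟩
  · calc Q * Dᵀ * Q = Qᵀ * Dᵀ * Qᵀ := by rw [hQ]
    _ = (Q * (D * Q))ᵀ := by rw [Matrix.transpose_mul, Matrix.transpose_mul]
    _ = (Q * D * Q)ᵀ := by rw [Matrix.mul_assoc]
    _ = Q := by rw [a, hQ]
  · calc Dᵀ * Q * Dᵀ = Dᵀ * Qᵀ * Dᵀ := by rw [hQ]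
    _ = (D * (Q * D))ᵀ := by rw [Matrix.transpose_mul, Matrix.transpose_mul]
    _ = (D * Q * D)ᵀ := by rw [Matrix.mul_assoc]
    _ = Dᵀ := by rw [b]
  · have h1 : Q * Dᵀ = D * Q := by
      calc Q * Dᵀ = Qᵀ * Dᵀ := by rw [hQ]
      _ = (D * Q)ᵀ := by rw [Matrix.transpose_mul]
      _ = D * Q := e
    rw [h1, e]
  · have h1 : Dᵀ * Q = Q * D := by
      calc Dᵀ * Q = Dᵀ * Qᵀ := by rw [hQ]
      _ = (Q * D)ᵀ := by rw [Matrix.transpose_mul]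
      _ = Q * D := c
    rw [h1, c]

theorem stmt_8 {d : ℕ} (M L D : Matrix (Fin d) (Fin d) ℝ)
    (hM : M.IsSymm) (hL : L.IsSymm) (hLM : (L - M).PosSemidef)
    (hMLinv : IsUnit (M + L)) (hD : IsMoorePenrose (L - M) D)
    (Pi0 : Matrix (Fin d) (Fin d) ℝ) (hPi0 : Pi0 = 1 - D * (L - M))
    (r : ℝ) (hr : 0 < r)
    (P : Matrix (Fin d) (Fin d) ℝ) (hP : P = (L + M) * (D + r • Pi0) * (L + M))
    (f : (Fin d → ℝ) → ℝ) (hf : SClass M L f)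
    (φ : (Fin d → ℝ) → (Fin d → ℝ))
    (hφ : ∀ z, φ z = z - (2 : ℝ) • (M + L)⁻¹.mulVec (grad f z)) :
    ∀ z₁ z₂ : Fin d → ℝ,
      (φ z₁ - φ z₂) ⬝ᵥ P.mulVec (φ z₁ - φ z₂)
        ≤ (z₁ - z₂) ⬝ᵥ (L - M).mulVec (z₁ - z₂) := by
  have hMt : Mᵀ = M := hM
  have hLt : Lᵀ = L := hL
  have hQt : (L - M)ᵀ = L - M := by rw [Matrix.transpose_sub, hMt, hLt]
  have hDt : Dᵀ = D := MP_symm hQt hD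
  have hsM : ∀ x y : Fin d → ℝ, x ⬝ᵥ M *ᵥ y = y ⬝ᵥ M *ᵥ x := by
    intro x y; rw [dotmv, hMt, dotProduct_comm]
  have hsL : ∀ x y : Fin d → ℝ, x ⬝ᵥ L *ᵥ y = y ⬝ᵥ L *ᵥ x := by
    intro x y; rw [dotmv, hLt, dotProduct_comm]
  have hcomm : D * (L - M) = (L - M) * D := by
    conv_lhs => rw [← hD.2.2.2]
    rw [Matrix.transpose_mul, hDt, hQt]
  have hkq1 : (L - M) * Pi0 = 0 := by
    rw [hPi0, Matrix.mul_sub, Matrix.mul_one, ← Matrix.mul_assoc, hD.1, sub_self]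
  have hkq2 : Pi0 * (L - M) = 0 := by
    rw [hPi0, Matrix.sub_mul, Matrix.one_mul, Matrix.mul_assoc, ← Matrix.mul_assoc, hcomm,
      hD.1, sub_self]
  have hPisym : Pi0ᵀ = Pi0 := by
    rw [hPi0, Matrix.transpose_sub, Matrix.transpose_one, hD.2.2.2]
  have hPi2 : Pi0 * Pi0 = Pi0 := by
    nth_rewrite 1 [hPi0]
    rw [Matrix.sub_mul, Matrix.one_mul, Matrix.mul_assoc, hkq1, Matrix.mul_zero, sub_zero]
  -- the key inequality from interpolation
  have hkey : ∀ a b : Fin d → ℝ,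
      f b - f a + grad f b ⬝ᵥ (a - b) + (1/2) * ((a - b) ⬝ᵥ M *ᵥ (a - b)) ≤
        -(1/2) * ((grad f a - grad f b - M *ᵥ (a - b)) ⬝ᵥ D *ᵥ
          (grad f a - grad f b - M *ᵥ (a - b))) := by
    intro a b
    set sab := grad f a - grad f b - M *ᵥ (a - b) with hsab
    set t := D *ᵥ sab with ht
    have h1 := (hf.2 a (a - t)).2
    have h2 := (hf.2 b (a - t)).1
    have e1 : a - t - a = -t := by abel
    have e2 : a - t - b = (a - b) - t := by abel
    rw [e1] at h1
    rw [e2] at h2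
    have i1 : (-t) ⬝ᵥ L *ᵥ (-t) = t ⬝ᵥ M *ᵥ t + sab ⬝ᵥ D *ᵥ sab := by
      have hL' : L = M + (L - M) := by abel
      have step : t ⬝ᵥ (L - M) *ᵥ t = sab ⬝ᵥ D *ᵥ sab := by
        rw [ht, Matrix.mulVec_mulVec, dd, hDt, ← Matrix.mul_assoc, hD.2.1]
      calc (-t) ⬝ᵥ L *ᵥ (-t) = t ⬝ᵥ L *ᵥ t := by
            rw [Matrix.mulVec_neg, dotProduct_neg, neg_dotProduct, neg_neg]
      _ = t ⬝ᵥ M *ᵥ t + t ⬝ᵥ (L - M) *ᵥ t := by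
            conv_lhs => rw [hL']
            rw [Matrix.add_mulVec, dotProduct_add]
      _ = t ⬝ᵥ M *ᵥ t + sab ⬝ᵥ D *ᵥ sab := by rw [step]
    have quad : ∀ x y : Fin d → ℝ, (x - y) ⬝ᵥ M *ᵥ (x - y) =
        x ⬝ᵥ M *ᵥ x - 2 * (x ⬝ᵥ M *ᵥ y) + y ⬝ᵥ M *ᵥ y := by
      intro x y
      rw [Matrix.mulVec_sub, dotProduct_sub, sub_dotProduct, sub_dotProduct, hsM y x]
      ring
    have i2 : ((a - b) - t) ⬝ᵥ M *ᵥ ((a - b) - t) =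
        (a - b) ⬝ᵥ M *ᵥ (a - b) - 2 * ((a - b) ⬝ᵥ M *ᵥ t) + t ⬝ᵥ M *ᵥ t := quad (a - b) t
    have i3 : grad f b ⬝ᵥ ((a - b) - t) = grad f b ⬝ᵥ (a - b) - grad f b ⬝ᵥ t :=
      dotProduct_sub _ _ _
    have i4 : grad f a ⬝ᵥ (-t) = -(grad f a ⬝ᵥ t) := dotProduct_neg _ _
    have i5 : sab ⬝ᵥ t = grad f a ⬝ᵥ t - grad f b ⬝ᵥ t - (a - b) ⬝ᵥ M *ᵥ t := by
      rw [hsab, sub_dotProduct, sub_dotProduct, dotProduct_comm (M *ᵥ (a - b)) t,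
        hsM t (a - b)]
    have i6 : sab ⬝ᵥ t = sab ⬝ᵥ D *ᵥ sab := by rw [ht]
    linarith
  intro z₁ z₂
  set s := grad f z₁ - grad f z₂ - M *ᵥ (z₁ - z₂) with hs
  -- kernel orthogonality
  have hker : ∀ v : Fin d → ℝ, (L - M) *ᵥ v = 0 → s ⬝ᵥ v = 0 := by
    intro v hv
    have k1 : ∀ z : Fin d → ℝ, ∀ t : ℝ,
        f (z + t • v) = f z + t * (grad f z ⬝ᵥ v) + t ^ 2 * ((1/2) * (v ⬝ᵥ M *ᵥ v)) := by
      intro z t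
      have hl := (hf.2 z (z + t • v)).1
      have hu' := (hf.2 z (z + t • v)).2
      have e : z + t • v - z = t • v := by abel
      rw [e] at hl hu'
      have eQ : (L - M) *ᵥ (t • v) = 0 := by rw [Matrix.mulVec_smul, hv, smul_zero]
      have eL : (t • v) ⬝ᵥ L *ᵥ (t • v) = (t • v) ⬝ᵥ M *ᵥ (t • v) := by
        have hL0 : M + (L - M) = L := by abel
        have hL' : L *ᵥ (t • v) = M *ᵥ (t • v) + (L - M) *ᵥ (t • v) := by
          rw [← Matrix.add_mulVec, hL0]
        rw [hL', eQ, add_zero]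
      have eM : (t • v) ⬝ᵥ M *ᵥ (t • v) = t ^ 2 * (v ⬝ᵥ M *ᵥ v) := by
        rw [Matrix.mulVec_smul, dotProduct_smul, smul_dotProduct, smul_eq_mul, smul_eq_mul]
        ring
      have eg : grad f z ⬝ᵥ (t • v) = t * (grad f z ⬝ᵥ v) := by
        rw [dotProduct_smul, smul_eq_mul]
      rw [eL, eM] at hu'
      rw [eg] at hl hu'
      rw [eM] at hl
      linarith
    set c := grad f z₂ ⬝ᵥ v - grad f z₁ ⬝ᵥ v - (z₂ - z₁) ⬝ᵥ M *ᵥ v with hc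
    have k2 : ∀ t : ℝ, t * c ≤
        (1/2) * ((z₂ - z₁) ⬝ᵥ L *ᵥ (z₂ - z₁)) - (f z₂ - f z₁ - grad f z₁ ⬝ᵥ (z₂ - z₁)) := by
      intro t
      have h := (hf.2 z₁ (z₂ + t • v)).2
      have e : z₂ + t • v - z₁ = (z₂ - z₁) + t • v := by abel
      rw [e, k1 z₂ t] at h
      have eQv : (L - M) *ᵥ v = 0 := hv
      have eLv : ∀ x : Fin d → ℝ, x ⬝ᵥ L *ᵥ v = x ⬝ᵥ M *ᵥ v := by
        intro x
        have hL0 : M + (L - M) = L := by abel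
        have : L *ᵥ v = M *ᵥ v + (L - M) *ᵥ v := by
          rw [← Matrix.add_mulVec, hL0]
        rw [this, eQv, add_zero]
      have eL : ((z₂ - z₁) + t • v) ⬝ᵥ L *ᵥ ((z₂ - z₁) + t • v) =
          (z₂ - z₁) ⬝ᵥ L *ᵥ (z₂ - z₁) + 2 * (t * ((z₂ - z₁) ⬝ᵥ M *ᵥ v))
            + t ^ 2 * (v ⬝ᵥ M *ᵥ v) := by
        simp only [Matrix.mulVec_add, dotProduct_add, add_dotProduct, Matrix.mulVec_smul,
          dotProduct_smul, smul_dotProduct, smul_eq_mul]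
        rw [hsL v (z₂ - z₁), eLv (z₂ - z₁), eLv v]
        ring
      have eg : grad f z₁ ⬝ᵥ ((z₂ - z₁) + t • v) =
          grad f z₁ ⬝ᵥ (z₂ - z₁) + t * (grad f z₁ ⬝ᵥ v) := by
        rw [dotProduct_add, dotProduct_smul, smul_eq_mul]
      rw [eL, eg] at h
      have hring : t * c = t * (grad f z₂ ⬝ᵥ v) - t * (grad f z₁ ⬝ᵥ v)
          - t * ((z₂ - z₁) ⬝ᵥ M *ᵥ v) := by
        rw [hc]; ring
      linarith [h, hring]
    have hc0 : c = 0 := by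
      by_contra hne
      have h1 := k2 (((1/2) * ((z₂ - z₁) ⬝ᵥ L *ᵥ (z₂ - z₁)) -
        (f z₂ - f z₁ - grad f z₁ ⬝ᵥ (z₂ - z₁)) + 1) / c)
      rw [div_mul_cancel₀ _ hne] at h1
      linarith
    have hsv : s ⬝ᵥ v = -c := by
      rw [hs, hc, sub_dotProduct, sub_dotProduct]
      have e1 : (M *ᵥ (z₁ - z₂)) ⬝ᵥ v = (z₁ - z₂) ⬝ᵥ M *ᵥ v := by
        rw [dotProduct_comm, hsM v (z₁ - z₂)]
      have e2 : (z₁ - z₂) ⬝ᵥ M *ᵥ v = -((z₂ - z₁) ⬝ᵥ M *ᵥ v) := by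
        have e0 : z₁ - z₂ = -(z₂ - z₁) := by abel
        rw [e0, neg_dotProduct]
      rw [e1, e2]; ring
    rw [hsv, hc0, neg_zero]
  -- Pi0 annihilates s
  have hPis : Pi0 *ᵥ s = 0 := by
    have h0 : (L - M) *ᵥ (Pi0 *ᵥ s) = 0 := by
      rw [Matrix.mulVec_mulVec, hkq1, Matrix.zero_mulVec]
    have h1 : s ⬝ᵥ (Pi0 *ᵥ s) = 0 := hker _ h0
    have h2 : (Pi0 *ᵥ s) ⬝ᵥ (Pi0 *ᵥ s) = s ⬝ᵥ (Pi0 *ᵥ s) := by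
      rw [dd, hPisym, hPi2]
    exact dotProduct_self_eq_zero.mp (by rw [h2, h1])
  have hDQs : (D * (L - M)) *ᵥ s = s := by
    have h0 : Pi0 *ᵥ s = s - (D * (L - M)) *ᵥ s := by
      rw [hPi0, Matrix.sub_mulVec, Matrix.one_mulVec]
    rw [h0] at hPis
    have := sub_eq_zero.mp hPis
    exact this.symm
  -- coercivity
  have coerc : s ⬝ᵥ D *ᵥ s ≤ (z₁ - z₂) ⬝ᵥ s := by
    have h1 := hkey z₁ z₂
    have h2 := hkey z₂ z₁
    rw [← hs] at h1
    rw [show z₂ - z₁ = -(z₁ - z₂) from (neg_sub z₁ z₂).symm] at h2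
    have e2 : grad f z₂ - grad f z₁ - M *ᵥ (-(z₁ - z₂)) = -s := by
      rw [hs, Matrix.mulVec_neg]; abel
    rw [e2] at h2
    have e3 : (-s) ⬝ᵥ D *ᵥ (-s) = s ⬝ᵥ D *ᵥ s := by
      rw [Matrix.mulVec_neg, dotProduct_neg, neg_dotProduct, neg_neg]
    have e4 : (-(z₁ - z₂)) ⬝ᵥ M *ᵥ (-(z₁ - z₂)) = (z₁ - z₂) ⬝ᵥ M *ᵥ (z₁ - z₂) := by
      rw [Matrix.mulVec_neg, dotProduct_neg, neg_dotProduct, neg_neg]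
    have e5 : grad f z₁ ⬝ᵥ (-(z₁ - z₂)) = -(grad f z₁ ⬝ᵥ (z₁ - z₂)) := dotProduct_neg _ _
    rw [e3, e4, e5] at h2
    have hid : (z₁ - z₂) ⬝ᵥ s = (z₁ - z₂) ⬝ᵥ grad f z₁ - (z₁ - z₂) ⬝ᵥ grad f z₂
        - (z₁ - z₂) ⬝ᵥ M *ᵥ (z₁ - z₂) := by
      rw [hs, dotProduct_sub, dotProduct_sub]
    have c1 : (z₁ - z₂) ⬝ᵥ grad f z₁ = grad f z₁ ⬝ᵥ (z₁ - z₂) := dotProduct_comm _ _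
    have c2 : (z₁ - z₂) ⬝ᵥ grad f z₂ = grad f z₂ ⬝ᵥ (z₁ - z₂) := dotProduct_comm _ _
    linarith
  -- identify the transformed vector
  have hdet : (M + L) * (M + L)⁻¹ = 1 :=
    Matrix.mul_nonsing_inv _ ((Matrix.isUnit_iff_isUnit_det _).mp hMLinv)
  have hgv : φ z₁ - φ z₂ = (z₁ - z₂) - (2 : ℝ) • ((M + L)⁻¹ *ᵥ (grad f z₁ - grad f z₂)) := by
    rw [hφ z₁, hφ z₂, Matrix.mulVec_sub]
    module
  have hw : (M + L) *ᵥ (φ z₁ - φ z₂) = (L - M) *ᵥ (z₁ - z₂) - (2 : ℝ) • s := by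
    rw [hgv, Matrix.mulVec_sub, Matrix.mulVec_smul, Matrix.mulVec_mulVec, hdet,
      Matrix.one_mulVec]
    have e : (M + L) *ᵥ (z₁ - z₂) = (L - M) *ᵥ (z₁ - z₂) + (2 : ℝ) • (M *ᵥ (z₁ - z₂)) := by
      rw [Matrix.add_mulVec, Matrix.sub_mulVec]
      module
    rw [e, hs]
    module
  set w := (L - M) *ᵥ (z₁ - z₂) - (2 : ℝ) • s with hwdef
  have hLHS : (φ z₁ - φ z₂) ⬝ᵥ P *ᵥ (φ z₁ - φ z₂) = w ⬝ᵥ (D + r • Pi0) *ᵥ w := by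
    rw [hP]
    have hMLt : (L + M)ᵀ = L + M := by rw [Matrix.transpose_add, hMt, hLt]
    have hML : L + M = M + L := by abel
    rw [← Matrix.mulVec_mulVec, ← Matrix.mulVec_mulVec, dotmv, hMLt, hML, hw]
  have hPw : Pi0 *ᵥ w = 0 := by
    rw [hwdef, Matrix.mulVec_sub, Matrix.mulVec_smul, Matrix.mulVec_mulVec, hkq2,
      Matrix.zero_mulVec, hPis, smul_zero, sub_zero]
  have hsplit : w ⬝ᵥ (D + r • Pi0) *ᵥ w = w ⬝ᵥ D *ᵥ w + r * (w ⬝ᵥ (Pi0 *ᵥ w)) := by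
    rw [Matrix.add_mulVec, dotProduct_add, Matrix.smul_mulVec, dotProduct_smul,
      smul_eq_mul]
  -- expand w ⬝ D w
  have p1 : ((L - M) *ᵥ (z₁ - z₂)) ⬝ᵥ (D *ᵥ ((L - M) *ᵥ (z₁ - z₂))) =
      (z₁ - z₂) ⬝ᵥ (L - M) *ᵥ (z₁ - z₂) := by
    rw [Matrix.mulVec_mulVec, dd, hQt, ← Matrix.mul_assoc, hD.1]
  have p2 : ((L - M) *ᵥ (z₁ - z₂)) ⬝ᵥ (D *ᵥ s) = (z₁ - z₂) ⬝ᵥ s := by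
    rw [dd, hQt, ← hcomm, hDQs]
  have p3 : s ⬝ᵥ (D *ᵥ ((L - M) *ᵥ (z₁ - z₂))) = (z₁ - z₂) ⬝ᵥ s := by
    rw [Matrix.mulVec_mulVec, dotmv, hD.2.2.2, hDQs, dotProduct_comm]
  have hexp0 : ∀ q t' : Fin d → ℝ, (q - (2 : ℝ) • t') ⬝ᵥ D *ᵥ (q - (2 : ℝ) • t') =
      q ⬝ᵥ D *ᵥ q - 2 * (q ⬝ᵥ D *ᵥ t') - 2 * (t' ⬝ᵥ D *ᵥ q) + 4 * (t' ⬝ᵥ D *ᵥ t') := by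
    intro q t'
    simp only [Matrix.mulVec_sub, Matrix.mulVec_smul, sub_dotProduct, dotProduct_sub,
      smul_dotProduct, dotProduct_smul, smul_eq_mul]
    ring
  have hexp : w ⬝ᵥ D *ᵥ w = (z₁ - z₂) ⬝ᵥ (L - M) *ᵥ (z₁ - z₂) - 2 * ((z₁ - z₂) ⬝ᵥ s)
      - 2 * ((z₁ - z₂) ⬝ᵥ s) + 4 * (s ⬝ᵥ D *ᵥ s) := by
    rw [hwdef, hexp0, p1, p2, p3]
  rw [hLHS, hsplit, hPw, dotProduct_zero, mul_zero, add_zero, hexp]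
  linarith
end

section
/- Let M, L ∈ ℝ^{d×d} be symmetric invertible matrices with L − M positive semidefinite such that M and L are congruent and M + L is invertible. Let D be the Moore–Penrose pseudoinverse of L − M and Π := I_d − D(L − M). Then for every ρ ∈ ℝ with ρ > max{|λ| : λ a complex eigenvalue of (M + L)⁻¹(L − M)}, there exists r₀ > 0 such that for all real r ≥ r₀ the matrix ρ²(L + M)(D + rΠ)(L + M) − (L − M) is positive definite. -/
open Matrix

section AuxLemmas
variable {d : ℕ}



lemma herm_of_tr {A : Matrix (Fin d) (Fin d) ℝ} (h : Aᵀ = A) : A.IsHermitian := by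
  ext i j
  simp only [conjTranspose_apply, star_trivial]
  exact congrFun (congrFun h i) j

lemma tr_of_herm {A : Matrix (Fin d) (Fin d) ℝ} (h : A.IsHermitian) : Aᵀ = A := by
  ext i j
  simpa using congrFun (congrFun h.eq i) j

lemma eq_zero_of_idem_trace {B : Matrix (Fin d) (Fin d) ℝ} (hB : Bᵀ = B)
    (hBB : B * B = B) (htr : B.trace = 0) : B = 0 := by
  have key : ∀ i, B i i = ∑ j, (B i j)^2 := by
    intro i
    have h2 : (B * B) i i = B i i := congrFun (congrFun hBB i) i
    rw [Matrix.mul_apply] at h2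
    rw [← h2]
    refine Finset.sum_congr rfl fun j _ => ?_
    have hji : B j i = B i j := congrFun (congrFun hB i) j
    rw [hji]; ring
  have h1 : ∑ i, ∑ j, (B i j)^2 = 0 := by
    rw [show (0:ℝ) = B.trace from htr.symm, Matrix.trace]
    exact (Finset.sum_congr rfl fun i _ => (key i).symm)
  have h2 := (Finset.sum_eq_zero_iff_of_nonneg (fun i _ =>
    Finset.sum_nonneg fun j _ => sq_nonneg (B i j))).mp h1
  ext i j
  have h3 := (Finset.sum_eq_zero_iff_of_nonneg (fun j _ => sq_nonneg (B i j))).mp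
    (h2 i (Finset.mem_univ i)) j (Finset.mem_univ j)
  simpa using pow_eq_zero_iff (n := 2) (by norm_num) |>.mp h3


lemma quad_le_entrysum (N : Matrix (Fin d) (Fin d) ℝ) (x : Fin d → ℝ) :
    x ⬝ᵥ (N *ᵥ x) ≤ (∑ i, ∑ j, |N i j|) * (x ⬝ᵥ x) := by
  have hsq : ∀ i, x i * x i ≤ x ⬝ᵥ x := fun i =>
    Finset.single_le_sum (fun k _ => mul_self_nonneg (x k)) (Finset.mem_univ i)
  have expand : x ⬝ᵥ (N *ᵥ x) = ∑ i, ∑ j, x i * (N i j * x j) := by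
    simp [dotProduct, mulVec, Finset.mul_sum]
  rw [expand, Finset.sum_mul]
  refine Finset.sum_le_sum fun i _ => ?_
  rw [Finset.sum_mul]
  refine Finset.sum_le_sum fun j _ => ?_
  have h1 : |x i| * |x j| ≤ x ⬝ᵥ x := by
    nlinarith [hsq i, hsq j, abs_nonneg (x i), abs_nonneg (x j), sq_abs (x i), sq_abs (x j),
      sq_nonneg (|x i| - |x j|)]
  calc x i * (N i j * x j) ≤ |x i * (N i j * x j)| := le_abs_self _
    _ = |N i j| * (|x i| * |x j|) := by rw [abs_mul, abs_mul]; ring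
    _ ≤ |N i j| * (x ⬝ᵥ x) := by
        exact mul_le_mul_of_nonneg_left h1 (abs_nonneg _)

lemma psd_smul_one {t : ℝ} (ht : 0 ≤ t) : PosSemidef (t • (1 : Matrix (Fin d) (Fin d) ℝ)) := by
  rw [smul_one_eq_diagonal]
  exact PosSemidef.diagonal fun _ => ht

lemma posSemidef_entrysum_smul_sub {N : Matrix (Fin d) (Fin d) ℝ} (hN : N.IsHermitian) :
    PosSemidef ((∑ i, ∑ j, |N i j|) • 1 - N) := by
  refine PosSemidef.of_dotProduct_mulVec_nonneg ?_ ?_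
  · show _ᴴ = _
    simp only [conjTranspose_sub, conjTranspose_smul, conjTranspose_one, star_trivial, hN.eq]
  · intro x
    have := quad_le_entrysum N x
    simp only [star_trivial, sub_mulVec, smul_mulVec, one_mulVec, dotProduct_sub,
      dotProduct_smul, smul_eq_mul]
    linarith


lemma mem_spectrum_complex {A : Matrix (Fin d) (Fin d) ℝ} {μ : ℝ} (h : μ ∈ spectrum ℝ A) :
    (μ : ℂ) ∈ spectrum ℂ (A.map Complex.ofReal) := by
  rw [spectrum.mem_iff] at h ⊢
  rw [Matrix.isUnit_iff_isUnit_det, isUnit_iff_ne_zero, not_not] at h ⊢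
  have hmap : (algebraMap ℝ (Matrix (Fin d) (Fin d) ℝ) μ - A).map Complex.ofReal
      = algebraMap ℂ (Matrix (Fin d) (Fin d) ℂ) (μ:ℂ) - A.map Complex.ofReal := by
    ext i j
    by_cases hij : i = j <;>
      simp [Matrix.map_apply, Matrix.algebraMap_eq_diagonal, Matrix.diagonal_apply, hij,
        Pi.algebraMap_apply, Algebra.algebraMap_self_apply]
  rw [← hmap]
  rw [show ((algebraMap ℝ (Matrix (Fin d) (Fin d) ℝ) μ - A).map Complex.ofReal)
      = Complex.ofRealHom.mapMatrix (algebraMap ℝ (Matrix (Fin d) (Fin d) ℝ) μ - A) from rfl,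
    ← RingHom.map_det Complex.ofRealHom]
  norm_num [h]

lemma nonzero_spec_swap {a b : Matrix (Fin d) (Fin d) ℝ} {μ : ℝ} (hμ : μ ≠ 0)
    (h : μ ∈ spectrum ℝ (a * b)) : μ ∈ spectrum ℝ (b * a) := by
  have := spectrum.nonzero_mul_comm (𝕜 := ℝ) a b
  have h2 : μ ∈ spectrum ℝ (a*b) \ {0} := ⟨h, by simpa using hμ⟩
  rw [this] at h2
  exact h2.1


lemma posSemidef_sq_eig {G : Matrix (Fin d) (Fin d) ℝ} (hG : G.IsHermitian) {m : ℝ}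
    (hm : ∀ i, |hG.eigenvalues i| ≤ m) : PosSemidef (m^2 • 1 - G * G) := by
  set V : Matrix (Fin d) (Fin d) ℝ := (hG.eigenvectorUnitary : Matrix (Fin d) (Fin d) ℝ) with hV
  have hVmem := hG.eigenvectorUnitary.2
  have hVV : V * star V = 1 := (Matrix.mem_unitaryGroup_iff).mp hVmem
  have hVV' : star V * V = 1 := (Matrix.mem_unitaryGroup_iff').mp hVmem
  set Λ : Matrix (Fin d) (Fin d) ℝ := diagonal (RCLike.ofReal ∘ hG.eigenvalues) with hΛ
  have hspec : G = V * Λ * star V := hG.spectral_theorem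
  have key : m^2 • 1 - G * G = V * (m^2 • 1 - Λ * Λ) * star V := by
    have h1 : G * G = V * (Λ * Λ) * star V := by
      rw [hspec]
      calc V * Λ * star V * (V * Λ * star V) = V * Λ * (star V * V) * Λ * star V := by
            noncomm_ring
        _ = V * (Λ * Λ) * star V := by rw [hVV']; noncomm_ring
    have h2 : (m^2 : ℝ) • (1 : Matrix (Fin d) (Fin d) ℝ) = V * (m^2 • 1) * star V := by
      rw [mul_smul_comm, smul_mul_assoc, mul_one, hVV]
    rw [h1, mul_sub, sub_mul, ← h2]
  rw [key]
  have hdiag : m^2 • (1 : Matrix (Fin d) (Fin d) ℝ) - Λ * Λ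
      = diagonal (fun i => m^2 - (hG.eigenvalues i)^2) := by
    rw [hΛ, diagonal_mul_diagonal, smul_one_eq_diagonal, diagonal_sub]
    congr 1
    funext i
    simp [sq]
  rw [hdiag, show star V = Vᴴ from rfl]
  have hnn : (0 : Fin d → ℝ) ≤ fun i => m^2 - (hG.eigenvalues i)^2 := by
    intro i
    simp only [Pi.zero_apply]
    nlinarith [hm i, abs_nonneg (hG.eigenvalues i), sq_abs (hG.eigenvalues i)]
  exact (PosSemidef.diagonal hnn).mul_mul_conjTranspose_same V

lemma posDef_conj {B S : Matrix (Fin d) (Fin d) ℝ} (hB : B.PosDef) (hS : IsUnit S)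
    (hSsym : S.IsHermitian) : (S * B * S).PosDef := by
  refine PosDef.of_dotProduct_mulVec_pos ?_ ?_
  · show _ᴴ = _
    rw [conjTranspose_mul, conjTranspose_mul, hB.1.eq, hSsym.eq, mul_assoc]
  · intro x hx
    have hy : S *ᵥ x ≠ 0 := by
      intro h0
      exact hx (Matrix.mulVec_injective_iff_isUnit.mpr hS (by rw [h0, mulVec_zero]))
    have hrw : star x ⬝ᵥ ((S * B * S) *ᵥ x) = star (S *ᵥ x) ⬝ᵥ (B *ᵥ (S *ᵥ x)) := by
      rw [star_mulVec, hSsym.eq, ← mulVec_mulVec, ← mulVec_mulVec, dotProduct_mulVec]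
    rw [hrw]
    exact hB.dotProduct_mulVec_pos hy


lemma dot_conj_self (A : Matrix (Fin d) (Fin d) ℝ) (x : Fin d → ℝ) :
    x ⬝ᵥ ((Aᴴ * A) *ᵥ x) = (A *ᵥ x) ⬝ᵥ (A *ᵥ x) := by
  rw [← mulVec_mulVec, dotProduct_mulVec]
  congr 1
  rw [vecMul_conjTranspose]
  simp

lemma dot_self_nonneg (v : Fin d → ℝ) : 0 ≤ v ⬝ᵥ v :=
  Finset.sum_nonneg fun i _ => mul_self_nonneg _

end AuxLemmas
section MainProof

set_option maxHeartbeats 1000000 in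
theorem stmt_9 {d : ℕ} (M L D : Matrix (Fin d) (Fin d) ℝ)
    (hM : M.IsSymm) (hL : L.IsSymm) (hMinv : IsUnit M) (hLinv : IsUnit L)
    (hLM : (L - M).PosSemidef) (hcong : MatCongruent M L) (hMLinv : IsUnit (M + L))
    (hD : IsMoorePenrose (L - M) D)
    (Pi0 : Matrix (Fin d) (Fin d) ℝ) (hPi0 : Pi0 = 1 - D * (L - M)) :
    ∀ ρ : ℝ,
      (∀ μ ∈ spectrum ℂ (((M + L)⁻¹ * (L - M)).map (Complex.ofReal : ℝ → ℂ)), ‖μ‖ < ρ) →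
      ∃ r₀ : ℝ, 0 < r₀ ∧ ∀ r : ℝ, r₀ ≤ r →
        (ρ ^ 2 • ((L + M) * (D + r • Pi0) * (L + M)) - (L - M)).PosDef := by
  intro ρ hρ
  rcases Nat.eq_zero_or_pos d with hd | hd
  · subst hd
    exact ⟨1, one_pos, fun r _ => PosDef.of_dotProduct_mulVec_pos (by ext i j; exact i.elim0)
      fun (x : Fin 0 → ℝ) hx => absurd (funext fun (i : Fin 0) => i.elim0) hx⟩
  haveI hne : Nonempty (Fin d) := ⟨⟨0, hd⟩⟩
  set Q : Matrix (Fin d) (Fin d) ℝ := L - M with hQdef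
  set S : Matrix (Fin d) (Fin d) ℝ := M + L with hSdef
  clear_value Q S
  obtain ⟨hQDQ, hDQD, hQDsymT, hDQsymT⟩ := hD
  have hQDsym : (Q * D).IsHermitian := herm_of_tr hQDsymT
  have hDQsym : (D * Q).IsHermitian := herm_of_tr hDQsymT
  have hQsym : Q.IsHermitian := hLM.1
  -- basic projection identities
  have hPQ : (Q * D) * Q = Q := hQDQ
  have hQP : Q * (Q * D) = Q := by
    calc Q * (Q * D) = Qᴴ * (Q * D)ᴴ := by rw [hQsym.eq, hQDsym.eq]
      _ = ((Q * D) * Q)ᴴ := (conjTranspose_mul _ _).symm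
      _ = Q := by rw [hPQ, hQsym.eq]
  have hP'P : (D * Q) * (Q * D) = D * Q := by rw [mul_assoc, hQP]
  have hPP' : (Q * D) * (D * Q) = D * Q := by
    calc (Q * D) * (D * Q) = ((D * Q) * (Q * D))ᴴ := by
          rw [conjTranspose_mul, hQDsym.eq, hDQsym.eq]
      _ = (D * Q)ᴴ := by rw [hP'P]
      _ = D * Q := hDQsym.eq
  have hPidem : (Q * D) * (Q * D) = Q * D := by
    rw [mul_assoc, ← mul_assoc D Q D, hDQD]
  have hP'idem : (D * Q) * (D * Q) = D * Q := by
    rw [mul_assoc, ← mul_assoc Q D Q, hQDQ]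
  have hcomm : Q * D = D * Q := by
    have hB0 : Q * D - D * Q = 0 := by
      refine eq_zero_of_idem_trace (tr_of_herm (hQDsym.sub hDQsym)) ?_ ?_
      · rw [mul_sub, sub_mul, sub_mul, hPidem, hPP', hP'P, hP'idem]
        abel
      · rw [Matrix.trace_sub, Matrix.trace_mul_comm, sub_self]
    exact sub_eq_zero.mp hB0
  have hDherm : Dᴴ = D := by
    have e1 : Dᴴ * Q = D * Q := by
      calc Dᴴ * Q = Dᴴ * Qᴴ := by rw [hQsym.eq]
        _ = (Q * D)ᴴ := (conjTranspose_mul _ _).symm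
        _ = Q * D := hQDsym.eq
        _ = D * Q := hcomm
    have e2 : Q * Dᴴ = Q * D := by
      calc Q * Dᴴ = Qᴴ * Dᴴ := by rw [hQsym.eq]
        _ = (D * Q)ᴴ := (conjTranspose_mul _ _).symm
        _ = D * Q := hDQsym.eq
        _ = Q * D := hcomm.symm
    calc Dᴴ = (D * Q * D)ᴴ := by rw [hDQD]
      _ = Dᴴ * (Q * Dᴴ) := by rw [conjTranspose_mul, conjTranspose_mul, hQsym.eq]
      _ = Dᴴ * (Q * D) := by rw [e2]
      _ = (Dᴴ * Q) * D := by rw [mul_assoc]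
      _ = (D * Q) * D := by rw [e1]
      _ = D := hDQD
  have hDsym : D.IsHermitian := hDherm
  -- Pi0 facts
  have hPidef : Pi0 = 1 - D * Q := hPi0
  have hPiherm : Pi0.IsHermitian := by
    show _ᴴ = _
    rw [hPidef, conjTranspose_sub, conjTranspose_one, hDQsym.eq]
  have hDQQ : (D * Q) * Q = Q := by rw [← hcomm, hPQ]
  have hQQD : Q * (D * Q) = Q := by rw [← hcomm, hQP]
  have hPiQ : Pi0 * Q = 0 := by rw [hPidef, sub_mul, one_mul, hDQQ, sub_self]
  have hQPi : Q * Pi0 = 0 := by rw [hPidef, mul_sub, mul_one, hQQD, sub_self]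
  have hPiD : Pi0 * D = 0 := by rw [hPidef, sub_mul, one_mul, hDQD, sub_self]
  have hDPi : D * Pi0 = 0 := by
    calc D * Pi0 = (Pi0 * D)ᴴ := by rw [conjTranspose_mul, hDherm, hPiherm.eq]
      _ = 0 := by rw [hPiD, conjTranspose_zero]
  have hPiPi : Pi0 * Pi0 = Pi0 := by
    rw [hPidef, sub_mul, one_mul, mul_sub, mul_one, hP'idem]
    abel
  have hsum1 : D * Q + Pi0 = 1 := by rw [hPidef]; abel
  -- square root of Q
  set R : Matrix (Fin d) (Fin d) ℝ := (open scoped MatrixOrder in CFC.sqrt Q) with hRdef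
  have hRR : R * R = Q := by open scoped MatrixOrder in exact CFC.sqrt_mul_sqrt_self Q hLM.nonneg
  have hRherm : R.IsHermitian := by
    open scoped MatrixOrder in exact (CFC.sqrt_nonneg Q).posSemidef.1
  clear_value R
  have hRQ : R * Q = Q * R := by rw [← hRR, ← mul_assoc]
  have hRPi : R * Pi0 = 0 := by
    apply conjTranspose_mul_self_eq_zero.mp
    rw [conjTranspose_mul, hPiherm.eq, hRherm.eq, mul_assoc, ← mul_assoc R R Pi0, hRR,
      ← mul_assoc, hPiQ, zero_mul]
  have hPiR : Pi0 * R = 0 := by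
    calc Pi0 * R = (R * Pi0)ᴴ := by rw [conjTranspose_mul, hRherm.eq, hPiherm.eq]
      _ = 0 := by rw [hRPi, conjTranspose_zero]
  have hDQ1 : D * Q = 1 - Pi0 := by rw [hPidef, sub_sub_cancel]
  have hRDQ : R * (D * Q) = R := by rw [hDQ1, mul_sub, mul_one, hRPi, sub_zero]
  have hDQR : (D * Q) * R = R := by rw [hDQ1, sub_mul, one_mul, hPiR, sub_zero]
  -- D*Q = R*D*R
  have hP_RDR : D * Q = R * D * R := by
    have hRDRQ : R * D * R * Q = Q := by
      calc R * D * R * Q = R * D * R * (R * R) := by rw [hRR]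
        _ = R * (D * Q) * R := by
            rw [← hRR]
            simp only [mul_assoc]
        _ = R * R := by rw [hRDQ]
        _ = Q := hRR
    have hXQ : (D * Q - R * D * R) * Q = 0 := by
      rw [sub_mul, hDQQ, hRDRQ, sub_self]
    have h4 : (D * Q - R * D * R) * (D * Q) = D * Q - R * D * R := by
      rw [sub_mul, hP'idem, mul_assoc (R * D) R (D * Q), hRDQ]
    have h5 : (D * Q - R * D * R) * (D * Q) = 0 := by
      calc (D * Q - R * D * R) * (D * Q) = (D * Q - R * D * R) * (Q * D) := by rw [hcomm]
        _ = ((D * Q - R * D * R) * Q) * D := (mul_assoc _ _ _).symm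
        _ = 0 := by rw [hXQ, zero_mul]
    exact sub_eq_zero.mp (h4.symm.trans h5)
  -- S facts
  have hSherm : S.IsHermitian := herm_of_tr (by rw [hSdef, transpose_add, hM.eq, hL.eq])
  have hSdet : IsUnit S.det := (Matrix.isUnit_iff_isUnit_det S).mp hMLinv
  have hSS : S * S⁻¹ = 1 := Matrix.mul_nonsing_inv S hSdet
  have hS'S : S⁻¹ * S = 1 := Matrix.nonsing_inv_mul S hSdet
  have hSinvherm : (S⁻¹).IsHermitian := by
    show _ᴴ = _
    rw [Matrix.conjTranspose_nonsing_inv, hSherm.eq]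
  set C : Matrix (Fin d) (Fin d) ℝ := S⁻¹ * Q * S⁻¹ with hCdef
  have hCherm : C.IsHermitian := by
    show _ᴴ = _
    rw [hCdef, conjTranspose_mul, conjTranspose_mul, hSinvherm.eq, hQsym.eq, ← mul_assoc]
  set G : Matrix (Fin d) (Fin d) ℝ := R * S⁻¹ * R with hGdef
  have hGherm : G.IsHermitian := by
    show _ᴴ = _
    rw [hGdef, conjTranspose_mul, conjTranspose_mul, hSinvherm.eq, hRherm.eq, ← mul_assoc]
  clear_value C G
  -- rho positive
  have hρpos : 0 < ρ := by
    obtain ⟨μ, hμ⟩ := spectrum.nonempty_of_isAlgClosed_of_finiteDimensional ℂ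
      ((S⁻¹ * Q).map Complex.ofReal)
    exact lt_of_le_of_lt (norm_nonneg μ) (hρ μ hμ)
  -- eigenvalue bound for G
  have hev : ∀ i, |hGherm.eigenvalues i| < ρ := by
    intro i
    rcases eq_or_ne (hGherm.eigenvalues i) 0 with h0 | h0
    · rw [h0]; simpa using hρpos
    · have h := hGherm.eigenvalues_mem_spectrum_real i
      generalize hgen : hGherm.eigenvalues i = t at h0 h ⊢
      rw [hGdef, mul_assoc] at h
      have h2 := nonzero_spec_swap h0 h
      have h3 : (S⁻¹ * R) * R = S⁻¹ * Q := by rw [mul_assoc, hRR]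
      rw [h3] at h2
      have h4 := hρ _ (mem_spectrum_complex h2)
      simpa using h4
  obtain ⟨m, hm_bound, hm_lt, hm_nonneg⟩ :
      ∃ m : ℝ, (∀ i, |hGherm.eigenvalues i| ≤ m) ∧ m < ρ ∧ 0 ≤ m := by
    refine ⟨Finset.univ.sup' Finset.univ_nonempty (fun i => |hGherm.eigenvalues i|),
      fun i => Finset.le_sup' (fun i => |hGherm.eigenvalues i|) (Finset.mem_univ i),
      (Finset.sup'_lt_iff Finset.univ_nonempty).mpr fun i _ => hev i,
      le_trans (abs_nonneg (hGherm.eigenvalues (Classical.arbitrary (Fin d))))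
        (Finset.le_sup' (fun i => |hGherm.eigenvalues i|)
          (Finset.mem_univ (Classical.arbitrary (Fin d))))⟩
  set ε : ℝ := ρ^2 - m^2 with hε
  have hεpos : 0 < ε := by rw [hε]; nlinarith
  have hG2 : PosSemidef (m^2 • 1 - G * G) := posSemidef_sq_eig hGherm hm_bound
  -- H and W
  set H : Matrix (Fin d) (Fin d) ℝ := R * D with hHdef
  set W : Matrix (Fin d) (Fin d) ℝ := R * C * Pi0 with hWdef
  have hHc : Hᴴ = D * R := by rw [hHdef, conjTranspose_mul, hDherm, hRherm.eq]
  have hWc : Wᴴ = Pi0 * C * R := by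
    rw [hWdef, conjTranspose_mul, conjTranspose_mul, hPiherm.eq, hCherm.eq, hRherm.eq,
      ← mul_assoc]
  have hHH : Hᴴ * H = D := by
    rw [hHc, hHdef, mul_assoc, ← mul_assoc R R D, hRR, ← mul_assoc, hDQD]
  have hGG : G * G = R * C * R := by
    rw [hGdef, hCdef]
    simp only [mul_assoc]
    rw [← mul_assoc R R, hRR]
  have hPCP : Hᴴ * (G * G) * H = (D * Q) * C * (D * Q) := by
    rw [hGG, hHc, hHdef]
    simp only [mul_assoc]
    rw [← mul_assoc R R, hRR, ← mul_assoc R R, hRR, hcomm]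
  have hHW : Hᴴ * W = (D * Q) * C * Pi0 := by
    rw [hHc, hWdef]
    simp only [mul_assoc]
    rw [← mul_assoc R R, hRR]
  have hWH : Wᴴ * H = Pi0 * C * (D * Q) := by
    rw [hWc, hHdef]
    simp only [mul_assoc]
    rw [← mul_assoc R R, hRR, hcomm]
  have hWW : Wᴴ * W = Pi0 * (C * Q * C) * Pi0 := by
    rw [hWc, hWdef]
    simp only [mul_assoc]
    rw [← mul_assoc R R, hRR]
  have hCdec : (D*Q)*C*(D*Q) + (D*Q)*C*Pi0 + Pi0*C*(D*Q) + Pi0*C*Pi0 = C := by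
    have hexp : (D*Q + Pi0)*C*(D*Q + Pi0)
        = (D*Q)*C*(D*Q) + (D*Q)*C*Pi0 + Pi0*C*(D*Q) + Pi0*C*Pi0 := by noncomm_ring
    rw [← hexp, hsum1, one_mul, mul_one]
  -- the completed square
  set a : ℝ := Real.sqrt (ε/2) with hadef
  have ha2 : a^2 = ε/2 := Real.sq_sqrt (by positivity)
  have hapos : 0 < a := Real.sqrt_pos.mpr (by positivity)
  set F : Matrix (Fin d) (Fin d) ℝ := a • H - a⁻¹ • W with hFdef
  have hFc : Fᴴ = a • Hᴴ - a⁻¹ • Wᴴ := by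
    rw [hFdef, conjTranspose_sub, conjTranspose_smul, conjTranspose_smul, star_trivial,
      star_trivial]
  have hεne : ε ≠ 0 := ne_of_gt hεpos
  have hane : a ≠ 0 := ne_of_gt hapos
  have hFF : Fᴴ * F = (ε/2) • D - ((D*Q)*C*Pi0 + Pi0*C*(D*Q)) + (2/ε) • (Pi0*(C*Q*C)*Pi0) := by
    rw [hFc, hFdef]
    simp only [sub_mul, mul_sub, smul_mul_assoc, mul_smul_comm, smul_smul]
    rw [hHH, hHW, hWH, hWW]
    have haa : a * a = ε/2 := by nlinarith [ha2]
    match_scalars <;> field_simp <;> nlinarith [ha2, hεpos]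
  have hCQCherm : (C*Q*C).IsHermitian := by
    show _ᴴ = _
    rw [conjTranspose_mul, conjTranspose_mul, hCherm.eq, hQsym.eq, ← mul_assoc]
  set J : Matrix (Fin d) (Fin d) ℝ := (2/ε) • (C*Q*C) + C with hJdef
  have hJherm : J.IsHermitian := by
    show _ᴴ = _
    rw [hJdef, conjTranspose_add, conjTranspose_smul, star_trivial, hCQCherm.eq, hCherm.eq]
  set c : ℝ := ∑ i, ∑ j, |J i j| with hcdef
  have hJpsd : PosSemidef (c • 1 - J) := posSemidef_entrysum_smul_sub hJherm
  have hcnonneg : 0 ≤ c :=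
    Finset.sum_nonneg fun i _ => Finset.sum_nonneg fun j _ => abs_nonneg _
  refine ⟨max 1 ((1 + c)/ρ^2), lt_of_lt_of_le one_pos (le_max_left _ _), fun r hr => ?_⟩
  have hr1 : (1:ℝ) ≤ r := le_trans (le_max_left _ _) hr
  have hρ2 : 0 < ρ^2 := by positivity
  have hrc : 1 + c ≤ ρ^2 * r := by
    have h := le_trans (le_max_right _ _) hr
    rw [div_le_iff₀ hρ2] at h
    linarith
  set K : Matrix (Fin d) (Fin d) ℝ := (ρ^2*r - 1) • 1 - J with hKdef
  have hKpsd : PosSemidef K := by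
    have hdecomp : K = (c • 1 - J) + (ρ^2*r - 1 - c) • 1 := by
      rw [hKdef]; module
    rw [hdecomp]
    exact hJpsd.add (psd_smul_one (by linarith))
  have hT1 : PosSemidef (Hᴴ * (m^2 • 1 - G*G) * H) := hG2.conjTranspose_mul_mul_same H
  have hT2 : PosSemidef (Fᴴ * F) := posSemidef_conjTranspose_mul_self F
  have hT3 : PosSemidef (Pi0 * K * Pi0) := by
    have h := hKpsd.conjTranspose_mul_mul_same Pi0
    rwa [hPiherm.eq] at h
  have hPD : PosDef ((ε/2) • D + Pi0) := by
    refine PosDef.of_dotProduct_mulVec_pos ?_ ?_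
    · show _ᴴ = _
      rw [conjTranspose_add, conjTranspose_smul, star_trivial, hDherm, hPiherm.eq]
    · intro x hx
      have hDX : x ⬝ᵥ (D *ᵥ x) = (H *ᵥ x) ⬝ᵥ (H *ᵥ x) := by
        rw [← hHH]; exact dot_conj_self H x
      have hPiX : x ⬝ᵥ (Pi0 *ᵥ x) = (Pi0 *ᵥ x) ⬝ᵥ (Pi0 *ᵥ x) := by
        conv_lhs => rw [show Pi0 = Pi0ᴴ * Pi0 by rw [hPiherm.eq, hPiPi]]
        exact dot_conj_self Pi0 x
      have hval : star x ⬝ᵥ (((ε/2) • D + Pi0) *ᵥ x)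
          = (ε/2) * ((H *ᵥ x) ⬝ᵥ (H *ᵥ x)) + (Pi0 *ᵥ x) ⬝ᵥ (Pi0 *ᵥ x) := by
        rw [star_trivial, add_mulVec, dotProduct_add, smul_mulVec, dotProduct_smul,
          smul_eq_mul, hDX, hPiX]
      rw [hval]
      by_cases hH0 : H *ᵥ x = 0
      · have hDx0 : D *ᵥ x = 0 := by
          rw [← hHH, ← mulVec_mulVec, hH0, mulVec_zero]
        have hPix0 : Pi0 *ᵥ x ≠ 0 := by
          intro h0
          apply hx
          have hx1 : x = Q *ᵥ (D *ᵥ x) + Pi0 *ᵥ x := by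
            rw [mulVec_mulVec, hcomm, ← add_mulVec, hsum1, one_mulVec]
          rw [hx1, hDx0, mulVec_zero, h0, add_zero]
        have hspos : 0 < (Pi0 *ᵥ x) ⬝ᵥ (Pi0 *ᵥ x) :=
          lt_of_le_of_ne (dot_self_nonneg _)
            (fun h => hPix0 (dotProduct_self_eq_zero.mp h.symm))
        rw [hH0]
        simp only [dotProduct_zero, mul_zero, zero_add]
        exact hspos
      · have htpos : 0 < (H *ᵥ x) ⬝ᵥ (H *ᵥ x) :=
          lt_of_le_of_ne (dot_self_nonneg _)
            (fun h => hH0 (dotProduct_self_eq_zero.mp h.symm))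
        nlinarith [dot_self_nonneg (Pi0 *ᵥ x), hεpos]
  have e1 : Hᴴ * (m^2 • 1 - G*G) * H = m^2 • D - (D*Q)*C*(D*Q) := by
    rw [mul_sub, sub_mul, hPCP, mul_smul_comm, mul_one, smul_mul_assoc, hHH]
  have e3 : Pi0 * K * Pi0 = (ρ^2*r - 1) • Pi0 - ((2/ε) • (Pi0*(C*Q*C)*Pi0) + Pi0*C*Pi0) := by
    rw [hKdef, hJdef]
    rw [mul_sub, sub_mul, mul_smul_comm, mul_one, smul_mul_assoc, hPiPi]
    rw [mul_add, add_mul, mul_smul_comm, smul_mul_assoc]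
  have hBdec : ρ^2 • (D + r • Pi0) - C
      = ((ε/2) • D + Pi0) + ((Hᴴ * (m^2 • 1 - G*G) * H) + (Fᴴ * F) + (Pi0 * K * Pi0)) := by
    rw [e1, hFF, e3]
    conv_lhs => rw [← hCdec]
    rw [hε]
    module
  have hBpd : PosDef (ρ^2 • (D + r • Pi0) - C) := by
    rw [hBdec]
    exact hPD.add_posSemidef ((hT1.add hT2).add hT3)
  have hfinal : ρ ^ 2 • ((L + M) * (D + r • Pi0) * (L + M)) - Q
      = S * (ρ^2 • (D + r • Pi0) - C) * S := by
    have hLMS : L + M = S := by rw [hSdef, add_comm]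
    rw [hLMS, hCdef]
    rw [mul_sub, sub_mul]
    congr 1
    · rw [mul_smul_comm, smul_mul_assoc]
    · symm
      calc S * (S⁻¹ * Q * S⁻¹) * S = (S * S⁻¹) * Q * (S⁻¹ * S) := by
            simp only [mul_assoc]
        _ = Q := by rw [hSS, hS'S, one_mul, mul_one]
  rw [hfinal]
  exact posDef_conj hBpd hMLinv hSherm



end MainProof
end

section
/- Let M, L ∈ ℝ^{d×d} be symmetric invertible matrices with L − M positive semidefinite such that M and L are congruent. Then M + L is invertible, and for every ρ ∈ ℝ with max{|λ| : λ a complex eigenvalue of (M + L)⁻¹(L − M)} < ρ there exists a symmetric positive definite matrix P ∈ ℝ^{d×d} such that for every f ∈ S(M,L) the map φ(z) := z − 2(M + L)⁻¹∇f(z) satisfies (φ(z₁) − φ(z₂))ᵀP(φ(z₁) − φ(z₂)) ≤ ρ² (z₁ − z₂)ᵀP(z₁ − z₂) for all z₁, z₂ ∈ ℝ^d. -/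
open Matrix Submodule

namespace Stmt10Aux

variable {d : ℕ}

noncomputable def nrm (x : Fin d → ℝ) : ℝ := Real.sqrt (x ⬝ᵥ x)

lemma dot_self_nonneg (x : Fin d → ℝ) : 0 ≤ x ⬝ᵥ x :=
  Finset.sum_nonneg fun _ _ => mul_self_nonneg _

lemma nrm_nonneg (x : Fin d → ℝ) : 0 ≤ nrm x := Real.sqrt_nonneg _

lemma nrm_sq (x : Fin d → ℝ) : nrm x ^ 2 = x ⬝ᵥ x := Real.sq_sqrt (dot_self_nonneg x)

lemma dot_le_nrm_mul_nrm (x y : Fin d → ℝ) : x ⬝ᵥ y ≤ nrm x * nrm y := by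
  have h := Finset.sum_mul_sq_le_sq_mul_sq Finset.univ x y
  have h2 : (x ⬝ᵥ y)^2 ≤ (nrm x * nrm y)^2 := by
    rw [mul_pow, nrm_sq, nrm_sq]
    simpa [dotProduct, pow_two, Finset.sum_mul_sq_le_sq_mul_sq] using h
  have hnn : 0 ≤ nrm x * nrm y := mul_nonneg (nrm_nonneg x) (nrm_nonneg y)
  nlinarith [h2]

lemma nrm_add_le (x y : Fin d → ℝ) : nrm (x + y) ≤ nrm x + nrm y := by
  have h1 : (x + y) ⬝ᵥ (x + y) ≤ (nrm x + nrm y) ^ 2 := by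
    have := dot_le_nrm_mul_nrm x y
    have hx := nrm_sq x; have hy := nrm_sq y
    simp only [add_dotProduct, dotProduct_add] at *
    have hc : x ⬝ᵥ y = y ⬝ᵥ x := dotProduct_comm x y
    nlinarith
  have h2 := Real.sqrt_le_sqrt h1
  rw [Real.sqrt_sq (by exact add_nonneg (nrm_nonneg x) (nrm_nonneg y))] at h2
  exact h2

/-- Frobenius-type bound -/
lemma nrm_mulVec_le (A : Matrix (Fin d) (Fin d) ℝ) (z : Fin d → ℝ) :
    nrm (A *ᵥ z) ≤ Real.sqrt (∑ i, ∑ j, (A i j)^2) * nrm z := by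
  have key : (A *ᵥ z) ⬝ᵥ (A *ᵥ z) ≤ (∑ i, ∑ j, (A i j)^2) * (z ⬝ᵥ z) := by
    have hrow : ∀ i : Fin d, (A.mulVec z i)^2 ≤ (∑ j, (A i j)^2) * (z ⬝ᵥ z) := by
      intro i
      simpa [Matrix.mulVec, dotProduct, pow_two] using
        Finset.sum_mul_sq_le_sq_mul_sq Finset.univ (A i) z
    calc (A *ᵥ z) ⬝ᵥ (A *ᵥ z) = ∑ i, (A.mulVec z i)^2 := by
          simp [dotProduct, pow_two]
      _ ≤ ∑ i : Fin d, (∑ j, (A i j)^2) * (z ⬝ᵥ z) := Finset.sum_le_sum fun i _ => hrow i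
      _ = (∑ i, ∑ j, (A i j)^2) * (z ⬝ᵥ z) := by rw [Finset.sum_mul]
  have h2 := Real.sqrt_le_sqrt key
  rw [show (∑ i, ∑ j, (A i j)^2) * (z ⬝ᵥ z) = (Real.sqrt (∑ i, ∑ j, (A i j)^2) * nrm z)^2 by
      rw [mul_pow, nrm_sq, Real.sq_sqrt (by positivity)]] at h2
  rw [Real.sqrt_sq (by exact mul_nonneg (Real.sqrt_nonneg _) (nrm_nonneg z))] at h2
  exact h2



section Phi
variable {A : Matrix (Fin d) (Fin d) ℝ} (hA : A.IsHermitian)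

/-- eigenvector unitary as a plain real matrix -/
noncomputable def eV (hA : A.IsHermitian) : Matrix (Fin d) (Fin d) ℝ :=
  (Matrix.IsHermitian.eigenvectorUnitary hA : Matrix (Fin d) (Fin d) ℝ)

lemma eV_star_mul (hA : A.IsHermitian) : star (eV hA) * eV hA = 1 := by
  simpa [eV] using unitary.coe_star_mul_self (Matrix.IsHermitian.eigenvectorUnitary hA)

lemma eV_mul_star (hA : A.IsHermitian) : eV hA * star (eV hA) = 1 := by
  simpa [eV] using unitary.coe_mul_star_self (Matrix.IsHermitian.eigenvectorUnitary hA)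

/-- function calculus -/
noncomputable def Phi (hA : A.IsHermitian) (h : ℝ → ℝ) : Matrix (Fin d) (Fin d) ℝ :=
  eV hA * diagonal (h ∘ hA.eigenvalues) * star (eV hA)

lemma Phi_id : Phi hA id = A := by
  have := hA.spectral_theorem
  simpa [Phi, eV] using this.symm

lemma Phi_mul (g h k : ℝ → ℝ) (hk : ∀ i, g (hA.eigenvalues i) * h (hA.eigenvalues i) = k (hA.eigenvalues i)) :
    Phi hA g * Phi hA h = Phi hA k := by
  have : diagonal (g ∘ hA.eigenvalues) * diagonal (h ∘ hA.eigenvalues) = diagonal (k ∘ hA.eigenvalues) := by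
    rw [diagonal_mul_diagonal]
    exact congrArg diagonal (funext fun i => hk i)
  calc Phi hA g * Phi hA h
      = eV hA * diagonal (g ∘ hA.eigenvalues) * (star (eV hA) * eV hA) * diagonal (h ∘ hA.eigenvalues) * star (eV hA) := by
        simp only [Phi, Matrix.mul_assoc]
    _ = eV hA * (diagonal (g ∘ hA.eigenvalues) * diagonal (h ∘ hA.eigenvalues)) * star (eV hA) := by
        rw [eV_star_mul]; simp only [Matrix.mul_one, Matrix.mul_assoc]
    _ = Phi hA k := by rw [this]; simp only [Phi, Matrix.mul_assoc]

lemma Phi_one : Phi hA (fun _ => 1) = 1 := by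
  have : diagonal ((fun _ => (1:ℝ)) ∘ hA.eigenvalues) = 1 := by
    rw [show ((fun _ => (1:ℝ)) ∘ hA.eigenvalues) = fun _ => 1 from rfl, diagonal_one]
  rw [Phi, this, Matrix.mul_one, eV_mul_star]

lemma Phi_add (g h k : ℝ → ℝ) (hk : ∀ i, g (hA.eigenvalues i) + h (hA.eigenvalues i) = k (hA.eigenvalues i)) :
    Phi hA g + Phi hA h = Phi hA k := by
  have : diagonal (g ∘ hA.eigenvalues) + diagonal (h ∘ hA.eigenvalues) = diagonal (k ∘ hA.eigenvalues) := by
    rw [diagonal_add]; exact congrArg diagonal (funext fun i => hk i)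
  simp only [Phi, ← this, Matrix.add_mul, Matrix.mul_add]

lemma Phi_transpose (h : ℝ → ℝ) : (Phi hA h)ᵀ = Phi hA h := by
  have hstar : star (eV hA) = (eV hA)ᵀ := by
    simp [star, conjTranspose_eq_transpose_of_trivial]
  simp [Phi, hstar, transpose_mul, Matrix.mul_assoc, diagonal_transpose]

lemma Phi_isHermitian (h : ℝ → ℝ) : (Phi hA h).IsHermitian := by
  have : (Phi hA h)ᴴ = (Phi hA h)ᵀ := conjTranspose_eq_transpose_of_trivial _
  rw [Matrix.IsHermitian, this, Phi_transpose]

/-- coordinates -/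
lemma quadform_Phi (h : ℝ → ℝ) (x : Fin d → ℝ) :
    x ⬝ᵥ (Phi hA h) *ᵥ x = ∑ i, h (hA.eigenvalues i) * ((star (eV hA) *ᵥ x) i)^2 := by
  set y := star (eV hA) *ᵥ x with hy
  have h1 : (Phi hA h) *ᵥ x = eV hA *ᵥ (diagonal (h ∘ hA.eigenvalues) *ᵥ y) := by
    simp [Phi, hy, ← mulVec_mulVec]
  rw [h1]
  have hstar : star (eV hA) = (eV hA)ᵀ := conjTranspose_eq_transpose_of_trivial _
  have h2 : x ⬝ᵥ eV hA *ᵥ (diagonal (h ∘ hA.eigenvalues) *ᵥ y) =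
      y ⬝ᵥ (diagonal (h ∘ hA.eigenvalues) *ᵥ y) := by
    rw [Matrix.dotProduct_mulVec, ← Matrix.mulVec_transpose, hy, hstar]
  rw [h2]
  have h3 : diagonal (h ∘ hA.eigenvalues) *ᵥ y = fun i => h (hA.eigenvalues i) * y i := by
    funext i; simp [Matrix.mulVec_diagonal]
  rw [h3]
  simp only [dotProduct]
  exact Finset.sum_congr rfl fun i _ => by ring

/-- coordinates preserve dot product -/
lemma dot_star_eV (x : Fin d → ℝ) :
    (star (eV hA) *ᵥ x) ⬝ᵥ (star (eV hA) *ᵥ x) = x ⬝ᵥ x := by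
  have hstar : star (eV hA) = (eV hA)ᵀ := conjTranspose_eq_transpose_of_trivial _
  rw [Matrix.dotProduct_mulVec, ← Matrix.mulVec_transpose, hstar]
  rw [Matrix.transpose_transpose, Matrix.mulVec_mulVec]
  have : eV hA * (eV hA)ᵀ = 1 := by rw [← hstar]; exact eV_mul_star hA
  rw [this, Matrix.one_mulVec]

end Phi

section Inertia
variable {A : Matrix (Fin d) (Fin d) ℝ} (hA : A.IsHermitian)

/-- `W` is a subspace on which the quadratic form of `A` is positive definite. -/
def PosOnSub (A : Matrix (Fin d) (Fin d) ℝ) (W : Submodule ℝ (Fin d → ℝ)) : Prop :=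
  ∀ x ∈ W, x ≠ 0 → 0 < x ⬝ᵥ A *ᵥ x

/-- image under the eigenvector matrix of the coordinate subspace supported on `T` -/
noncomputable def coordSub (hA : A.IsHermitian) (T : Finset (Fin d)) : Submodule ℝ (Fin d → ℝ) :=
  (Submodule.span ℝ (Set.range fun i : T => (Pi.single (i : Fin d) 1 : Fin d → ℝ))).map
    (Matrix.mulVecLin (eV hA))

lemma eV_mulVec_injective : Function.Injective (fun c => eV hA *ᵥ c : (Fin d → ℝ) → (Fin d → ℝ)) := by
  intro c c' h
  have h2 := congrArg (fun z => star (eV hA) *ᵥ z) h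
  simpa [Matrix.mulVec_mulVec, eV_star_mul hA, Matrix.one_mulVec] using h2

lemma finrank_coordSub (T : Finset (Fin d)) :
    Module.finrank ℝ (coordSub hA T) = T.card := by
  have hli : LinearIndependent ℝ (fun i : T => (Pi.single (i : Fin d) 1 : Fin d → ℝ)) := by
    have hb := (Pi.basisFun ℝ (Fin d)).linearIndependent
    have : (fun i : T => (Pi.single (i : Fin d) 1 : Fin d → ℝ)) =
        (fun i : Fin d => (Pi.single i 1 : Fin d → ℝ)) ∘ (Subtype.val : T → Fin d) := rfl
    rw [this]
    refine LinearIndependent.comp ?_ _ Subtype.val_injective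
    have hfun : (fun i : Fin d => (Pi.single i 1 : Fin d → ℝ)) = ⇑(Pi.basisFun ℝ (Fin d)) := by
      funext i; simp [Pi.basisFun_apply]
    rw [hfun]; exact hb
  have h1 : Module.finrank ℝ
      (Submodule.span ℝ (Set.range fun i : T => (Pi.single (i : Fin d) 1 : Fin d → ℝ))) = T.card := by
    rw [finrank_span_eq_card hli, Fintype.card_coe]
  rw [coordSub, (LinearEquiv.finrank_eq (Submodule.equivMapOfInjective _ (by
      rw [Matrix.coe_mulVecLin]; exact eV_mulVec_injective hA) _)).symm, h1]

lemma coordSub_support {T : Finset (Fin d)} {c : Fin d → ℝ}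
    (hc : c ∈ Submodule.span ℝ (Set.range fun i : T => (Pi.single (i : Fin d) 1 : Fin d → ℝ)))
    {j : Fin d} (hj : j ∉ T) : c j = 0 := by
  induction hc using Submodule.span_induction with
  | mem y hy =>
      obtain ⟨i, rfl⟩ := hy
      refine Pi.single_eq_of_ne (fun h => hj ?_) 1
      rw [h]; exact i.2
  | zero => rfl
  | add y z _ _ hy hz => simp [hy, hz]
  | smul a y _ hy => simp [hy]

lemma mem_coordSub {T : Finset (Fin d)} {x : Fin d → ℝ} (hx : x ∈ coordSub hA T) :
    ∃ c : Fin d → ℝ, (∀ j ∉ T, c j = 0) ∧ x = eV hA *ᵥ c ∧ star (eV hA) *ᵥ x = c := by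
  obtain ⟨c, hc, rfl⟩ := hx
  refine ⟨c, fun j hj => coordSub_support hc hj, rfl, ?_⟩
  simp [Matrix.mulVecLin, Matrix.mulVec_mulVec, eV_star_mul hA, Matrix.one_mulVec]

/-- Upper bound: any subspace on which `A` is positive definite has dimension at most the
number of indices in any `T` outside of which all eigenvalues are `≤ 0`. -/
lemma posOnSub_finrank_le (T : Finset (Fin d)) (hT : ∀ i, i ∉ T → hA.eigenvalues i ≤ 0)
    (W : Submodule ℝ (Fin d → ℝ)) (hW : PosOnSub A W) :
    Module.finrank ℝ W ≤ T.card := by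
  set W0 := coordSub hA Tᶜ with hW0
  have hdisj : W ⊓ W0 = ⊥ := by
    rw [Submodule.eq_bot_iff]
    intro x hx
    by_contra hx0
    have hpos := hW x hx.1 hx0
    obtain ⟨c, hsupp, hxc, hcoord⟩ := mem_coordSub hA hx.2
    have hquad : x ⬝ᵥ A *ᵥ x = ∑ i, hA.eigenvalues i * (c i)^2 := by
      have h := quadform_Phi hA id x
      rw [Phi_id] at h
      rw [h, hcoord]; simp [id_eq]
    have hle : x ⬝ᵥ A *ᵥ x ≤ 0 := by
      rw [hquad]
      refine Finset.sum_nonpos fun i _ => ?_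
      by_cases hi : i ∈ T
      · have : c i = 0 := hsupp i (by simp [hi])
        simp [this]
      · exact mul_nonpos_of_nonpos_of_nonneg (hT i hi) (sq_nonneg _)
    linarith
  have hsum := Submodule.finrank_sup_add_finrank_inf_eq W W0
  rw [hdisj] at hsum
  have hW0rank : Module.finrank ℝ W0 = d - T.card := by
    rw [hW0, finrank_coordSub hA, Finset.card_compl, Fintype.card_fin]
  have hle : Module.finrank ℝ ↥(W ⊔ W0) ≤ d := by
    have := Submodule.finrank_le (W ⊔ W0)
    simpa using this
  have hTd : T.card ≤ d := by
    have := Finset.card_le_univ T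
    simpa using this
  simp only [finrank_bot, add_zero] at hsum
  omega

/-- Lower bound: existence of a positive subspace of dimension `T.card` whenever all
eigenvalues on `T` are positive. -/
lemma posOnSub_exists (T : Finset (Fin d)) (hT : ∀ i ∈ T, 0 < hA.eigenvalues i) :
    ∃ W : Submodule ℝ (Fin d → ℝ), PosOnSub A W ∧ Module.finrank ℝ W = T.card := by
  refine ⟨coordSub hA T, ?_, finrank_coordSub hA T⟩
  intro x hx hx0
  obtain ⟨c, hsupp, hxc, hcoord⟩ := mem_coordSub hA hx
  have hquad : x ⬝ᵥ A *ᵥ x = ∑ i, hA.eigenvalues i * (c i)^2 := by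
    have h := quadform_Phi hA id x
    rw [Phi_id] at h
    rw [h, hcoord]; simp [id_eq]
  rw [hquad]
  have hc0 : c ≠ 0 := by
    intro h
    apply hx0
    rw [hxc, h, Matrix.mulVec_zero]
  obtain ⟨j, hj⟩ := Function.ne_iff.1 hc0
  have hjT : j ∈ T := by
    by_contra hjT
    exact hj (hsupp j hjT)
  refine Finset.sum_pos' (fun i _ => ?_) ⟨j, Finset.mem_univ j, ?_⟩
  · by_cases hi : i ∈ T
    · exact mul_nonneg (hT i hi).le (sq_nonneg _)
    · simp [hsupp i hi]
  · have : (0:ℝ) < (c j)^2 := by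
      have := sq_pos_of_ne_zero hj
      simpa [sq] using this
    exact mul_pos (hT j hjT) this

end Inertia

section Part1
variable {M L T : Matrix (Fin d) (Fin d) ℝ}

lemma isHermitian_of_isSymm (h : M.IsSymm) : M.IsHermitian := by
  rw [Matrix.IsHermitian, conjTranspose_eq_transpose_of_trivial]; exact h

lemma quad_sub_smul (A : Matrix (Fin d) (Fin d) ℝ) (a b : Fin d → ℝ) (s : ℝ) :
    (a - s • b) ⬝ᵥ A *ᵥ (a - s • b) =
      a ⬝ᵥ A *ᵥ a - s*(a ⬝ᵥ A *ᵥ b) - s*(b ⬝ᵥ A *ᵥ a) + s^2*(b ⬝ᵥ A *ᵥ b) := by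
  simp only [Matrix.mulVec_sub, Matrix.mulVec_smul, dotProduct_sub, sub_dotProduct,
    dotProduct_smul, smul_dotProduct, smul_eq_mul]
  ring

lemma quad_congr_eq (x : Fin d → ℝ) : x ⬝ᵥ (Tᵀ * M * T) *ᵥ x = (T *ᵥ x) ⬝ᵥ M *ᵥ (T *ᵥ x) := by
  rw [← Matrix.mulVec_mulVec, ← Matrix.mulVec_mulVec, Matrix.dotProduct_mulVec x Tᵀ,
    Matrix.vecMul_transpose]

/-- one-sided transfer for the positive index under congruence -/
lemma cardPos_le_of_congr (hM : M.IsHermitian) (hL : L.IsHermitian)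
    (hT : IsUnit T) (hrel : Tᵀ * M * T = L) :
    (Finset.univ.filter fun i => 0 < hL.eigenvalues i).card ≤
    (Finset.univ.filter fun i => 0 < hM.eigenvalues i).card := by
  obtain ⟨W, hW, hrank⟩ := posOnSub_exists hL (Finset.univ.filter fun i => 0 < hL.eigenvalues i)
    (fun i hi => (Finset.mem_filter.mp hi).2)
  have hdet : IsUnit T.det := (Matrix.isUnit_iff_isUnit_det T).mp hT
  have hinj : Function.Injective (Matrix.mulVecLin T) := by
    intro a b hab
    have := congrArg (fun z => T⁻¹ *ᵥ z) hab
    simpa [Matrix.mulVecLin, Matrix.mulVec_mulVec, Matrix.nonsing_inv_mul T hdet,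
      Matrix.one_mulVec] using this
  have hpos : PosOnSub M (W.map (Matrix.mulVecLin T)) := by
    rintro x ⟨y, hy, rfl⟩ hx0
    have hy0 : y ≠ 0 := by
      rintro rfl; exact hx0 (by simp)
    have := hW y hy hy0
    rw [← hrel] at this
    rw [quad_congr_eq] at this
    simpa [Matrix.mulVecLin] using this
  have := posOnSub_finrank_le hM (Finset.univ.filter fun i => 0 < hM.eigenvalues i)
    (fun i hi => by
      simp only [Finset.mem_filter, Finset.mem_univ, true_and, not_lt] at hi
      exact hi) _ hpos
  rw [(LinearEquiv.finrank_eq (Submodule.equivMapOfInjective _ hinj W)).symm, hrank] at this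
  exact this

/-- Main part 1: `M + L` is invertible. -/
lemma isUnit_add_of_congr (hM : M.IsSymm) (hL : L.IsSymm) (hLinv : IsUnit L)
    (hLM : (L - M).PosSemidef) (hT : IsUnit T) (hrel : Tᵀ * M * T = L) :
    IsUnit (M + L) := by
  have hM' : M.IsHermitian := isHermitian_of_isSymm hM
  have hL' : L.IsHermitian := isHermitian_of_isSymm hL
  rw [Matrix.isUnit_iff_isUnit_det, isUnit_iff_ne_zero]
  intro hdet0
  obtain ⟨v, hv0, hker⟩ := (Matrix.exists_mulVec_eq_zero_iff.mpr hdet0)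
  -- key facts
  have hMLv : M *ᵥ v + L *ᵥ v = 0 := by
    rw [← Matrix.add_mulVec]; exact hker
  have hMv : M *ᵥ v = -(L *ᵥ v) := by linear_combination (norm := module) hMLv
  have hquad0 : v ⬝ᵥ M *ᵥ v + v ⬝ᵥ L *ᵥ v = 0 := by
    rw [← dotProduct_add, hMLv, dotProduct_zero]
  set c := v ⬝ᵥ L *ᵥ v with hc
  have hNquad : v ⬝ᵥ (L - M) *ᵥ v = 2 * c := by
    rw [Matrix.sub_mulVec, dotProduct_sub]; linarith
  rcases eq_or_lt_of_le (by simpa [star_trivial] using hLM.dotProduct_mulVec_nonneg v) with hzero | hpos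
  · -- degenerate case: (L-M) v = 0, hence L v = 0, contradiction with L invertible
    have hN0 : (L - M) *ᵥ v = 0 := by
      rw [← hLM.dotProduct_mulVec_zero_iff v]
      simpa [star_trivial] using hzero.symm
    have hLv : L *ᵥ v = 0 := by
      have h1 : L *ᵥ v - M *ᵥ v = 0 := by rw [← Matrix.sub_mulVec]; exact hN0
      linear_combination (norm := module) (1/2 : ℝ) • (hMLv + h1)
    have := Matrix.exists_mulVec_eq_zero_iff.mp ⟨v, hv0, hLv⟩
    rw [Matrix.isUnit_iff_isUnit_det, isUnit_iff_ne_zero] at hLinv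
    exact hLinv this
  · -- main case
    have hcpos : 0 < c := by
      rw [hNquad] at hpos; linarith
    have hvMv : v ⬝ᵥ M *ᵥ v = -c := by linarith
    -- the linear functional y ↦ v ⬝ᵥ L y
    set ℓ : (Fin d → ℝ) →ₗ[ℝ] ℝ :=
      { toFun := fun y => v ⬝ᵥ L *ᵥ y
        map_add' := fun a b => by simp [Matrix.mulVec_add, dotProduct_add]
        map_smul' := fun r a => by simp [Matrix.mulVec_smul, dotProduct_smul] } with hℓ
    set π : (Fin d → ℝ) →ₗ[ℝ] (Fin d → ℝ) :=
      LinearMap.id - c⁻¹ • (LinearMap.smulRight ℓ v) with hπ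
    have hπ_apply : ∀ y, π y = y - (c⁻¹ * (v ⬝ᵥ L *ᵥ y)) • v := by
      intro y
      simp [hπ, hℓ, sub_eq_add_neg, smul_smul]
    -- symmetric dot facts
    have hLsymm : ∀ a b : Fin d → ℝ, a ⬝ᵥ L *ᵥ b = b ⬝ᵥ L *ᵥ a := by
      intro a b
      rw [Matrix.dotProduct_mulVec, ← Matrix.mulVec_transpose, hL.eq, dotProduct_comm]
    have hMsymm : ∀ a b : Fin d → ℝ, a ⬝ᵥ M *ᵥ b = b ⬝ᵥ M *ᵥ a := by
      intro a b
      rw [Matrix.dotProduct_mulVec, ← Matrix.mulVec_transpose, hM.eq, dotProduct_comm]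
    have hvMy : ∀ y : Fin d → ℝ, v ⬝ᵥ M *ᵥ y = -(v ⬝ᵥ L *ᵥ y) := by
      intro y
      have h1 : v ⬝ᵥ M *ᵥ y = y ⬝ᵥ M *ᵥ v := hMsymm v y
      have h2 : y ⬝ᵥ M *ᵥ v = y ⬝ᵥ (-(L *ᵥ v)) := by rw [hMv]
      have h3 : y ⬝ᵥ (-(L *ᵥ v)) = -(y ⬝ᵥ L *ᵥ v) := by simp
      rw [h1, h2, h3, hLsymm y v]
    -- quadratic form of M on π y
    have hπquad : ∀ y : Fin d → ℝ, (π y) ⬝ᵥ M *ᵥ (π y) = y ⬝ᵥ M *ᵥ y + (c⁻¹ * (v ⬝ᵥ L *ᵥ y))^2 * c := by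
      intro y
      rw [hπ_apply y, quad_sub_smul]
      have h1 : v ⬝ᵥ M *ᵥ y = -(v ⬝ᵥ L *ᵥ y) := hvMy y
      have h2 : y ⬝ᵥ M *ᵥ v = -(v ⬝ᵥ L *ᵥ y) := by rw [hMsymm y v]; exact h1
      rw [h1, h2, hvMv]
      field_simp
      ring
    obtain ⟨W, hW, hrankW⟩ := posOnSub_exists hM' (Finset.univ.filter fun i => 0 < hM'.eigenvalues i)
      (fun i hi => (Finset.mem_filter.mp hi).2)
    -- image subspace
    set W' := W.map π with hW'
    have hℓW' : ∀ y ∈ W', v ⬝ᵥ L *ᵥ y = 0 := by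
      rintro y ⟨w, hw, rfl⟩
      rw [hπ_apply w, Matrix.mulVec_sub, dotProduct_sub, Matrix.mulVec_smul, dotProduct_smul]
      simp only [smul_eq_mul]
      field_simp
      rw [← hc]; ring
    have hπinj : ∀ w ∈ W, π w = 0 → w = 0 := by
      intro w hw hw0
      by_contra hne
      have hpos := hW w hw hne
      have : w = (c⁻¹ * (v ⬝ᵥ L *ᵥ w)) • v := by
        have := hπ_apply w
        rw [hw0] at this
        linear_combination (norm := module) -this
      rw [this] at hpos
      rw [Matrix.mulVec_smul, dotProduct_smul, smul_dotProduct] at hpos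
      simp only [smul_eq_mul] at hpos
      rw [hvMv] at hpos
      nlinarith [sq_nonneg (c⁻¹ * (v ⬝ᵥ L *ᵥ w))]
    -- finrank of W'
    have hrankW' : Module.finrank ℝ W' = Module.finrank ℝ W := by
      have hg := LinearMap.finrank_range_add_finrank_ker (π.comp W.subtype)
      have hker : LinearMap.ker (π.comp W.subtype) = ⊥ := by
        rw [Submodule.eq_bot_iff]
        rintro ⟨w, hw⟩ hx
        have : π w = 0 := hx
        have := hπinj w hw this
        exact Subtype.ext this
      have hrange : LinearMap.range (π.comp W.subtype) = W' := by
        rw [LinearMap.range_comp, Submodule.range_subtype]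
      rw [hker, hrange] at hg
      simpa using hg
    -- the big positive subspace for L
    set U := W' ⊔ (Submodule.span ℝ {v}) with hU
    have hdisj : W' ⊓ (Submodule.span ℝ {v}) = ⊥ := by
      rw [Submodule.eq_bot_iff]
      rintro x ⟨hx1, hx2⟩
      obtain ⟨t, rfl⟩ := Submodule.mem_span_singleton.mp hx2
      have := hℓW' _ hx1
      rw [Matrix.mulVec_smul, dotProduct_smul] at this
      simp only [smul_eq_mul] at this
      rcases mul_eq_zero.mp this with h | h
      · rw [h, zero_smul]
      · exact absurd h (ne_of_gt hcpos)
    have hposU : PosOnSub L U := by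
      intro x hx hx0
      rw [hU, Submodule.mem_sup] at hx
      obtain ⟨y, hy, z, hz, rfl⟩ := hx
      obtain ⟨t, rfl⟩ := Submodule.mem_span_singleton.mp hz
      have hyL : v ⬝ᵥ L *ᵥ y = 0 := hℓW' y hy
      have hyLv : y ⬝ᵥ L *ᵥ v = 0 := by rw [hLsymm y v]; exact hyL
      have hexpand : (y + t • v) ⬝ᵥ L *ᵥ (y + t • v) = y ⬝ᵥ L *ᵥ y + t^2 * c := by
        rw [Matrix.mulVec_add, Matrix.mulVec_smul, dotProduct_add, add_dotProduct,
          add_dotProduct, dotProduct_smul, smul_dotProduct, smul_dotProduct, dotProduct_smul]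
        simp only [smul_eq_mul]
        rw [hyL, hyLv]
        ring
      rw [hexpand]
      rcases eq_or_ne y 0 with rfl | hyne
      · have ht : t ≠ 0 := by
          rintro rfl; exact hx0 (by simp)
        have : 0 < t^2 * c := mul_pos (by positivity) hcpos
        simpa using this
      · -- y ≠ 0 : y ⬝ᵥ L y ≥ y ⬝ᵥ M y > 0
        obtain ⟨w, hw, hyw⟩ := hy
        have hwne : w ≠ 0 := by
          rintro rfl
          exact hyne (by rw [← hyw]; simp)
        have hMpos : 0 < w ⬝ᵥ M *ᵥ w := hW w hw hwne
        have hq := hπquad w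
        rw [hyw] at hq
        have hMy : 0 < y ⬝ᵥ M *ᵥ y := by
          rw [hq]
          have : 0 ≤ (c⁻¹ * (v ⬝ᵥ L *ᵥ w))^2 * c := mul_nonneg (sq_nonneg _) hcpos.le
          linarith
        have hN : 0 ≤ y ⬝ᵥ (L - M) *ᵥ y := by simpa [star_trivial] using hLM.dotProduct_mulVec_nonneg y
        rw [Matrix.sub_mulVec, dotProduct_sub] at hN
        have : 0 < y ⬝ᵥ L *ᵥ y := by linarith
        have htc : 0 ≤ t^2 * c := mul_nonneg (sq_nonneg _) hcpos.le
        linarith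
    -- dimension count
    have hrankU : Module.finrank ℝ U = Module.finrank ℝ W + 1 := by
      have hsum := Submodule.finrank_sup_add_finrank_inf_eq W' (Submodule.span ℝ {v})
      rw [hdisj] at hsum
      simp only [finrank_bot, add_zero] at hsum
      rw [← hU] at hsum
      rw [hsum, hrankW', finrank_span_singleton hv0]
    -- cardinalities
    have hcard := cardPos_le_of_congr hM' hL' hT hrel
    have hcard2 : (Finset.univ.filter fun i => 0 < hM'.eigenvalues i).card ≤
        (Finset.univ.filter fun i => 0 < hL'.eigenvalues i).card := by
      have hrel2 : (T⁻¹)ᵀ * L * T⁻¹ = M := by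
        have hdet : IsUnit T.det := (Matrix.isUnit_iff_isUnit_det T).mp hT
        rw [← hrel]
        rw [Matrix.transpose_nonsing_inv]
        calc Tᵀ⁻¹ * (Tᵀ * M * T) * T⁻¹ = (Tᵀ⁻¹ * Tᵀ) * M * (T * T⁻¹) := by
              simp only [Matrix.mul_assoc]
          _ = M := by
              rw [Matrix.nonsing_inv_mul _ (Matrix.isUnit_det_transpose T hdet),
                Matrix.mul_nonsing_inv _ hdet]
              simp
      exact cardPos_le_of_congr hL' hM' (Matrix.isUnit_nonsing_inv_iff.mpr hT) hrel2
    have hub := posOnSub_finrank_le hL' (Finset.univ.filter fun i => 0 < hL'.eigenvalues i)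
      (fun i hi => by
        simp only [Finset.mem_filter, Finset.mem_univ, true_and, not_lt] at hi
        exact hi) U hposU
    rw [hrankU, hrankW] at hub
    omega
end Part1

section Part2Support
variable {A : Matrix (Fin d) (Fin d) ℝ}

lemma dot_symm (S : Matrix (Fin d) (Fin d) ℝ) (hS : Sᵀ = S) (x y : Fin d → ℝ) :
    x ⬝ᵥ S *ᵥ y = (S *ᵥ x) ⬝ᵥ y := by
  rw [Matrix.dotProduct_mulVec, ← Matrix.mulVec_transpose, hS]

lemma Phi_smul (hA : A.IsHermitian) (c : ℝ) (h k : ℝ → ℝ)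
    (hk : ∀ i, c * h (hA.eigenvalues i) = k (hA.eigenvalues i)) :
    c • Phi hA h = Phi hA k := by
  have hd : c • diagonal (h ∘ hA.eigenvalues) = diagonal (k ∘ hA.eigenvalues) := by
    rw [← diagonal_smul]
    exact congrArg diagonal (funext fun i => by simpa using hk i)
  rw [Phi, Phi, ← hd, Matrix.mul_smul, Matrix.smul_mul]

lemma Phi_zero (hA : A.IsHermitian) : Phi hA (fun _ => 0) = 0 := by
  have : diagonal ((fun _ => (0:ℝ)) ∘ hA.eigenvalues) = 0 := by
    rw [show ((fun _ => (0:ℝ)) ∘ hA.eigenvalues) = fun _ => 0 from rfl, diagonal_zero]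
  rw [Phi, this, Matrix.mul_zero, Matrix.zero_mul]

lemma Phi_posDef (hA : A.IsHermitian) (h : ℝ → ℝ)
    (hpos : ∀ i, 0 < h (hA.eigenvalues i)) : (Phi hA h).PosDef := by
  refine Matrix.PosDef.of_dotProduct_mulVec_pos (Phi_isHermitian hA h) (fun x hx => ?_)
  have hq := quadform_Phi hA h x
  simp only [star_trivial]
  rw [hq]
  set y := star (eV hA) *ᵥ x with hy
  have hy0 : y ≠ 0 := by
    intro h0
    apply hx
    have : eV hA *ᵥ y = x := by
      rw [hy, Matrix.mulVec_mulVec, eV_mul_star hA, Matrix.one_mulVec]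
    rw [← this, h0, Matrix.mulVec_zero]
  obtain ⟨j, hj⟩ := Function.ne_iff.1 hy0
  refine Finset.sum_pos' (fun i _ => mul_nonneg (hpos i).le (sq_nonneg _))
    ⟨j, Finset.mem_univ j, mul_pos (hpos j) (by simpa [sq] using sq_pos_of_ne_zero hj)⟩

/-- norm bound through eigenvalues for symmetric matrices -/
lemma sym_mulVec_nrm_le (hA : A.IsHermitian) (r : ℝ) (hr0 : 0 ≤ r)
    (hr : ∀ i, |hA.eigenvalues i| ≤ r) (z : Fin d → ℝ) :
    nrm (A *ᵥ z) ≤ r * nrm z := by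
  have hAt : Aᵀ = A := by
    have := hA
    rwa [Matrix.IsHermitian, conjTranspose_eq_transpose_of_trivial] at this
  have hAA := Phi_mul hA id id (fun t => t^2) (fun i => by simp [sq])
  rw [Phi_id] at hAA
  have hq : (A *ᵥ z) ⬝ᵥ (A *ᵥ z) = z ⬝ᵥ (A * A) *ᵥ z := by
    rw [← Matrix.mulVec_mulVec, dot_symm A hAt z (A *ᵥ z)]
  have hsum : z ⬝ᵥ (A * A) *ᵥ z ≤ r^2 * (z ⬝ᵥ z) := by
    rw [hAA, quadform_Phi]
    have hdot := dot_star_eV hA z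
    calc ∑ i, (hA.eigenvalues i)^2 * ((star (eV hA) *ᵥ z) i)^2
        ≤ ∑ i, r^2 * ((star (eV hA) *ᵥ z) i)^2 := by
          refine Finset.sum_le_sum fun i _ => ?_
          have h1 : (hA.eigenvalues i)^2 ≤ r^2 := by
            rw [← sq_abs]
            exact pow_le_pow_left₀ (abs_nonneg _) (hr i) 2
          exact mul_le_mul_of_nonneg_right h1 (sq_nonneg _)
      _ = r^2 * (z ⬝ᵥ z) := by
          rw [← Finset.mul_sum]
          congr 1
          rw [← hdot]
          simp [dotProduct, sq]
  have : nrm (A *ᵥ z) ^ 2 ≤ (r * nrm z)^2 := by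
    rw [nrm_sq, mul_pow, nrm_sq]
    exact hq ▸ hsum
  have h2 := Real.sqrt_le_sqrt this
  rwa [Real.sqrt_sq (nrm_nonneg _), Real.sqrt_sq (mul_nonneg hr0 (nrm_nonneg _))] at h2

/-- real eigenvector gives complex spectrum membership -/
lemma mem_spectrum_complex (A : Matrix (Fin d) (Fin d) ℝ) (ν : ℝ) (v : Fin d → ℝ)
    (hv : v ≠ 0) (heig : A *ᵥ v = ν • v) :
    (ν : ℂ) ∈ spectrum ℂ (A.map (Complex.ofReal : ℝ → ℂ)) := by
  rw [spectrum.mem_iff]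
  intro hunit
  rw [Matrix.isUnit_iff_isUnit_det, isUnit_iff_ne_zero] at hunit
  apply hunit
  rw [← Matrix.exists_mulVec_eq_zero_iff]
  refine ⟨fun i => (v i : ℂ), ?_, ?_⟩
  · obtain ⟨j, hj⟩ := Function.ne_iff.1 hv
    intro h0
    apply hj
    have := congrFun h0 j
    simpa using this
  · have hmap : (A.map (Complex.ofReal : ℝ → ℂ)) *ᵥ (fun i => (v i : ℂ)) =
        fun i => (((A *ᵥ v) i : ℝ) : ℂ) := by
      funext i
      simp [Matrix.mulVec, dotProduct, Matrix.map_apply]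
    have halg : (algebraMap ℂ (Matrix (Fin d) (Fin d) ℂ)) (ν:ℂ) = (ν:ℂ) • 1 :=
      Algebra.algebraMap_eq_smul_one _
    rw [halg, Matrix.sub_mulVec, Matrix.smul_mulVec, Matrix.one_mulVec, hmap]
    funext i
    rw [heig]
    simp

end Part2Support

section Key
variable {M L : Matrix (Fin d) (Fin d) ℝ}

lemma scalar_key (ρ ρ₀ cB aa bb δ ε : ℝ) (h1 : 0 ≤ ρ₀) (h2 : ρ₀ < ρ) (h3 : 0 ≤ cB)
    (h4 : 0 ≤ aa) (h5 : 0 ≤ bb) (hδ : δ = (ρ^2 - ρ₀^2)/(ρ₀^2 + 1))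
    (hε : ε = (cB^2 * (1 + 1/δ))/ρ^2 + 1) :
    (ρ₀ * aa + cB * bb)^2 ≤ ρ^2 * (aa^2 + ε * bb^2) := by
  have hρpos : 0 < ρ := lt_of_le_of_lt h1 h2
  have hδpos : 0 < δ := by
    rw [hδ]
    apply div_pos
    · nlinarith
    · positivity
  have hkey1 : ρ₀^2 * (1 + δ) ≤ ρ^2 := by
    have h0 : (0:ℝ) < ρ₀^2 + 1 := by positivity
    have hd2 : δ * (ρ₀^2 + 1) = ρ^2 - ρ₀^2 := by
      rw [hδ]; field_simp
    nlinarith [hδpos.le]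
  have hkey2 : cB^2 * (1 + 1/δ) ≤ ρ^2 * ε := by
    have hepd : ρ^2 * ε = cB^2 * (1 + 1/δ) + ρ^2 := by
      rw [hε]
      field_simp
    nlinarith [sq_nonneg ρ]
  have hamgm : 2 * (ρ₀ * aa) * (cB * bb) ≤ δ * (ρ₀ * aa)^2 + (1/δ) * (cB * bb)^2 := by
    have hsq := sq_nonneg (δ * (ρ₀ * aa) - cB * bb)
    have key : δ * (δ * (ρ₀ * aa)^2 + (1/δ) * (cB * bb)^2 - 2 * (ρ₀ * aa) * (cB * bb)) =
        (δ * (ρ₀ * aa) - cB * bb)^2 := by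
      field_simp
      ring
    have hq2 : 0 ≤ δ * (δ * (ρ₀ * aa)^2 + (1/δ) * (cB * bb)^2 - 2 * (ρ₀ * aa) * (cB * bb)) := by
      rw [key]; exact hsq
    have h3' := (mul_nonneg_iff_of_pos_left hδpos).mp hq2
    linarith
  have step1 : (ρ₀ * aa + cB * bb)^2 ≤ ρ₀^2 * (1 + δ) * aa^2 + cB^2 * (1 + 1/δ) * bb^2 := by
    nlinarith [hamgm]
  have step2 : ρ₀^2 * (1 + δ) * aa^2 ≤ ρ^2 * aa^2 :=
    mul_le_mul_of_nonneg_right hkey1 (sq_nonneg aa)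
  have step3 : cB^2 * (1 + 1/δ) * bb^2 ≤ ρ^2 * ε * bb^2 :=
    mul_le_mul_of_nonneg_right hkey2 (sq_nonneg bb)
  calc (ρ₀ * aa + cB * bb)^2 ≤ ρ^2 * aa^2 + ρ^2 * ε * bb^2 := by linarith
    _ = ρ^2 * (aa^2 + ε * bb^2) := by ring

lemma key_contraction (hd : 0 < d) (hM : M.IsSymm) (hL : L.IsSymm)
    (hLM : (L - M).PosSemidef) (hK : IsUnit (M + L)) (ρ : ℝ)
    (hρ : ∀ μ ∈ spectrum ℂ (((M + L)⁻¹ * (L - M)).map (Complex.ofReal : ℝ → ℂ)), ‖μ‖ < ρ) :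
    ∃ P : Matrix (Fin d) (Fin d) ℝ, P.PosDef ∧
      ∀ u vv : Fin d → ℝ,
        (∀ s, 2 * ((vv - M *ᵥ u) ⬝ᵥ s) - s ⬝ᵥ (L - M) *ᵥ s ≤ (vv - M *ᵥ u) ⬝ᵥ u) →
        (u - (2:ℝ) • (M + L)⁻¹ *ᵥ vv) ⬝ᵥ P *ᵥ (u - (2:ℝ) • (M + L)⁻¹ *ᵥ vv) ≤
          ρ^2 * (u ⬝ᵥ P *ᵥ u) := by
  have hN' : (L - M).IsHermitian := hLM.1
  have hμnn : ∀ i, 0 ≤ hN'.eigenvalues i := fun i => hLM.eigenvalues_nonneg i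
  have hKt : (M + L)ᵀ = M + L := by
    rw [Matrix.transpose_add, hM.eq, hL.eq]
  have hNt : (L - M)ᵀ = L - M := by
    rw [Matrix.transpose_sub, hM.eq, hL.eq]
  have hKdet : IsUnit (M + L).det := (Matrix.isUnit_iff_isUnit_det _).mp hK
  have hKK : (M + L)⁻¹ * (M + L) = 1 := Matrix.nonsing_inv_mul _ hKdet
  have hKK' : (M + L) * (M + L)⁻¹ = 1 := Matrix.mul_nonsing_inv _ hKdet
  have hKit : ((M + L)⁻¹)ᵀ = (M + L)⁻¹ := by
    rw [Matrix.transpose_nonsing_inv, hKt]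
  have hKicancel : ∀ x : Fin d → ℝ, (M + L)⁻¹ *ᵥ ((M + L) *ᵥ x) = x := by
    intro x; rw [Matrix.mulVec_mulVec, hKK, Matrix.one_mulVec]
  have hKcancel : ∀ x : Fin d → ℝ, (M + L) *ᵥ ((M + L)⁻¹ *ᵥ x) = x := by
    intro x; rw [Matrix.mulVec_mulVec, hKK', Matrix.one_mulVec]
  -- spectral functions
  set Bf : ℝ → ℝ := fun t => Real.sqrt t with hBf
  set Bpf : ℝ → ℝ := fun t => if t = 0 then 0 else (Real.sqrt t)⁻¹ with hBpf
  set Pif : ℝ → ℝ := fun t => if t = 0 then 1 else 0 with hPif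
  set Qf0 : ℝ → ℝ := fun t => if t = 0 then 0 else t⁻¹ with hQf0
  set Rf : ℝ → ℝ := fun t => if t = 0 then 0 else 1 with hRf0
  set B := Phi hN' Bf with hBdef
  set Bp := Phi hN' Bpf with hBpdef
  set Pim := Phi hN' Pif with hPidef
  set C := B * (M + L)⁻¹ * B with hCdef
  set R := B * (M + L)⁻¹ * Pim with hRdef
  have hBt : Bᵀ = B := Phi_transpose hN' Bf
  have hBpt : Bpᵀ = Bp := Phi_transpose hN' Bpf
  have hPit : Pimᵀ = Pim := Phi_transpose hN' Pif
  have hBB : B * B = L - M := by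
    have h := Phi_mul hN' Bf Bf id (fun i => Real.mul_self_sqrt (hμnn i))
    rw [Phi_id] at h
    exact h
  have hCt : Cᵀ = C := by
    rw [hCdef, Matrix.transpose_mul, Matrix.transpose_mul, hBt, hKit, Matrix.mul_assoc]
  have hC' : C.IsHermitian := by
    rw [Matrix.IsHermitian, conjTranspose_eq_transpose_of_trivial, hCt]
  -- eigenvalue bound
  have hne : Nonempty (Fin d) := ⟨⟨0, hd⟩⟩
  set ν := hC'.eigenvalues with hν
  have hnulemma : ∀ i, |ν i| < ρ := by
    intro i
    rcases eq_or_ne (ν i) 0 with hz | hz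
    · -- show 0 < ρ via 0 in spectrum
      have hdetC : C.det = 0 := by
        rw [hC'.det_eq_prod_eigenvalues]
        refine Finset.prod_eq_zero (Finset.mem_univ i) ?_
        simpa using hz
      have hdetB : B.det = 0 := by
        rw [hCdef, Matrix.det_mul, Matrix.det_mul] at hdetC
        have hKidet : (M + L)⁻¹.det ≠ 0 := by
          have : IsUnit (M + L)⁻¹ := Matrix.isUnit_nonsing_inv_iff.mpr hK
          rw [Matrix.isUnit_iff_isUnit_det, isUnit_iff_ne_zero] at this
          exact this
        rcases mul_eq_zero.mp hdetC with h | h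
        · rcases mul_eq_zero.mp h with h' | h'
          · exact h'
          · exact absurd h' hKidet
        · exact h
      have hdetN : (L - M).det = 0 := by
        rw [← hBB, Matrix.det_mul, hdetB, mul_zero]
      have hdetKN : ((M + L)⁻¹ * (L - M)).det = 0 := by
        rw [Matrix.det_mul, hdetN, mul_zero]
      obtain ⟨v, hv0, hvker⟩ := Matrix.exists_mulVec_eq_zero_iff.mpr hdetKN
      have h0 := mem_spectrum_complex ((M + L)⁻¹ * (L - M)) 0 v hv0
        (by rw [hvker, zero_smul])
      have := hρ _ h0
      rw [hz]
      simpa using this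
    · -- genuine eigenvalue
      set z : Fin d → ℝ := ⇑(hC'.eigenvectorBasis i) with hzdef
      have hz0 : z ≠ 0 := by
        intro h0
        exact hC'.eigenvectorBasis.orthonormal.ne_zero i (by
          apply PiLp.ext
          intro j
          exact congrFun h0 j)
      have heigz : C *ᵥ z = ν i • z := hC'.mulVec_eigenvectorBasis i
      set v := ((M + L)⁻¹ * B) *ᵥ z with hvdef
      have hvz : ((M + L)⁻¹ * (L - M)) *ᵥ v = ν i • v := by
        have hmm : ((M + L)⁻¹ * (L - M)) * ((M + L)⁻¹ * B) = ((M + L)⁻¹ * B) * C := by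
          rw [← hBB, hCdef]
          simp only [Matrix.mul_assoc]
        rw [hvdef, Matrix.mulVec_mulVec, hmm, ← Matrix.mulVec_mulVec, heigz,
          Matrix.mulVec_smul]
      have hv0 : v ≠ 0 := by
        intro h0
        have hBz : B *ᵥ z = 0 := by
          have h2 : (M + L) *ᵥ v = B *ᵥ z := by
            rw [hvdef, Matrix.mulVec_mulVec, ← Matrix.mul_assoc, hKK', Matrix.one_mul]
          rw [← h2, h0, Matrix.mulVec_zero]
        have : C *ᵥ z = 0 := by
          rw [hCdef]
          simp only [← Matrix.mulVec_mulVec]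
          rw [hBz]
          simp
        rw [heigz] at this
        rcases smul_eq_zero.mp this with h | h
        · exact hz h
        · exact hz0 h
      have hspec := mem_spectrum_complex _ (ν i) v hv0 hvz
      have := hρ _ hspec
      simpa using this
  set ρ₀ := Finset.univ.sup' (Finset.univ_nonempty) (fun i => |ν i|) with hρ₀def
  have hρ₀lt : ρ₀ < ρ := by
    rw [hρ₀def, Finset.sup'_lt_iff]
    exact fun i _ => hnulemma i
  have hρ₀nn : 0 ≤ ρ₀ := by
    refine le_trans (abs_nonneg (ν (Classical.arbitrary (Fin d)))) ?_
    exact Finset.le_sup' (fun j => |ν j|) (Finset.mem_univ (Classical.arbitrary (Fin d)))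
  have hρpos : 0 < ρ := lt_of_le_of_lt hρ₀nn hρ₀lt
  set cB := Real.sqrt (∑ i, ∑ j, (R i j)^2) with hcBdef
  have hcB0 : 0 ≤ cB := Real.sqrt_nonneg _
  set δ := (ρ^2 - ρ₀^2)/(ρ₀^2 + 1) with hδdef
  have hδpos : 0 < δ := by
    apply div_pos
    · nlinarith
    · positivity
  set ε := (cB^2 * (1 + 1/δ))/ρ^2 + 1 with hεdef
  have hεpos : 0 < ε := by positivity
  set Qf : ℝ → ℝ := fun t => if t = 0 then ε else t⁻¹ with hQfdef
  set Q := Phi hN' Qf with hQdef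
  have hQt : Qᵀ = Q := Phi_transpose hN' Qf
  -- identities
  have hNQ : (L - M) * Q = Phi hN' Rf := by
    have h := Phi_mul hN' id Qf Rf (fun i => by
      by_cases h : hN'.eigenvalues i = 0 <;> simp [hQfdef, hRf0, h])
    rw [Phi_id] at h
    exact h
  have hQN : Q * (L - M) = Phi hN' Rf := by
    have h := Phi_mul hN' Qf id Rf (fun i => by
      by_cases h : hN'.eigenvalues i = 0 <;> simp [hQfdef, hRf0, h])
    rw [Phi_id] at h
    exact h
  have hNQN : (L - M) * Q * (L - M) = L - M := by
    rw [hNQ]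
    have h := Phi_mul hN' Rf id id (fun i => by
      by_cases h : hN'.eigenvalues i = 0 <;> simp [hRf0, h])
    rw [Phi_id] at h
    exact h
  have hRfPi : Phi hN' Rf = 1 - Pim := by
    have h := Phi_add hN' Rf Pif (fun _ => 1) (fun i => by
      by_cases h : hN'.eigenvalues i = 0 <;> simp [hRf0, hPif, h])
    rw [Phi_one] at h
    rw [hPidef]
    linear_combination (norm := (abel)) h
  have hQdec : Q = Phi hN' Qf0 + ε • Pim := by
    have hs : ε • Pim = Phi hN' (fun t => if t = 0 then ε else 0) :=
      Phi_smul hN' ε Pif _ (fun i => by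
        by_cases h : hN'.eigenvalues i = 0 <;> simp [hPif, h])
    rw [hs]
    have h := Phi_add hN' Qf0 (fun t => if t = 0 then ε else 0) Qf (fun i => by
      by_cases h : hN'.eigenvalues i = 0 <;> simp [hQf0, hQfdef, h])
    rw [h]
  have hQNQ : Q * (L - M) * Q = Phi hN' Qf0 := by
    rw [hQN]
    exact Phi_mul hN' Rf Qf Qf0 (fun i => by
      by_cases h : hN'.eigenvalues i = 0 <;> simp [hRf0, hQfdef, hQf0, h])
  have hBpBp : Bp * Bp = Phi hN' Qf0 := by
    refine Phi_mul hN' Bpf Bpf Qf0 (fun i => ?_)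
    by_cases h : hN'.eigenvalues i = 0
    · simp [hBpf, hQf0, h]
    · simp only [hBpf, hQf0, if_neg h]
      rw [← mul_inv]
      rw [Real.mul_self_sqrt (hμnn i)]
  have hBBp : B * Bp = 1 - Pim := by
    rw [← hRfPi]
    refine Phi_mul hN' Bf Bpf Rf (fun i => ?_)
    by_cases h : hN'.eigenvalues i = 0
    · simp [hBf, hBpf, hRf0, h]
    · have hsq : Real.sqrt (hN'.eigenvalues i) ≠ 0 := by
        refine ne_of_gt (Real.sqrt_pos.mpr ?_)
        exact lt_of_le_of_ne (hμnn i) (Ne.symm h)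
      simp only [hBf, hBpf, hRf0, if_neg h]
      exact mul_inv_cancel₀ hsq
  have hPiPi : Pim * Pim = Pim := by
    refine Phi_mul hN' Pif Pif Pif (fun i => ?_)
    by_cases h : hN'.eigenvalues i = 0 <;> simp [hPif, h]
  have hNPi : (L - M) * Pim = 0 := by
    have h := Phi_mul hN' id Pif (fun _ => 0) (fun i => by
      by_cases h : hN'.eigenvalues i = 0 <;> simp [hPif, h])
    rw [Phi_id, Phi_zero] at h
    exact h
  -- the matrix P
  refine ⟨(M + L) * Q * (M + L), ?_, ?_⟩
  · -- positive definite
    have hQpd : Q.PosDef := by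
      refine Phi_posDef hN' Qf (fun i => ?_)
      by_cases h : hN'.eigenvalues i = 0
      · simp [hQfdef, h, hεpos]
      · simp only [hQfdef, if_neg h]
        exact inv_pos.mpr (lt_of_le_of_ne (hμnn i) (Ne.symm h))
    refine Matrix.PosDef.of_dotProduct_mulVec_pos ?_ ?_
    · rw [Matrix.IsHermitian, conjTranspose_eq_transpose_of_trivial,
        Matrix.transpose_mul, Matrix.transpose_mul, hQt, hKt, Matrix.mul_assoc]
    · intro x hx
      have h1 : x ⬝ᵥ ((M + L) * Q * (M + L)) *ᵥ x =
          ((M + L) *ᵥ x) ⬝ᵥ Q *ᵥ ((M + L) *ᵥ x) := by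
        conv_lhs => rw [show (M + L) * Q * (M + L) = (M + L)ᵀ * Q * (M + L) by rw [hKt]]
        exact quad_congr_eq x
      have hKx : (M + L) *ᵥ x ≠ 0 := by
        intro h0
        apply hx
        have := hKicancel x
        rw [h0, Matrix.mulVec_zero] at this
        exact this.symm
      have := hQpd.dotProduct_mulVec_pos hKx
      simp only [star_trivial] at this ⊢
      rw [h1]
      exact this
  · -- contraction
    intro u vv hcon
    set w := vv - M *ᵥ u with hwdef
    have h1 : ∀ z : Fin d → ℝ, w ⬝ᵥ (Pim *ᵥ z) = 0 := by
      intro z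
      by_contra hne2
      set a := w ⬝ᵥ (Pim *ᵥ z) with hadef
      have hNs : (L - M) *ᵥ (((w ⬝ᵥ u + 1)/(2*a)) • (Pim *ᵥ z)) = 0 := by
        rw [Matrix.mulVec_smul, Matrix.mulVec_mulVec, hNPi, Matrix.zero_mulVec, smul_zero]
      have hc := hcon (((w ⬝ᵥ u + 1)/(2*a)) • (Pim *ᵥ z))
      rw [hNs] at hc
      rw [dotProduct_smul, dotProduct_zero] at hc
      simp only [smul_eq_mul] at hc
      rw [← hadef] at hc
      have : 2 * ((w ⬝ᵥ u + 1)/(2*a) * a) = w ⬝ᵥ u + 1 := by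
        field_simp
      rw [this] at hc
      linarith
    have h2 : w ⬝ᵥ Q *ᵥ w ≤ w ⬝ᵥ u := by
      have hs := hcon (Q *ᵥ w)
      have hq1 : (Q *ᵥ w) ⬝ᵥ (L - M) *ᵥ (Q *ᵥ w) = w ⬝ᵥ (Phi hN' Qf0) *ᵥ w := by
        have := quad_congr_eq (M := L - M) (T := Q) w
        rw [hQt, hQNQ] at this
        exact this.symm
      have hq2 : w ⬝ᵥ Q *ᵥ w = w ⬝ᵥ (Phi hN' Qf0) *ᵥ w := by
        rw [hQdec, Matrix.add_mulVec, dotProduct_add, Matrix.smul_mulVec,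
          dotProduct_smul]
        have := h1 w
        rw [this]
        simp
      rw [hq2]
      rw [hq1] at hs
      rw [hq2] at hs
      linarith
    -- rewrite the difference vector
    have hediff : u - (2:ℝ) • (M + L)⁻¹ *ᵥ vv =
        (M + L)⁻¹ *ᵥ ((M + L) *ᵥ u - (2:ℝ) • vv) := by
      rw [Matrix.mulVec_sub, hKicancel, Matrix.mulVec_smul]
    set r := (M + L) *ᵥ u - (2:ℝ) • vv with hrdef
    have hr : r = (L - M) *ᵥ u - (2:ℝ) • w := by
      rw [hrdef, hwdef]
      simp only [Matrix.sub_mulVec, Matrix.add_mulVec, smul_sub]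
      module
    have hLHS : (u - (2:ℝ) • (M + L)⁻¹ *ᵥ vv) ⬝ᵥ ((M + L) * Q * (M + L)) *ᵥ
        (u - (2:ℝ) • (M + L)⁻¹ *ᵥ vv) = r ⬝ᵥ Q *ᵥ r := by
      rw [hediff]
      have hq := quad_congr_eq (M := Q) (T := M + L) ((M + L)⁻¹ *ᵥ r)
      rw [hKcancel] at hq
      rw [show (M + L) * Q * (M + L) = (M + L)ᵀ * Q * (M + L) by rw [hKt]]
      exact hq
    rw [hLHS]
    -- expand r ⬝ᵥ Q r
    have hXQX : ((L - M) *ᵥ u) ⬝ᵥ Q *ᵥ ((L - M) *ᵥ u) = u ⬝ᵥ (L - M) *ᵥ u := by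
      have := quad_congr_eq (M := Q) (T := L - M) u
      rw [hNt, hNQN] at this
      exact this.symm
    have hXQw : ((L - M) *ᵥ u) ⬝ᵥ Q *ᵥ w = u ⬝ᵥ w := by
      rw [← dot_symm (L - M) hNt u (Q *ᵥ w), Matrix.mulVec_mulVec, hNQ, hRfPi,
        Matrix.sub_mulVec, dotProduct_sub, Matrix.one_mulVec]
      have : u ⬝ᵥ Pim *ᵥ w = 0 := by
        rw [dot_symm Pim hPit u w, dotProduct_comm]
        exact h1 u
      rw [this, sub_zero]
    have hwQX : w ⬝ᵥ Q *ᵥ ((L - M) *ᵥ u) = w ⬝ᵥ u := by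
      rw [Matrix.mulVec_mulVec, hQN, hRfPi, Matrix.sub_mulVec, dotProduct_sub,
        Matrix.one_mulVec]
      have := h1 u
      rw [show Pim *ᵥ u = Pim *ᵥ u from rfl] at this
      rw [this, sub_zero]
    have hexp : r ⬝ᵥ Q *ᵥ r = u ⬝ᵥ (L - M) *ᵥ u - 4 * (w ⬝ᵥ u) + 4 * (w ⬝ᵥ Q *ᵥ w) := by
      rw [hr]
      rw [quad_sub_smul Q ((L - M) *ᵥ u) w 2]
      rw [hXQX, hXQw, hwQX, dotProduct_comm u w]
      ring
    -- key matrix inequality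
    set y := (M + L) *ᵥ u with hydef
    have huy : u = (M + L)⁻¹ *ᵥ y := (hKicancel u).symm
    have hmatid : B * (M + L)⁻¹ = C * Bp + R * Pim := by
      have e1 : C * Bp = B * (M + L)⁻¹ * (B * Bp) := by
        rw [hCdef]; simp only [Matrix.mul_assoc]
      have e2 : R * Pim = B * (M + L)⁻¹ * (Pim * Pim) := by
        rw [hRdef]; simp only [Matrix.mul_assoc]
      rw [e1, e2, hBBp, hPiPi, Matrix.mul_sub, Matrix.mul_one]
      abel
    have hu_decomp : B *ᵥ u = C *ᵥ (Bp *ᵥ y) + R *ᵥ (Pim *ᵥ y) := by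
      rw [huy, Matrix.mulVec_mulVec, hmatid, Matrix.add_mulVec]
      simp only [Matrix.mulVec_mulVec, Matrix.mul_assoc]
    set aa := nrm (Bp *ᵥ y) with haadef
    set bb := nrm (Pim *ᵥ y) with hbbdef
    have hBu : nrm (B *ᵥ u) ≤ ρ₀ * aa + cB * bb := by
      calc nrm (B *ᵥ u) = nrm (C *ᵥ (Bp *ᵥ y) + R *ᵥ (Pim *ᵥ y)) := by rw [hu_decomp]
        _ ≤ nrm (C *ᵥ (Bp *ᵥ y)) + nrm (R *ᵥ (Pim *ᵥ y)) := nrm_add_le _ _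
        _ ≤ ρ₀ * aa + cB * bb := by
            refine add_le_add ?_ ?_
            · exact sym_mulVec_nrm_le hC' ρ₀ hρ₀nn
                (fun i => Finset.le_sup' (fun j => |ν j|) (Finset.mem_univ i)) _
            · exact nrm_mulVec_le R _
    have huNu : u ⬝ᵥ (L - M) *ᵥ u = nrm (B *ᵥ u)^2 := by
      rw [nrm_sq, ← hBB, ← Matrix.mulVec_mulVec, dot_symm B hBt u (B *ᵥ u)]
    have hquadP : u ⬝ᵥ ((M + L) * Q * (M + L)) *ᵥ u = aa^2 + ε * bb^2 := by
      have hq := quad_congr_eq (M := Q) (T := M + L) u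
      rw [show (M + L) * Q * (M + L) = (M + L)ᵀ * Q * (M + L) by rw [hKt]]
      rw [hq, ← hydef]
      rw [hQdec, Matrix.add_mulVec, dotProduct_add, Matrix.smul_mulVec,
        dotProduct_smul]
      have e1 : y ⬝ᵥ (Phi hN' Qf0) *ᵥ y = aa^2 := by
        rw [haadef, nrm_sq, ← hBpBp, ← Matrix.mulVec_mulVec, dot_symm Bp hBpt y (Bp *ᵥ y)]
      have e2 : y ⬝ᵥ Pim *ᵥ y = bb^2 := by
        rw [hbbdef, nrm_sq]
        conv_lhs => rw [← hPiPi]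
        rw [← Matrix.mulVec_mulVec, dot_symm Pim hPit y (Pim *ᵥ y)]
      rw [e1, e2]
      simp
    have haann : 0 ≤ aa := nrm_nonneg _
    have hbbnn : 0 ≤ bb := nrm_nonneg _
    have hscalar : (ρ₀ * aa + cB * bb)^2 ≤ ρ^2 * (aa^2 + ε * bb^2) :=
      scalar_key ρ ρ₀ cB aa bb δ ε hρ₀nn hρ₀lt hcB0 haann hbbnn hδdef hεdef
    have hfinal : u ⬝ᵥ (L - M) *ᵥ u ≤ ρ^2 * (u ⬝ᵥ ((M + L) * Q * (M + L)) *ᵥ u) := by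
      rw [huNu, hquadP]
      calc nrm (B *ᵥ u)^2 ≤ (ρ₀ * aa + cB * bb)^2 :=
            pow_le_pow_left₀ (nrm_nonneg _) hBu 2
        _ ≤ ρ^2 * (aa^2 + ε * bb^2) := hscalar
    rw [hexp]
    have h4 : 4 * (w ⬝ᵥ Q *ᵥ w) ≤ 4 * (w ⬝ᵥ u) := by linarith
    linarith

end Key
end Stmt10Aux


/-- Two real symmetric matrices are congruent if `Tᵀ M T = L` for some invertible `T`. -/
def CongruentMat {d : ℕ} (M L : Matrix (Fin d) (Fin d) ℝ) : Prop :=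
  ∃ T : Matrix (Fin d) (Fin d) ℝ, IsUnit T ∧ Tᵀ * M * T = L


namespace Stmt10Aux

lemma sclass_constraint {d : ℕ} {M L : Matrix (Fin d) (Fin d) ℝ} (hM : M.IsSymm) (hL : L.IsSymm)
    {f : (Fin d → ℝ) → ℝ} (hf : SClass M L f) (z₁ z₂ s : Fin d → ℝ) :
    2 * (((grad f z₁ - grad f z₂) - M *ᵥ (z₁ - z₂)) ⬝ᵥ s) - s ⬝ᵥ (L - M) *ᵥ s ≤
      ((grad f z₁ - grad f z₂) - M *ᵥ (z₁ - z₂)) ⬝ᵥ (z₁ - z₂) := by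
  have h1 := (hf.2 z₁ (z₁ - s)).2
  have h2 := (hf.2 z₂ (z₁ - s)).1
  have h3 := (hf.2 z₂ (z₂ + s)).2
  have h4 := (hf.2 z₁ (z₂ + s)).1
  have e1 : z₁ - s - z₁ = -s := by abel
  have e2 : z₁ - s - z₂ = (z₁ - z₂) - s := by abel
  have e3 : z₂ + s - z₂ = s := by abel
  have e4 : z₂ + s - z₁ = s - (z₁ - z₂) := by abel
  rw [e1] at h1
  rw [e2] at h2
  rw [e3] at h3
  rw [e4] at h4
  have hMsym : ∀ a b : Fin d → ℝ, a ⬝ᵥ M *ᵥ b = b ⬝ᵥ M *ᵥ a := by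
    intro a b
    rw [dot_symm M hM.eq a b, dotProduct_comm]
  have hLsym : ∀ a b : Fin d → ℝ, a ⬝ᵥ L *ᵥ b = b ⬝ᵥ L *ᵥ a := by
    intro a b
    rw [dot_symm L hL.eq a b, dotProduct_comm]
  simp only [Matrix.mulVec_sub, Matrix.mulVec_neg, Matrix.sub_mulVec, dotProduct_sub,
    sub_dotProduct, dotProduct_neg, neg_dotProduct, neg_neg, neg_sub] at h1 h2 h3 h4 ⊢
  linarith [h1, h2, h3, h4,
    dotProduct_comm (M *ᵥ z₁) s, dotProduct_comm (M *ᵥ z₂) s,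
    dotProduct_comm (M *ᵥ z₁) z₁, dotProduct_comm (M *ᵥ z₂) z₁,
    dotProduct_comm (M *ᵥ z₁) z₂, dotProduct_comm (M *ᵥ z₂) z₂,
    hMsym z₁ z₂, hMsym z₁ s, hMsym z₂ s]

end Stmt10Aux

open Stmt10Aux in
theorem stmt_10 {d : ℕ} (M L : Matrix (Fin d) (Fin d) ℝ)
    (hM : M.IsSymm) (hL : L.IsSymm) (hMinv : IsUnit M) (hLinv : IsUnit L)
    (hLM : (L - M).PosSemidef) (hcong : CongruentMat M L) :
    IsUnit (M + L) ∧
      ∀ ρ : ℝ,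
        (∀ μ ∈ spectrum ℂ (((M + L)⁻¹ * (L - M)).map (Complex.ofReal : ℝ → ℂ)), ‖μ‖ < ρ) →
        ∃ P : Matrix (Fin d) (Fin d) ℝ, P.PosDef ∧
          ∀ f : (Fin d → ℝ) → ℝ, SClass M L f →
            ∀ z₁ z₂ : Fin d → ℝ,
              ((z₁ - (2 : ℝ) • (M + L)⁻¹.mulVec (grad f z₁)) -
               (z₂ - (2 : ℝ) • (M + L)⁻¹.mulVec (grad f z₂))) ⬝ᵥ
                P.mulVec ((z₁ - (2 : ℝ) • (M + L)⁻¹.mulVec (grad f z₁)) -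
                  (z₂ - (2 : ℝ) • (M + L)⁻¹.mulVec (grad f z₂)))
                ≤ ρ ^ 2 * ((z₁ - z₂) ⬝ᵥ P.mulVec (z₁ - z₂)) := by
  obtain ⟨T, hT, hrel⟩ := hcong
  have hunit : IsUnit (M + L) := isUnit_add_of_congr hM hL hLinv hLM hT hrel
  refine ⟨hunit, ?_⟩
  intro ρ hρ
  rcases Nat.eq_zero_or_pos d with hd0 | hd
  · subst hd0
    refine ⟨1, Matrix.PosDef.of_dotProduct_mulVec_pos Matrix.isHermitian_one (fun x hx => ?_), fun f _ z₁ z₂ => ?_⟩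
    · exact absurd (funext fun i => i.elim0) hx
    · simp [dotProduct]
  · obtain ⟨P, hP, hkey⟩ := key_contraction hd hM hL hLM hunit ρ hρ
    refine ⟨P, hP, ?_⟩
    intro f hf z₁ z₂
    have hdiff : (z₁ - (2:ℝ) • (M + L)⁻¹ *ᵥ (grad f z₁)) - (z₂ - (2:ℝ) • (M + L)⁻¹ *ᵥ (grad f z₂))
        = (z₁ - z₂) - (2:ℝ) • (M + L)⁻¹ *ᵥ (grad f z₁ - grad f z₂) := by
      rw [Matrix.mulVec_sub, smul_sub]
      abel
    rw [hdiff]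
    exact hkey (z₁ - z₂) (grad f z₁ - grad f z₂)
      (fun s => sclass_constraint hM hL hf z₁ z₂ s)
end
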